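/- arXiv:1906.08552 — 6 statements merged into one kernel-verified Lean document; each statement's English description precedes it below -/
import Mathlib

section
/- Let T > 0, a, σ ∈ ℝ, H₁, H₂ ∈ (0,1), and ε ≥ 0. Let B¹ and B² be stochastic processes on [0,T] defined on a common probability space, each with continuous sample paths, such that every finite real linear combination of values of B¹ and B² is a centered Gaussian random variable, E[(Bⁱ_s)²] = s^{2H_i} for i = 1,2 and all s ∈ [0,T], and sup_{s∈[0,T]} E[|B¹_s − B²_s|²] ≤ ε². Then E[|∫₀ᵀ e^{a s + σ B¹_s} ds − ∫₀ᵀ e^{a s + σ B²_s} ds|²] ≤ ε² · (√3 T σ²/4) · ∫₀ᵀ (8 e^{4 a s + 8 σ² s^{2H₁}} + 8 e^{4 a s + 8 σ² s^{2H₂}})^{1/2} ds. -/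
open MeasureTheory ProbabilityTheory Set

open Real
open scoped NNReal ENNReal

namespace ExpFunctionalAux
lemma integral_gaussianReal_eq {v : ℝ≥0} (hv : v ≠ 0) (g : ℝ → ℝ) :
    ∫ x, g x ∂(gaussianReal 0 v) = ∫ x, gaussianPDFReal 0 v x * g x := by
  rw [gaussianReal_of_var_ne_zero _ hv, gaussianPDF_def]
  have h : ∀ x : ℝ, ENNReal.ofReal (gaussianPDFReal 0 v x)
      = ((Real.toNNReal (gaussianPDFReal 0 v x) : ℝ≥0) : ℝ≥0∞) := fun _ => rfl
  simp_rw [h]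
  rw [integral_withDensity_eq_integral_smul ((measurable_gaussianPDFReal 0 v).real_toNNReal) g]
  congr 1 with x
  simp [NNReal.smul_def, Real.coe_toNNReal _ (gaussianPDFReal_nonneg 0 v x)]

lemma integrable_gaussianReal_iff {v : ℝ≥0} (hv : v ≠ 0) (g : ℝ → ℝ) :
    Integrable g (gaussianReal 0 v) ↔ Integrable (fun x => gaussianPDFReal 0 v x * g x) := by
  rw [gaussianReal_of_var_ne_zero _ hv,
    integrable_withDensity_iff (measurable_gaussianPDF 0 v)
      (Filter.Eventually.of_forall fun x => ENNReal.ofReal_lt_top)]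
  constructor <;> intro hI <;> [skip; skip] <;>
  · refine hI.congr (Filter.Eventually.of_forall fun x => ?_)
    simp [gaussianPDF, ENNReal.toReal_ofReal (gaussianPDFReal_nonneg 0 v x), mul_comm]

lemma integral_even_eq {f : ℝ → ℝ} (hf : Integrable f) (he : ∀ x, f (-x) = f x) :
    ∫ x, f x = 2 * ∫ x in Ioi (0:ℝ), f x := by
  have hsplit := intervalIntegral.integral_Iic_add_Ioi (b := (0:ℝ)) (μ := volume)
    hf.integrableOn hf.integrableOn
  rw [← hsplit, two_mul]
  congr 1
  have h2 : ∫ x in Ioi (0:ℝ), f (-x) = ∫ x in Iic (-(0:ℝ)), f x := integral_comp_neg_Ioi 0 f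
  simp_rw [he, neg_zero] at h2
  rw [← h2]

lemma integrable_pow_mul_exp_neg_mul_sq {b : ℝ} (hb : 0 < b) (n : ℕ) :
    Integrable (fun x : ℝ => x ^ n * exp (-b * x ^ 2)) := by
  have h := integrable_rpow_mul_exp_neg_mul_sq hb (s := (n:ℝ)) ((by norm_num : (-1:ℝ) < 0).trans_le (Nat.cast_nonneg n))
  simpa [Real.rpow_natCast] using h

lemma integral_Ioi_pow_mul_exp_neg_mul_sq {b : ℝ} (hb : 0 < b) (n : ℕ) :
    ∫ x in Ioi (0:ℝ), x ^ n * exp (-b * x ^ 2)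
      = b ^ (-((n:ℝ) + 1) / 2) * (1 / 2) * Gamma (((n:ℝ) + 1) / 2) := by
  have h := integral_rpow_mul_exp_neg_mul_rpow (p := 2) (q := (n:ℝ)) (b := b)
    (by norm_num) ((by norm_num : (-1:ℝ) < 0).trans_le (Nat.cast_nonneg n)) hb
  have h2 : ∀ x : ℝ, x ^ ((n:ℝ)) = x ^ n := fun x => Real.rpow_natCast x n
  have h3 : ∀ x : ℝ, x ^ ((2:ℝ)) = x ^ (2:ℕ) := fun x => by
    rw [show ((2:ℝ)) = ((2:ℕ):ℝ) by norm_num, Real.rpow_natCast]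
  simp_rw [h2, h3] at h
  rw [h]

lemma Gamma_three_halves : Gamma ((3:ℝ)/2) = Real.sqrt π / 2 := by
  have h : ((3:ℝ)/2) = 1/2 + 1 := by norm_num
  rw [h, Real.Gamma_add_one (by norm_num), Real.Gamma_one_half_eq]
  ring

lemma Gamma_five_halves : Gamma ((5:ℝ)/2) = 3 * Real.sqrt π / 4 := by
  have h : ((5:ℝ)/2) = 3/2 + 1 := by norm_num
  rw [h, Real.Gamma_add_one (by norm_num), Gamma_three_halves]
  ring

lemma rpow_threehalves {b : ℝ} (hb : 0 < b) : b ^ (-((2:ℝ) + 1) / 2) = (b * Real.sqrt b)⁻¹ := by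
  have h1 : (-((2:ℝ) + 1) / 2) = -(1 + 1/2) := by norm_num
  rw [h1, Real.rpow_neg hb.le, Real.rpow_add hb, Real.rpow_one, ← Real.sqrt_eq_rpow]

lemma rpow_fivehalves {b : ℝ} (hb : 0 < b) :
    b ^ (-((4:ℝ) + 1) / 2) = (b * b * Real.sqrt b)⁻¹ := by
  have h1 : (-((4:ℝ) + 1) / 2) = -(1 + 1 + 1/2) := by norm_num
  rw [h1, Real.rpow_neg hb.le, Real.rpow_add hb, Real.rpow_add hb, Real.rpow_one,
    ← Real.sqrt_eq_rpow]

lemma integral_sq_mul_exp_neg_mul_sq {b : ℝ} (hb : 0 < b) :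
    ∫ x : ℝ, x ^ 2 * exp (-b * x ^ 2) = Real.sqrt π / (2 * b * Real.sqrt b) := by
  rw [integral_even_eq (integrable_pow_mul_exp_neg_mul_sq hb 2) (fun x => by rw [neg_sq]),
    integral_Ioi_pow_mul_exp_neg_mul_sq hb 2]
  have : (((2:ℕ):ℝ) + 1) / 2 = (3:ℝ)/2 := by norm_num
  rw [show (((2:ℕ):ℝ)) = (2:ℝ) by norm_num] at *
  rw [this, Gamma_three_halves, rpow_threehalves hb]
  have hsb : Real.sqrt b ≠ 0 := by positivity
  field_simp

lemma integral_fourth_mul_exp_neg_mul_sq {b : ℝ} (hb : 0 < b) :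
    ∫ x : ℝ, x ^ 4 * exp (-b * x ^ 2) = 3 * Real.sqrt π / (4 * b * b * Real.sqrt b) := by
  rw [integral_even_eq (integrable_pow_mul_exp_neg_mul_sq hb 4) (fun x => by rw [neg_sq, Even.neg_pow (⟨2, rfl⟩ : Even 4)]),
    integral_Ioi_pow_mul_exp_neg_mul_sq hb 4]
  have : (((4:ℕ):ℝ) + 1) / 2 = (5:ℝ)/2 := by norm_num
  rw [show (((4:ℕ):ℝ)) = (4:ℝ) by norm_num] at *
  rw [this, Gamma_five_halves, rpow_fivehalves hb]
  have hsb : Real.sqrt b ≠ 0 := by positivity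
  field_simp


lemma integrable_dirac' {f : ℝ → ℝ} (a : ℝ) : Integrable f (Measure.dirac a) := by
  have h : f =ᵐ[Measure.dirac a] fun _ => f a := by
    rw [Filter.EventuallyEq, ae_dirac_eq]
    exact Filter.eventually_pure.2 rfl
  exact (integrable_const (f a)).congr h.symm

section moments

variable {v : ℝ≥0}

lemma coe_pos_of_ne (hv : v ≠ 0) : 0 < (v:ℝ) := NNReal.coe_pos.mpr (pos_iff_ne_zero.mpr hv)

lemma b_pos (hv : v ≠ 0) : 0 < (2 * (v:ℝ))⁻¹ := by
  have := coe_pos_of_ne hv; positivity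

lemma pdf_mul_pow (n : ℕ) (x : ℝ) :
    gaussianPDFReal 0 v x * x ^ n
      = (Real.sqrt (2 * π * v))⁻¹ * (x ^ n * exp (-(2 * (v:ℝ))⁻¹ * x ^ 2)) := by
  rw [gaussianPDFReal]
  have h : -(x - 0) ^ 2 / (2 * (v:ℝ)) = -(2 * (v:ℝ))⁻¹ * x ^ 2 := by
    rw [sub_zero]; field_simp
  rw [h]; ring

lemma pdf_mul_exp (hv : v ≠ 0) (x : ℝ) :
    gaussianPDFReal 0 v x * exp x
      = (Real.sqrt (2 * π * v))⁻¹ * exp ((v:ℝ)/2)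
          * exp (-(2 * (v:ℝ))⁻¹ * (x - (v:ℝ)) ^ 2) := by
  have hw : 0 < (v:ℝ) := coe_pos_of_ne hv
  have key : rexp (-(x - 0) ^ 2 / (2 * (v:ℝ)) + x)
      = rexp ((v:ℝ)/2) * rexp (-(2 * (v:ℝ))⁻¹ * (x - (v:ℝ)) ^ 2) := by
    rw [← Real.exp_add]
    congr 1
    field_simp
    ring
  rw [gaussianPDFReal, mul_assoc, ← Real.exp_add, key]
  ring

lemma sqrt_cancel (hv : v ≠ 0) :
    Real.sqrt (2 * π * v) = Real.sqrt π * Real.sqrt (2 * (v:ℝ)) := by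
  rw [show (2 * π * (v:ℝ)) = π * (2 * v) by ring, Real.sqrt_mul pi_pos.le]

lemma integrable_pow_gaussianReal (v : ℝ≥0) (n : ℕ) :
    Integrable (fun x => x ^ n) (gaussianReal 0 v) := by
  by_cases hv : v = 0
  · rw [hv, gaussianReal_zero_var]; exact integrable_dirac' 0
  · rw [integrable_gaussianReal_iff hv]
    refine ((integrable_pow_mul_exp_neg_mul_sq (b_pos hv) n).const_mul
      (Real.sqrt (2 * π * v))⁻¹).congr (Filter.Eventually.of_forall fun x => ?_)
    exact (pdf_mul_pow n x).symm

lemma integral_sq_gaussianReal (v : ℝ≥0) :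
    ∫ x, x ^ 2 ∂(gaussianReal 0 v) = (v:ℝ) := by
  by_cases hv : v = 0
  · rw [hv, gaussianReal_zero_var, integral_dirac]; simp
  · have hw : 0 < (v:ℝ) := coe_pos_of_ne hv
    have hb : 0 < (2 * (v:ℝ))⁻¹ := b_pos hv
    rw [integral_gaussianReal_eq hv]
    simp_rw [pdf_mul_pow 2]
    rw [integral_const_mul, integral_sq_mul_exp_neg_mul_sq hb, sqrt_cancel hv, Real.sqrt_inv]
    have h1 : Real.sqrt π ≠ 0 := by positivity
    have h2 : Real.sqrt (2 * (v:ℝ)) ≠ 0 := by positivity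
    have h3 : Real.sqrt (2 * (v:ℝ)) * Real.sqrt (2 * (v:ℝ)) = 2 * (v:ℝ) :=
      Real.mul_self_sqrt (by positivity)
    field_simp

lemma integral_fourth_gaussianReal (v : ℝ≥0) :
    ∫ x, x ^ 4 ∂(gaussianReal 0 v) = 3 * (v:ℝ) ^ 2 := by
  by_cases hv : v = 0
  · rw [hv, gaussianReal_zero_var, integral_dirac]; simp
  · have hw : 0 < (v:ℝ) := coe_pos_of_ne hv
    have hb : 0 < (2 * (v:ℝ))⁻¹ := b_pos hv
    rw [integral_gaussianReal_eq hv]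
    simp_rw [pdf_mul_pow 4]
    rw [integral_const_mul, integral_fourth_mul_exp_neg_mul_sq hb, sqrt_cancel hv, Real.sqrt_inv]
    have h1 : Real.sqrt π ≠ 0 := by positivity
    have h2 : Real.sqrt (2 * (v:ℝ)) ≠ 0 := by positivity
    have h3 : Real.sqrt (2 * (v:ℝ)) * Real.sqrt (2 * (v:ℝ)) = 2 * (v:ℝ) :=
      Real.mul_self_sqrt (by positivity)
    field_simp
    nlinarith [h3, Real.sq_sqrt (le_of_lt pi_pos)]

lemma integrable_exp_gaussianReal (v : ℝ≥0) :
    Integrable (fun x => exp x) (gaussianReal 0 v) := by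
  by_cases hv : v = 0
  · rw [hv, gaussianReal_zero_var]; exact integrable_dirac' 0
  · rw [integrable_gaussianReal_iff hv]
    have hb : 0 < (2 * (v:ℝ))⁻¹ := b_pos hv
    have : Integrable (fun x : ℝ =>
        (Real.sqrt (2 * π * v))⁻¹ * exp ((v:ℝ)/2) * exp (-(2 * (v:ℝ))⁻¹ * (x - (v:ℝ)) ^ 2)) :=
      (((integrable_exp_neg_mul_sq hb).comp_sub_right ((v:ℝ))).const_mul _)
    exact this.congr (Filter.Eventually.of_forall fun x => (pdf_mul_exp hv x).symm)

lemma integral_exp_gaussianReal (v : ℝ≥0) :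
    ∫ x, exp x ∂(gaussianReal 0 v) = exp ((v:ℝ)/2) := by
  by_cases hv : v = 0
  · rw [hv, gaussianReal_zero_var, integral_dirac]; simp
  · have hw : 0 < (v:ℝ) := coe_pos_of_ne hv
    have hb : 0 < (2 * (v:ℝ))⁻¹ := b_pos hv
    rw [integral_gaussianReal_eq hv]
    simp_rw [pdf_mul_exp hv]
    rw [integral_const_mul,
      integral_sub_right_eq_self (fun x => exp (-(2 * (v:ℝ))⁻¹ * x ^ 2)) ((v:ℝ)),
      integral_gaussian]
    have h : π / (2 * (v:ℝ))⁻¹ = 2 * π * (v:ℝ) := by field_simp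
    rw [h]
    have h2 : Real.sqrt (2 * π * (v:ℝ)) ≠ 0 := by positivity
    field_simp

end moments

section ineq

lemma sinh_le_mul_cosh {u : ℝ} (hu : 0 ≤ u) : Real.sinh u ≤ u * Real.cosh u := by
  have hd : ∀ t : ℝ, HasDerivAt (fun t => t * Real.cosh t - Real.sinh t) (t * Real.sinh t) t := by
    intro t
    have h1 : HasDerivAt (fun t : ℝ => t * Real.cosh t) (1 * Real.cosh t + t * Real.sinh t) t :=
      (hasDerivAt_id t).mul (Real.hasDerivAt_cosh t)
    have h2 := h1.sub (Real.hasDerivAt_sinh t)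
    have h3 : t * Real.sinh t = 1 * Real.cosh t + t * Real.sinh t - Real.cosh t := by ring
    rw [h3]; exact h2
  have hmono : MonotoneOn (fun t => t * Real.cosh t - Real.sinh t) (Ici 0) := by
    refine monotoneOn_of_deriv_nonneg (convex_Ici 0) (Continuous.continuousOn (by continuity))
      (fun t ht => (hd t).differentiableAt.differentiableWithinAt) (fun t ht => ?_)
    rw [(hd t).deriv]
    rw [interior_Ici] at ht
    exact mul_nonneg (le_of_lt ht) (Real.sinh_nonneg_iff.mpr (le_of_lt ht))
  have h0 := hmono (self_mem_Ici (a := (0:ℝ))) (mem_Ici.2 hu) hu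
  simpa using h0

lemma abs_exp_sub_exp_le (x y : ℝ) :
    |Real.exp x - Real.exp y| ≤ |x - y| * (Real.exp x + Real.exp y) / 2 := by
  wlog hxy : y ≤ x generalizing x y
  · have h := this y x (le_of_not_ge hxy)
    rwa [abs_sub_comm, abs_sub_comm y x, add_comm] at h
  have hx : x = (x + y) / 2 + (x - y) / 2 := by ring
  have hy : y = (x + y) / 2 + -((x - y) / 2) := by ring
  set m := (x + y) / 2 with hm
  set u := (x - y) / 2 with hudef
  have hu : 0 ≤ u := by
    rw [hudef]; have := sub_nonneg.2 hxy; positivity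
  have h1 : Real.exp x - Real.exp y = Real.exp m * (2 * Real.sinh u) := by
    rw [Real.sinh_eq]
    nth_rewrite 1 [hx]
    nth_rewrite 1 [hy]
    rw [Real.exp_add, Real.exp_add]
    ring
  have h2 : Real.exp x + Real.exp y = Real.exp m * (2 * Real.cosh u) := by
    rw [Real.cosh_eq]
    nth_rewrite 1 [hx]
    nth_rewrite 1 [hy]
    rw [Real.exp_add, Real.exp_add]
    ring
  have h3 : |x - y| = 2 * u := by
    rw [hudef, abs_of_nonneg (sub_nonneg.2 hxy)]; ring
  rw [h1, h2, h3]
  have h4 : 0 ≤ Real.exp m * (2 * Real.sinh u) :=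
    mul_nonneg (Real.exp_pos m).le (by
      have := Real.sinh_nonneg_iff.mpr hu; linarith)
  rw [abs_of_nonneg h4]
  have h5 := sinh_le_mul_cosh hu
  nlinarith [Real.exp_pos m, Real.cosh_pos (x := u)]

lemma sq_exp_sub_exp_le (x y : ℝ) :
    (Real.exp x - Real.exp y) ^ 2 ≤ (x - y) ^ 2 * (Real.exp x + Real.exp y) ^ 2 / 4 := by
  have h := abs_exp_sub_exp_le x y
  have h2 : (Real.exp x - Real.exp y) ^ 2 = |Real.exp x - Real.exp y| ^ 2 := (sq_abs _).symm
  rw [h2]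
  have h3 : 0 ≤ |Real.exp x - Real.exp y| := abs_nonneg _
  have h4 := pow_le_pow_left₀ h3 h 2
  calc |Real.exp x - Real.exp y| ^ 2 ≤ (|x - y| * (Real.exp x + Real.exp y) / 2) ^ 2 := h4
    _ = (x - y) ^ 2 * (Real.exp x + Real.exp y) ^ 2 / 4 := by
        rw [div_pow, mul_pow, sq_abs]; ring

end ineq

section transfer

variable {Ω : Type*} [MeasurableSpace Ω] {P : Measure Ω} {f : Ω → ℝ} {v : ℝ≥0}

lemma map_integral_eq (hf : Measurable f) (hmap : P.map f = gaussianReal 0 v)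
    {g : ℝ → ℝ} (hg : Measurable g) :
    ∫ ω, g (f ω) ∂P = ∫ x, g x ∂(gaussianReal 0 v) := by
  rw [← hmap, integral_map hf.aemeasurable hg.aestronglyMeasurable]

lemma map_integrable (hf : Measurable f) (hmap : P.map f = gaussianReal 0 v)
    {g : ℝ → ℝ} (hg : Measurable g) (hint : Integrable g (gaussianReal 0 v)) :
    Integrable (fun ω => g (f ω)) P := by
  rw [← hmap] at hint
  exact (integrable_map_measure hg.aestronglyMeasurable hf.aemeasurable).mp hint

end transfer

lemma add_pow_four_le {a b : ℝ} (ha : 0 ≤ a) (hb : 0 ≤ b) :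
    (a + b) ^ 4 ≤ 8 * (a ^ 4 + b ^ 4) := by
  nlinarith [sq_nonneg (a - b), sq_nonneg (a + b), sq_nonneg (a ^ 2 - b ^ 2), sq_nonneg (a * b),
    mul_nonneg ha hb]

section pointwise

variable {Ω : Type*} [MeasurableSpace Ω]

lemma pointwise_second_moment (P : Measure Ω) [IsProbabilityMeasure P]
    (σ c ε vX vY : ℝ) (hε : 0 ≤ ε) {X Y : Ω → ℝ} (hX : Measurable X) (hY : Measurable Y)
    (hgauss : ∀ α β : ℝ, ∃ v : ℝ≥0,
      P.map (fun ω => α * X ω + β * Y ω) = gaussianReal 0 v)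
    (hvX : ∫ ω, X ω ^ 2 ∂P = vX) (hvY : ∫ ω, Y ω ^ 2 ∂P = vY)
    (hcl : ∫ ω, (X ω - Y ω) ^ 2 ∂P ≤ ε ^ 2) :
    Integrable (fun ω => (Real.exp (c + σ * X ω) - Real.exp (c + σ * Y ω)) ^ 2) P ∧
      ∫ ω, (Real.exp (c + σ * X ω) - Real.exp (c + σ * Y ω)) ^ 2 ∂P
        ≤ ε ^ 2 * (Real.sqrt 3 * σ ^ 2 / 4) *
            Real.sqrt (8 * Real.exp (4*c + 8*σ^2*vX) + 8 * Real.exp (4*c + 8*σ^2*vY)) := by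
  -- the difference process
  obtain ⟨vZ, hZmap⟩ := hgauss 1 (-1)
  have hZfun : (fun ω => 1 * X ω + (-1) * Y ω) = fun ω => X ω - Y ω := by funext ω; ring
  rw [hZfun] at hZmap
  have hZmeas : Measurable (fun ω => X ω - Y ω) := hX.sub hY
  have hZsq : ∫ ω, (X ω - Y ω) ^ 2 ∂P = (vZ:ℝ) := by
    have h := map_integral_eq hZmeas hZmap (g := fun x => x ^ 2) (measurable_id.pow_const 2)
    rw [h, integral_sq_gaussianReal]
  have hvZ_le : (vZ:ℝ) ≤ ε ^ 2 := by rw [← hZsq]; exact hcl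
  have hZ4int : Integrable (fun ω => (X ω - Y ω) ^ 4) P :=
    map_integrable hZmeas hZmap (measurable_id.pow_const 4) (integrable_pow_gaussianReal vZ 4)
  have hZ4 : ∫ ω, (X ω - Y ω) ^ 4 ∂P = 3 * (vZ:ℝ) ^ 2 := by
    have h := map_integral_eq hZmeas hZmap (g := fun x => x ^ 4) (measurable_id.pow_const 4)
    rw [h, integral_fourth_gaussianReal]
  have hZ4_le : ∫ ω, (X ω - Y ω) ^ 4 ∂P ≤ 3 * ε ^ 4 := by
    rw [hZ4]
    nlinarith [NNReal.coe_nonneg vZ]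
  -- exponential moments
  obtain ⟨w1, hw1⟩ := hgauss (4*σ) 0
  have hw1fun : (fun ω => (4*σ) * X ω + 0 * Y ω) = fun ω => 4*σ*X ω := by funext ω; ring
  rw [hw1fun] at hw1
  have hw1meas : Measurable (fun ω => 4*σ*X ω) := hX.const_mul (4*σ)
  have hw1coe : (w1:ℝ) = 16*σ^2*vX := by
    have h := map_integral_eq hw1meas hw1 (g := fun x => x ^ 2) (measurable_id.pow_const 2)
    rw [integral_sq_gaussianReal] at h
    have h2 : ∀ ω : Ω, (4*σ*X ω) ^ 2 = 16*σ^2 * X ω ^ 2 := fun ω => by ring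
    simp_rw [h2, integral_const_mul, hvX] at h
    linarith
  have hexpX_int : Integrable (fun ω => Real.exp (4*σ*X ω)) P :=
    map_integrable hw1meas hw1 Real.measurable_exp (integrable_exp_gaussianReal w1)
  have hexpX : ∫ ω, Real.exp (4*σ*X ω) ∂P = Real.exp (8*σ^2*vX) := by
    rw [map_integral_eq hw1meas hw1 Real.measurable_exp, integral_exp_gaussianReal]
    rw [hw1coe]
    congr 1
    ring
  obtain ⟨w2, hw2⟩ := hgauss 0 (4*σ)
  have hw2fun : (fun ω => 0 * X ω + (4*σ) * Y ω) = fun ω => 4*σ*Y ω := by funext ω; ring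
  rw [hw2fun] at hw2
  have hw2meas : Measurable (fun ω => 4*σ*Y ω) := hY.const_mul (4*σ)
  have hw2coe : (w2:ℝ) = 16*σ^2*vY := by
    have h := map_integral_eq hw2meas hw2 (g := fun x => x ^ 2) (measurable_id.pow_const 2)
    rw [integral_sq_gaussianReal] at h
    have h2 : ∀ ω : Ω, (4*σ*Y ω) ^ 2 = 16*σ^2 * Y ω ^ 2 := fun ω => by ring
    simp_rw [h2, integral_const_mul, hvY] at h
    linarith
  have hexpY_int : Integrable (fun ω => Real.exp (4*σ*Y ω)) P :=
    map_integrable hw2meas hw2 Real.measurable_exp (integrable_exp_gaussianReal w2)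
  have hexpY : ∫ ω, Real.exp (4*σ*Y ω) ∂P = Real.exp (8*σ^2*vY) := by
    rw [map_integral_eq hw2meas hw2 Real.measurable_exp, integral_exp_gaussianReal]
    rw [hw2coe]
    congr 1
    ring
  -- the exponential factors
  set W₁ : Ω → ℝ := fun ω => Real.exp (c + σ * X ω) with hW₁def
  set W₂ : Ω → ℝ := fun ω => Real.exp (c + σ * Y ω) with hW₂def
  have hW1meas : Measurable W₁ := (measurable_const.add (hX.const_mul σ)).exp
  have hW2meas : Measurable W₂ := (measurable_const.add (hY.const_mul σ)).exp
  have hW1pos : ∀ ω, 0 < W₁ ω := fun ω => Real.exp_pos _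
  have hW2pos : ∀ ω, 0 < W₂ ω := fun ω => Real.exp_pos _
  have hW1_4 : ∀ ω, Real.exp (4*c) * Real.exp (4*σ*X ω) = W₁ ω ^ 4 := by
    intro ω
    rw [← Real.exp_add, show 4*c + 4*σ*X ω = 4*(c + σ*X ω) by ring,
      show (4:ℝ) = ((4:ℕ):ℝ) by norm_num, Real.exp_nat_mul]
  have hW2_4 : ∀ ω, Real.exp (4*c) * Real.exp (4*σ*Y ω) = W₂ ω ^ 4 := by
    intro ω
    rw [← Real.exp_add, show 4*c + 4*σ*Y ω = 4*(c + σ*Y ω) by ring,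
      show (4:ℝ) = ((4:ℕ):ℝ) by norm_num, Real.exp_nat_mul]
  have hW1_4int : Integrable (fun ω => W₁ ω ^ 4) P :=
    (hexpX_int.const_mul (Real.exp (4*c))).congr (Filter.Eventually.of_forall hW1_4)
  have hW2_4int : Integrable (fun ω => W₂ ω ^ 4) P :=
    (hexpY_int.const_mul (Real.exp (4*c))).congr (Filter.Eventually.of_forall hW2_4)
  have hW1_4val : ∫ ω, W₁ ω ^ 4 ∂P = Real.exp (4*c + 8*σ^2*vX) := by
    rw [← integral_congr_ae (Filter.Eventually.of_forall hW1_4), integral_const_mul, hexpX,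
      ← Real.exp_add]
  have hW2_4val : ∫ ω, W₂ ω ^ 4 ∂P = Real.exp (4*c + 8*σ^2*vY) := by
    rw [← integral_congr_ae (Filter.Eventually.of_forall hW2_4), integral_const_mul, hexpY,
      ← Real.exp_add]
  -- the sum process
  have hS4_bound : ∀ ω, (W₁ ω + W₂ ω) ^ 4 ≤ 8 * (W₁ ω ^ 4 + W₂ ω ^ 4) := fun ω =>
    add_pow_four_le (hW1pos ω).le (hW2pos ω).le
  have hSmeas : Measurable (fun ω => (W₁ ω + W₂ ω)) := hW1meas.add hW2meas
  have hS4int : Integrable (fun ω => (W₁ ω + W₂ ω) ^ 4) P := by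
    refine ((hW1_4int.add hW2_4int).const_mul 8).mono'
      ((hSmeas.pow_const 4).aestronglyMeasurable) (Filter.Eventually.of_forall fun ω => ?_)
    rw [Real.norm_eq_abs, abs_of_nonneg (by positivity)]
    simp only [Pi.add_apply]
    exact hS4_bound ω
  have hS4val : ∫ ω, (W₁ ω + W₂ ω) ^ 4 ∂P
      ≤ 8 * Real.exp (4*c + 8*σ^2*vX) + 8 * Real.exp (4*c + 8*σ^2*vY) := by
    calc ∫ ω, (W₁ ω + W₂ ω) ^ 4 ∂P ≤ ∫ ω, 8 * (W₁ ω ^ 4 + W₂ ω ^ 4) ∂P :=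
          integral_mono hS4int ((hW1_4int.add hW2_4int).const_mul 8) hS4_bound
      _ = 8 * ((∫ ω, W₁ ω ^ 4 ∂P) + ∫ ω, W₂ ω ^ 4 ∂P) := by
          rw [integral_const_mul, integral_add hW1_4int hW2_4int]
      _ = 8 * Real.exp (4*c + 8*σ^2*vX) + 8 * Real.exp (4*c + 8*σ^2*vY) := by
          rw [hW1_4val, hW2_4val]; ring
  -- Memℒp facts
  have hpow22 : ∀ x : ℝ, x ^ (2:ℝ) = x ^ (2:ℕ) := fun x => by
    rw [show (2:ℝ) = ((2:ℕ):ℝ) by norm_num, Real.rpow_natCast]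
  have hZsq_mem : MemLp (fun ω => (X ω - Y ω) ^ 2) 2 P := by
    refine (memLp_two_iff_integrable_sq
      ((hZmeas.pow_const 2).aestronglyMeasurable)).mpr ?_
    refine hZ4int.congr (Filter.Eventually.of_forall fun ω => ?_)
    ring
  have hS2_mem : MemLp (fun ω => (W₁ ω + W₂ ω) ^ 2) 2 P := by
    refine (memLp_two_iff_integrable_sq
      ((hSmeas.pow_const 2).aestronglyMeasurable)).mpr ?_
    refine hS4int.congr (Filter.Eventually.of_forall fun ω => ?_)
    ring
  have hofReal2 : ENNReal.ofReal (2:ℝ) = 2 := by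
    rw [ENNReal.ofReal_ofNat]
  have hCS := integral_mul_le_Lp_mul_Lq_of_nonneg (μ := P)
    Real.HolderConjugate.two_two
    (Filter.Eventually.of_forall fun ω => sq_nonneg (X ω - Y ω))
    (Filter.Eventually.of_forall fun ω => sq_nonneg (W₁ ω + W₂ ω))
    (hofReal2 ▸ hZsq_mem) (hofReal2 ▸ hS2_mem)
  simp_rw [hpow22, ← pow_mul] at hCS
  norm_num at hCS
  rw [← Real.sqrt_eq_rpow, ← Real.sqrt_eq_rpow] at hCS
  -- pointwise bound
  have hD_bound : ∀ ω, (W₁ ω - W₂ ω) ^ 2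
      ≤ σ^2/4 * ((X ω - Y ω) ^ 2 * (W₁ ω + W₂ ω) ^ 2) := by
    intro ω
    have h := sq_exp_sub_exp_le (c + σ * X ω) (c + σ * Y ω)
    refine le_trans h (le_of_eq ?_)
    ring
  have hZS_int : Integrable (fun ω => (X ω - Y ω) ^ 2 * (W₁ ω + W₂ ω) ^ 2) P := by
    refine ((hZ4int.add hS4int).const_mul (1/2)).mono'
      (((hZmeas.pow_const 2).mul (hSmeas.pow_const 2)).aestronglyMeasurable)
      (Filter.Eventually.of_forall fun ω => ?_)
    rw [Real.norm_eq_abs, abs_of_nonneg (by positivity)]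
    simp only [Pi.add_apply]
    nlinarith [sq_nonneg ((X ω - Y ω) ^ 2 - (W₁ ω + W₂ ω) ^ 2)]
  have hD2int : Integrable (fun ω => (W₁ ω - W₂ ω) ^ 2) P := by
    refine (hZS_int.const_mul (σ^2/4)).mono'
      (((hW1meas.sub hW2meas).pow_const 2).aestronglyMeasurable)
      (Filter.Eventually.of_forall fun ω => ?_)
    rw [Real.norm_eq_abs, abs_of_nonneg (sq_nonneg _)]
    exact hD_bound ω
  refine ⟨hD2int, ?_⟩
  have b1 : Real.sqrt (∫ ω, (X ω - Y ω) ^ 4 ∂P) ≤ Real.sqrt 3 * ε ^ 2 := by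
    calc Real.sqrt (∫ ω, (X ω - Y ω) ^ 4 ∂P) ≤ Real.sqrt (3 * ε ^ 4) :=
          Real.sqrt_le_sqrt hZ4_le
      _ = Real.sqrt 3 * ε ^ 2 := by
          rw [show (3:ℝ) * ε ^ 4 = 3 * (ε^2)^2 by ring, Real.sqrt_mul (by norm_num : (0:ℝ) ≤ 3),
            Real.sqrt_sq (sq_nonneg ε)]
  have b2 : Real.sqrt (∫ ω, (W₁ ω + W₂ ω) ^ 4 ∂P)
      ≤ Real.sqrt (8 * Real.exp (4*c + 8*σ^2*vX) + 8 * Real.exp (4*c + 8*σ^2*vY)) :=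
    Real.sqrt_le_sqrt hS4val
  calc ∫ ω, (W₁ ω - W₂ ω) ^ 2 ∂P
      ≤ ∫ ω, σ^2/4 * ((X ω - Y ω) ^ 2 * (W₁ ω + W₂ ω) ^ 2) ∂P :=
        integral_mono hD2int (hZS_int.const_mul _) hD_bound
    _ = σ^2/4 * ∫ ω, (X ω - Y ω) ^ 2 * (W₁ ω + W₂ ω) ^ 2 ∂P := integral_const_mul _ _
    _ ≤ σ^2/4 * (Real.sqrt (∫ ω, (X ω - Y ω) ^ 4 ∂P)
          * Real.sqrt (∫ ω, (W₁ ω + W₂ ω) ^ 4 ∂P)) := by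
        refine mul_le_mul_of_nonneg_left hCS (by positivity)
    _ ≤ σ^2/4 * ((Real.sqrt 3 * ε ^ 2)
          * Real.sqrt (8 * Real.exp (4*c + 8*σ^2*vX) + 8 * Real.exp (4*c + 8*σ^2*vY))) := by
        refine mul_le_mul_of_nonneg_left
          (mul_le_mul b1 b2 (Real.sqrt_nonneg _) (by positivity)) (by positivity)
    _ = ε ^ 2 * (Real.sqrt 3 * σ ^ 2 / 4) *
          Real.sqrt (8 * Real.exp (4*c + 8*σ^2*vX) + 8 * Real.exp (4*c + 8*σ^2*vY)) := by
        ring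

end pointwise

lemma interval_sq_le {T : ℝ} (hT : 0 ≤ T) {g : ℝ → ℝ} (hg : Continuous g) :
    (∫ s in (0:ℝ)..T, g s) ^ 2 ≤ T * ∫ s in Ioc (0:ℝ) T, g s ^ 2 := by
  haveI : IsFiniteMeasure (volume.restrict (Ioc (0:ℝ) T)) :=
    ⟨by rw [Measure.restrict_apply_univ]; exact measure_Ioc_lt_top⟩
  have habs : |∫ s in (0:ℝ)..T, g s| ≤ ∫ s in (0:ℝ)..T, |g s| :=
    intervalIntegral.abs_integral_le_integral_abs hT
  have hioc : ∫ s in (0:ℝ)..T, |g s| = ∫ s in Ioc (0:ℝ) T, |g s| :=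
    intervalIntegral.integral_of_le hT
  have hsq_int : Integrable (fun s => g s ^ 2) (volume.restrict (Ioc (0:ℝ) T)) :=
    (hg.pow 2).integrableOn_Ioc
  have habs_mem : MemLp (fun s => |g s|) 2 (volume.restrict (Ioc (0:ℝ) T)) := by
    refine (memLp_two_iff_integrable_sq (hg.abs.aestronglyMeasurable)).mpr ?_
    refine hsq_int.congr (Filter.Eventually.of_forall fun s => ?_)
    simp [sq_abs]
  have hone_mem : MemLp (fun _ : ℝ => (1:ℝ)) 2 (volume.restrict (Ioc (0:ℝ) T)) :=
    memLp_const 1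
  have hofReal2 : ENNReal.ofReal (2:ℝ) = 2 := by rw [ENNReal.ofReal_ofNat]
  have hCS := integral_mul_le_Lp_mul_Lq_of_nonneg (μ := volume.restrict (Ioc (0:ℝ) T))
    Real.HolderConjugate.two_two
    (Filter.Eventually.of_forall fun s => abs_nonneg (g s))
    (Filter.Eventually.of_forall fun _ => zero_le_one)
    (hofReal2 ▸ habs_mem) (hofReal2 ▸ hone_mem)
  simp only [mul_one] at hCS
  rw [← Real.sqrt_eq_rpow, ← Real.sqrt_eq_rpow] at hCS
  have h1 : ∫ s in Ioc (0:ℝ) T, |g s| ^ (2:ℝ) = ∫ s in Ioc (0:ℝ) T, g s ^ 2 := by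
    refine integral_congr_ae (Filter.Eventually.of_forall fun s => ?_)
    show |g s| ^ (2:ℝ) = g s ^ 2
    rw [show (2:ℝ) = ((2:ℕ):ℝ) by norm_num, Real.rpow_natCast, sq_abs]
  have h2 : ∫ s in Ioc (0:ℝ) T, (1:ℝ) ^ (2:ℝ) = T := by
    simp only [Real.one_rpow]
    rw [setIntegral_const]
    simp [Real.volume_Ioc, ENNReal.toReal_ofReal hT, hT]
  rw [h1, h2] at hCS
  have hg2nonneg : 0 ≤ ∫ s in Ioc (0:ℝ) T, g s ^ 2 :=
    integral_nonneg fun s => sq_nonneg _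
  calc (∫ s in (0:ℝ)..T, g s) ^ 2 = |∫ s in (0:ℝ)..T, g s| ^ 2 := (sq_abs _).symm
    _ ≤ (∫ s in Ioc (0:ℝ) T, |g s|) ^ 2 := by
        refine pow_le_pow_left₀ (abs_nonneg _) ?_ 2
        rw [← hioc]; exact habs
    _ ≤ (Real.sqrt (∫ s in Ioc (0:ℝ) T, g s ^ 2) * Real.sqrt T) ^ 2 := by
        refine pow_le_pow_left₀ (integral_nonneg fun s => abs_nonneg _) hCS 2
    _ = T * ∫ s in Ioc (0:ℝ) T, g s ^ 2 := by
        rw [mul_pow, Real.sq_sqrt hg2nonneg, Real.sq_sqrt hT]; ring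

end ExpFunctionalAux

open ExpFunctionalAux

theorem exponential_functional_L2_estimate {Ω : Type*} [MeasurableSpace Ω]
    (P : Measure Ω) [IsProbabilityMeasure P]
    (T a σ H₁ H₂ ε : ℝ) (hT : 0 < T)
    (hH₁ : H₁ ∈ Set.Ioo (0:ℝ) 1) (hH₂ : H₂ ∈ Set.Ioo (0:ℝ) 1) (hε : 0 ≤ ε)
    (B₁ B₂ : ℝ → Ω → ℝ)
    (hcont₁ : ∀ ω, ContinuousOn (fun s => B₁ s ω) (Icc 0 T))
    (hcont₂ : ∀ ω, ContinuousOn (fun s => B₂ s ω) (Icc 0 T))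
    (hmeas₁ : ∀ s ∈ Icc (0:ℝ) T, Measurable (B₁ s))
    (hmeas₂ : ∀ s ∈ Icc (0:ℝ) T, Measurable (B₂ s))
    (hgauss : ∀ (n : ℕ) (c d : Fin n → ℝ) (s t : Fin n → ℝ),
      (∀ i, s i ∈ Icc (0:ℝ) T) → (∀ i, t i ∈ Icc (0:ℝ) T) →
      ∃ v : NNReal,
        P.map (fun ω => ∑ i, (c i * B₁ (s i) ω + d i * B₂ (t i) ω)) = gaussianReal 0 v)
    (hvar₁ : ∀ s ∈ Icc (0:ℝ) T, ∫ ω, (B₁ s ω) ^ 2 ∂P = s ^ (2*H₁))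
    (hvar₂ : ∀ s ∈ Icc (0:ℝ) T, ∫ ω, (B₂ s ω) ^ 2 ∂P = s ^ (2*H₂))
    (hclose : ∀ s ∈ Icc (0:ℝ) T, ∫ ω, |B₁ s ω - B₂ s ω| ^ 2 ∂P ≤ ε ^ 2) :
    ∫ ω, |(∫ s in (0:ℝ)..T, Real.exp (a * s + σ * B₁ s ω)) -
          (∫ s in (0:ℝ)..T, Real.exp (a * s + σ * B₂ s ω))| ^ 2 ∂P
      ≤ ε ^ 2 * (Real.sqrt 3 * T * σ ^ 2 / 4) *
          ∫ s in (0:ℝ)..T,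
            Real.sqrt (8 * Real.exp (4*a*s + 8*σ^2 * s ^ (2*H₁)) +
                       8 * Real.exp (4*a*s + 8*σ^2 * s ^ (2*H₂))) := by
  obtain ⟨hH₁pos, _⟩ := hH₁
  obtain ⟨hH₂pos, _⟩ := hH₂
  -- clamping to [0, T]
  set cl : ℝ → ℝ := fun s => min (max s 0) T with hcl_def
  have hcl_cont : Continuous cl := (continuous_id.max continuous_const).min continuous_const
  have hcl_mem : ∀ s, cl s ∈ Icc (0:ℝ) T := fun s =>
    ⟨le_min (le_max_right s 0) hT.le, min_le_right _ _⟩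
  have hcl_eq : ∀ s ∈ Icc (0:ℝ) T, cl s = s := fun s hs => by
    simp only [hcl_def]
    rw [max_eq_left hs.1, min_eq_left hs.2]
  -- clamped processes
  have hB₁cont : ∀ ω, Continuous fun s => B₁ (cl s) ω := fun ω =>
    (hcont₁ ω).comp_continuous hcl_cont hcl_mem
  have hB₂cont : ∀ ω, Continuous fun s => B₂ (cl s) ω := fun ω =>
    (hcont₂ ω).comp_continuous hcl_cont hcl_mem
  have hB₁meas : ∀ s, Measurable fun ω => B₁ (cl s) ω := fun s => hmeas₁ _ (hcl_mem s)
  have hB₂meas : ∀ s, Measurable fun ω => B₂ (cl s) ω := fun s => hmeas₂ _ (hcl_mem s)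
  have hUnc₁ : Measurable (Function.uncurry fun s ω => B₁ (cl s) ω) :=
    measurable_uncurry_of_continuous_of_measurable hB₁cont hB₁meas
  have hUnc₂ : Measurable (Function.uncurry fun s ω => B₂ (cl s) ω) :=
    measurable_uncurry_of_continuous_of_measurable hB₂cont hB₂meas
  set F : ℝ → Ω → ℝ := fun s ω =>
    Real.exp (a*s + σ * B₁ (cl s) ω) - Real.exp (a*s + σ * B₂ (cl s) ω) with hF_def
  have hFjoint : Measurable fun p : ℝ × Ω => F p.1 p.2 := by
    have m1 : Measurable fun p : ℝ × Ω => B₁ (cl p.1) p.2 := hUnc₁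
    have m2 : Measurable fun p : ℝ × Ω => B₂ (cl p.1) p.2 := hUnc₂
    exact (((measurable_fst.const_mul a).add (m1.const_mul σ)).exp).sub
      (((measurable_fst.const_mul a).add (m2.const_mul σ)).exp)
  have hFcont : ∀ ω, Continuous fun s => F s ω := fun ω =>
    (((continuous_const.mul continuous_id).add (continuous_const.mul (hB₁cont ω))).rexp).sub
      (((continuous_const.mul continuous_id).add (continuous_const.mul (hB₂cont ω))).rexp)
  -- the per-time second moment bound
  set bnd : ℝ → ℝ := fun s => ε^2 * (Real.sqrt 3 * σ^2/4) *
    Real.sqrt (8 * Real.exp (4*a*s + 8*σ^2 * s ^ (2*H₁)) +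
               8 * Real.exp (4*a*s + 8*σ^2 * s ^ (2*H₂))) with hbnd_def
  have key : ∀ s ∈ Icc (0:ℝ) T,
      Integrable (fun ω => F s ω ^ 2) P ∧ ∫ ω, F s ω ^ 2 ∂P ≤ bnd s := by
    intro s hs
    have hcs : cl s = s := hcl_eq s hs
    have hgauss' : ∀ α β : ℝ, ∃ v : ℝ≥0,
        P.map (fun ω => α * B₁ s ω + β * B₂ s ω) = gaussianReal 0 v := by
      intro α β
      obtain ⟨v, hv⟩ := hgauss 1 (fun _ => α) (fun _ => β) (fun _ => s) (fun _ => s)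
        (fun _ => hs) (fun _ => hs)
      refine ⟨v, ?_⟩
      rw [← hv]
      congr 1
      funext ω
      simp
    have hclose' : ∫ ω, (B₁ s ω - B₂ s ω)^2 ∂P ≤ ε^2 := by
      have h := hclose s hs
      simpa [sq_abs] using h
    have h := pointwise_second_moment P σ (a*s) ε (s ^ (2*H₁)) (s ^ (2*H₂)) hε
      (hmeas₁ s hs) (hmeas₂ s hs) hgauss' (hvar₁ s hs) (hvar₂ s hs) hclose'
    have hfun : (fun ω => (Real.exp (a*s + σ * B₁ s ω) - Real.exp (a*s + σ * B₂ s ω)) ^ 2)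
        = fun ω => F s ω ^ 2 := by
      funext ω
      simp only [hF_def]
      rw [hcs]
    rw [hfun] at h
    obtain ⟨h1, h2⟩ := h
    refine ⟨h1, h2.trans (le_of_eq ?_)⟩
    simp only [hbnd_def]
    rw [show 4*(a*s) = 4*a*s by ring]
  -- product measure setup
  set μs := volume.restrict (Ioc (0:ℝ) T) with hμs_def
  haveI : IsFiniteMeasure μs :=
    ⟨by rw [hμs_def, Measure.restrict_apply_univ]; exact measure_Ioc_lt_top⟩
  set H : ℝ × Ω → ℝ := fun p => F p.1 p.2 ^ 2 with hH_def
  have hHmeas : Measurable H := hFjoint.pow_const 2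
  have hH_aesm : AEStronglyMeasurable H (μs.prod P) := hHmeas.aestronglyMeasurable
  -- continuity and integrability of the bound
  have hr₁ : Continuous fun s : ℝ => s ^ (2*H₁) := by
    rw [continuous_iff_continuousAt]
    intro x
    refine Real.continuousAt_rpow_const x _ ?_
    by_cases hx : x = 0
    · right; positivity
    · left; exact hx
  have hr₂ : Continuous fun s : ℝ => s ^ (2*H₂) := by
    rw [continuous_iff_continuousAt]
    intro x
    refine Real.continuousAt_rpow_const x _ ?_
    by_cases hx : x = 0
    · right; positivity
    · left; exact hx
  have e1 : Continuous fun s : ℝ => Real.exp (4*a*s + 8*σ^2 * s ^ (2*H₁)) :=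
    ((continuous_const.mul continuous_id).add (continuous_const.mul hr₁)).rexp
  have e2 : Continuous fun s : ℝ => Real.exp (4*a*s + 8*σ^2 * s ^ (2*H₂)) :=
    ((continuous_const.mul continuous_id).add (continuous_const.mul hr₂)).rexp
  have hsqrt_cont : Continuous fun s : ℝ =>
      Real.sqrt (8 * Real.exp (4*a*s + 8*σ^2 * s ^ (2*H₁)) +
                 8 * Real.exp (4*a*s + 8*σ^2 * s ^ (2*H₂))) :=
    Real.continuous_sqrt.comp ((continuous_const.mul e1).add (continuous_const.mul e2))
  have hbnd_cont : Continuous bnd := by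
    simp only [hbnd_def]
    exact continuous_const.mul hsqrt_cont
  have hbnd_int : Integrable bnd μs := hbnd_cont.integrableOn_Ioc
  -- integrability of H on the product space
  have hH_ae_int : ∀ᵐ s ∂μs, Integrable (fun ω => H (s, ω)) P := by
    rw [hμs_def]
    filter_upwards [ae_restrict_mem measurableSet_Ioc] with s hs
    exact (key s (Ioc_subset_Icc_self hs)).1
  have h_norm_eq : ∀ s : ℝ, ∫ ω, ‖H (s, ω)‖ ∂P = ∫ ω, H (s, ω) ∂P := fun s =>
    integral_congr_ae (Filter.Eventually.of_forall fun ω => by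
      simp only [hH_def, Real.norm_eq_abs]
      exact abs_of_nonneg (sq_nonneg _))
  have h_norm_int : Integrable (fun s => ∫ ω, ‖H (s, ω)‖ ∂P) μs := by
    refine hbnd_int.mono' (hH_aesm.norm.integral_prod_right') ?_
    rw [hμs_def]
    filter_upwards [ae_restrict_mem measurableSet_Ioc] with s hs
    have hkey := key s (Ioc_subset_Icc_self hs)
    rw [Real.norm_eq_abs, h_norm_eq s, abs_of_nonneg (integral_nonneg fun ω => by
      simp only [hH_def]; exact sq_nonneg _)]
    exact hkey.2
  have hHint : Integrable H (μs.prod P) :=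
    (integrable_prod_iff hH_aesm).mpr ⟨hH_ae_int, h_norm_int⟩
  have hωint : Integrable (fun ω => ∫ s, H (s, ω) ∂μs) P := hHint.integral_prod_right
  have hswap : ∫ ω, (∫ s, H (s, ω) ∂μs) ∂P = ∫ s, (∫ ω, H (s, ω) ∂P) ∂μs :=
    (MeasureTheory.integral_integral_swap (f := fun s ω => H (s, ω)) hHint).symm
  -- pathwise Cauchy-Schwarz
  have hpath : ∀ ω, (∫ s in (0:ℝ)..T, F s ω) ^ 2 ≤ T * ∫ s, H (s, ω) ∂μs := by
    intro ω
    have h := interval_sq_le hT.le (hFcont ω)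
    simpa [hH_def, hμs_def] using h
  -- rewriting the left-hand side
  have hLHS : ∀ ω, |(∫ s in (0:ℝ)..T, Real.exp (a * s + σ * B₁ s ω)) -
          (∫ s in (0:ℝ)..T, Real.exp (a * s + σ * B₂ s ω))| ^ 2
        = (∫ s in (0:ℝ)..T, F s ω) ^ 2 := by
    intro ω
    rw [sq_abs]
    congr 1
    have hint1 : IntervalIntegrable (fun s => Real.exp (a * s + σ * B₁ s ω)) volume 0 T := by
      apply ContinuousOn.intervalIntegrable
      rw [uIcc_of_le hT.le]
      exact (((continuous_const.mul continuous_id).continuousOn).add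
        (continuousOn_const.mul (hcont₁ ω))).rexp
    have hint2 : IntervalIntegrable (fun s => Real.exp (a * s + σ * B₂ s ω)) volume 0 T := by
      apply ContinuousOn.intervalIntegrable
      rw [uIcc_of_le hT.le]
      exact (((continuous_const.mul continuous_id).continuousOn).add
        (continuousOn_const.mul (hcont₂ ω))).rexp
    rw [← intervalIntegral.integral_sub hint1 hint2]
    apply intervalIntegral.integral_congr
    intro s hs
    rw [uIcc_of_le hT.le] at hs
    simp only [hF_def]
    rw [hcl_eq s hs]
  calc ∫ ω, |(∫ s in (0:ℝ)..T, Real.exp (a * s + σ * B₁ s ω)) -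
          (∫ s in (0:ℝ)..T, Real.exp (a * s + σ * B₂ s ω))| ^ 2 ∂P
      = ∫ ω, (∫ s in (0:ℝ)..T, F s ω) ^ 2 ∂P :=
        integral_congr_ae (Filter.Eventually.of_forall fun ω => hLHS ω)
    _ ≤ ∫ ω, T * ∫ s, H (s, ω) ∂μs ∂P :=
        integral_mono_of_nonneg (Filter.Eventually.of_forall fun ω => sq_nonneg _)
          (hωint.const_mul T) (Filter.Eventually.of_forall fun ω => hpath ω)
    _ = T * ∫ ω, (∫ s, H (s, ω) ∂μs) ∂P := integral_const_mul T _
    _ = T * ∫ s, (∫ ω, H (s, ω) ∂P) ∂μs := by rw [hswap]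
    _ ≤ T * ∫ s, bnd s ∂μs := by
        refine mul_le_mul_of_nonneg_left ?_ hT.le
        refine integral_mono_ae ?_ hbnd_int ?_
        · refine h_norm_int.congr (Filter.Eventually.of_forall fun s => h_norm_eq s)
        · rw [hμs_def]
          filter_upwards [ae_restrict_mem measurableSet_Ioc] with s hs
          exact (key s (Ioc_subset_Icc_self hs)).2
    _ = ε ^ 2 * (Real.sqrt 3 * T * σ ^ 2 / 4) *
          ∫ s in (0:ℝ)..T,
            Real.sqrt (8 * Real.exp (4*a*s + 8*σ^2 * s ^ (2*H₁)) +
                       8 * Real.exp (4*a*s + 8*σ^2 * s ^ (2*H₂))) := by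
        rw [intervalIntegral.integral_of_le hT.le]
        simp only [hbnd_def, hμs_def]
        rw [integral_const_mul]
        ring
end

section
/- Let X and Y be real random variables on a probability space such that the pair (X, Y) is centered and jointly Gaussian (i.e., every real linear combination c₁X + c₂Y is a centered Gaussian random variable). Then E[|e^X − e^Y|²] ≤ (√3/4) · E[|X − Y|²] · (8 e^{8 E[X²]} + 8 e^{8 E[Y²]})^{1/2}. -/
open MeasureTheory ProbabilityTheory Real
open scoped NNReal ENNReal

-- pointwise exp inequality
lemma key_exp (u : ℝ) (hu : 0 ≤ u) : rexp u - 1 ≤ u * (rexp u + 1) / 2 := by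
  have h : MonotoneOn (fun u : ℝ => u * (rexp u + 1) / 2 - (rexp u - 1)) (Set.Ici 0) := by
    apply monotoneOn_of_deriv_nonneg (convex_Ici 0) (by fun_prop) (by fun_prop)
    intro x hx
    have hd : HasDerivAt (fun u : ℝ => u * (rexp u + 1) / 2 - (rexp u - 1))
        (((rexp x + 1) + x * rexp x) / 2 - rexp x) x := by
      have := ((hasDerivAt_id x).mul ((Real.hasDerivAt_exp x).add_const 1)).div_const 2
      have h2 := this.sub ((Real.hasDerivAt_exp x).sub_const 1)
      simp at h2
      exact h2
    rw [hd.deriv]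
    nlinarith [mul_le_mul_of_nonneg_left (Real.add_one_le_exp (-x)) (Real.exp_pos x).le,
      Real.exp_pos x, (Real.exp_neg x ▸ rfl : rexp (-x) = (rexp x)⁻¹),
      mul_inv_cancel₀ (Real.exp_pos x).ne']
  have := h (Set.self_mem_Ici) hu hu
  simp at this
  linarith

lemma abs_exp_sub_exp (a b : ℝ) : |rexp a - rexp b| ≤ |a - b| * (rexp a + rexp b) / 2 := by
  wlog hab : b ≤ a generalizing a b
  · have := this b a (le_of_not_ge hab)
    rw [abs_sub_comm (rexp a), abs_sub_comm a b]; linarith [this]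
  have h := key_exp (a - b) (by linarith)
  rw [abs_of_nonneg (sub_nonneg.2 (Real.exp_le_exp.2 hab)), abs_of_nonneg (by linarith : (0:ℝ) ≤ a - b)]
  have hb := Real.exp_pos b
  have he : rexp a = rexp b * rexp (a - b) := by rw [← Real.exp_add]; ring_nf
  nlinarith [mul_le_mul_of_nonneg_left h hb.le]

lemma gaussianReal_integral_eq {v : ℝ≥0} (hv : v ≠ 0) (f : ℝ → ℝ) :
    ∫ x, f x ∂(gaussianReal 0 v) = ∫ x, gaussianPDFReal 0 v x * f x := by
  rw [gaussianReal_of_var_ne_zero _ hv]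
  have : (gaussianPDF 0 v) = fun x => ((Real.toNNReal (gaussianPDFReal 0 v x) : ℝ≥0) : ℝ≥0∞) := by
    ext x; rfl
  rw [this, integral_withDensity_eq_integral_smul
    ((measurable_gaussianPDFReal 0 v).real_toNNReal)]
  congr 1; ext x
  simp [NNReal.smul_def, Real.coe_toNNReal _ (gaussianPDFReal_nonneg 0 v x)]

lemma gaussianReal_integrable_iff {v : ℝ≥0} (hv : v ≠ 0) (f : ℝ → ℝ) :
    Integrable f (gaussianReal 0 v) ↔
      Integrable (fun x => gaussianPDFReal 0 v x * f x) volume := by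
  rw [gaussianReal_of_var_ne_zero _ hv]
  have : (gaussianPDF 0 v) = fun x => ((Real.toNNReal (gaussianPDFReal 0 v x) : ℝ≥0) : ℝ≥0∞) := by
    ext x; rfl
  rw [this, integrable_withDensity_iff_integrable_smul
    ((measurable_gaussianPDFReal 0 v).real_toNNReal)]
  constructor <;> intro h <;> refine h.congr (Filter.Eventually.of_forall fun x => ?_) <;>
    simp [NNReal.smul_def, Real.coe_toNNReal _ (gaussianPDFReal_nonneg 0 v x)]

lemma gaussianPDFReal_mul_exp {v : ℝ≥0} (hv : v ≠ 0) (t x : ℝ) :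
    gaussianPDFReal 0 v x * rexp (t * x)
      = rexp (t ^ 2 * v / 2) * gaussianPDFReal (t * v) v x := by
  have hv' : (v : ℝ) ≠ 0 := by exact_mod_cast hv
  simp only [gaussianPDFReal]
  have hexp : -(x - 0) ^ 2 / (2 * (v:ℝ)) + t * x
      = t ^ 2 * (v:ℝ) / 2 + -(x - t * (v:ℝ)) ^ 2 / (2 * (v:ℝ)) := by
    field_simp
    ring
  rw [mul_assoc, ← Real.exp_add, hexp, Real.exp_add]
  ring

lemma integral_exp_gaussianReal (t : ℝ) (v : ℝ≥0) :
    ∫ x, rexp (t * x) ∂(gaussianReal 0 v) = rexp (t ^ 2 * v / 2) := by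
  by_cases hv : v = 0
  · simp [hv, gaussianReal_zero_var, integral_dirac]
  rw [gaussianReal_integral_eq hv]
  simp_rw [gaussianPDFReal_mul_exp hv]
  rw [integral_const_mul, integral_gaussianPDFReal_eq_one _ hv, mul_one]

lemma integrable_exp_gaussianReal (t : ℝ) (v : ℝ≥0) :
    Integrable (fun x => rexp (t * x)) (gaussianReal 0 v) := by
  by_cases hv : v = 0
  · rw [hv, gaussianReal_zero_var]
    refine (integrable_const (rexp (t * 0))).congr ?_
    rw [Filter.eventuallyEq_iff_exists_mem]
    exact ⟨{0}, by simp [Measure.dirac_apply_of_mem], fun x hx => by simp_all⟩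
  rw [gaussianReal_integrable_iff hv]
  have : (fun x => gaussianPDFReal 0 v x * rexp (t * x))
      = fun x => rexp (t ^ 2 * v / 2) * gaussianPDFReal (t * v) v x := by
    ext x; exact gaussianPDFReal_mul_exp hv t x
  rw [this]
  exact (integrable_gaussianPDFReal _ _).const_mul _

lemma integral_even_pow_mul_exp (b : ℝ) (hb : 0 < b) (n : ℕ) :
    ∫ x : ℝ, x ^ (2 * n) * rexp (-b * x ^ 2)
      = b ^ (-(2 * (n : ℝ) + 1) / 2) * Real.Gamma ((2 * (n : ℝ) + 1) / 2) := by
  have h1 : ∫ x : ℝ, x ^ (2 * n) * rexp (-b * x ^ 2)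
      = ∫ x : ℝ, |x| ^ (2 * n) * rexp (-b * |x| ^ 2) := by
    congr 1; ext x
    rw [pow_mul, pow_mul, sq_abs]
  rw [h1, integral_comp_abs (f := fun x => x ^ (2 * n) * rexp (-b * x ^ 2))]
  have h2 : ∀ x ∈ Set.Ioi (0:ℝ), x ^ (2 * n) * rexp (-b * x ^ 2)
      = x ^ ((2 * n : ℕ) : ℝ) * rexp (-b * x ^ ((2:ℕ) : ℝ)) := by
    intro x _
    rw [Real.rpow_natCast, Real.rpow_natCast]
  rw [setIntegral_congr_fun measurableSet_Ioi h2]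
  have h3 := integral_rpow_mul_exp_neg_mul_rpow (p := ((2:ℕ):ℝ)) (q := ((2 * n : ℕ) : ℝ))
    (by norm_num) (lt_of_lt_of_le neg_one_lt_zero (by positivity)) hb
  rw [h3]
  push_cast
  ring

lemma Gamma_three_halves : Real.Gamma (3 / 2) = Real.sqrt π / 2 := by
  have h : (3 : ℝ) / 2 = 1 / 2 + 1 := by norm_num
  rw [h, Real.Gamma_add_one (by norm_num), Real.Gamma_one_half_eq]
  ring

lemma Gamma_five_halves : Real.Gamma (5 / 2) = 3 * Real.sqrt π / 4 := by
  have h : (5 : ℝ) / 2 = 3 / 2 + 1 := by norm_num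
  rw [h, Real.Gamma_add_one (by norm_num), Gamma_three_halves]
  ring

lemma rpow_of_inv (w : ℝ) (hw : 0 < w) (y : ℝ) : (w⁻¹ : ℝ) ^ (-y) = w ^ y := by
  rw [Real.inv_rpow hw.le, Real.rpow_neg hw.le, inv_inv]

lemma rpow_three_halves (w : ℝ) (hw : 0 < w) : w ^ ((3:ℝ)/2) = w * Real.sqrt w := by
  rw [show (3:ℝ)/2 = 1 + 1/2 by norm_num, Real.rpow_add hw, Real.rpow_one,
    ← Real.sqrt_eq_rpow]

lemma rpow_five_halves (w : ℝ) (hw : 0 < w) : w ^ ((5:ℝ)/2) = w ^ 2 * Real.sqrt w := by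
  rw [show (5:ℝ)/2 = (2:ℕ) + 1/2 by norm_num, Real.rpow_add hw, ← Real.sqrt_eq_rpow,
    Real.rpow_natCast]

lemma gauss_pdf_pow (v : ℝ≥0) (n : ℕ) (x : ℝ) :
    gaussianPDFReal 0 v x * x ^ n
      = (Real.sqrt (2 * π * (v:ℝ)))⁻¹ * (x ^ n * rexp (-(2 * (v:ℝ))⁻¹ * x ^ 2)) := by
  simp only [gaussianPDFReal]
  have h : -(x - 0) ^ 2 / (2 * (v:ℝ)) = -(2 * (v:ℝ))⁻¹ * x ^ 2 := by
    rw [sub_zero, div_eq_mul_inv]; ring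
  rw [h]; ring

lemma integrable_even_pow_gaussianReal (v : ℝ≥0) (n : ℕ) :
    Integrable (fun x => x ^ (2 * n)) (gaussianReal 0 v) := by
  by_cases hv : v = 0
  · rw [hv, gaussianReal_zero_var]
    refine (integrable_const ((0:ℝ) ^ (2*n))).congr ?_
    rw [Filter.eventuallyEq_iff_exists_mem]
    exact ⟨{0}, by simp [Measure.dirac_apply_of_mem], fun x hx => by simp_all⟩
  have hw : (0:ℝ) < v := by exact_mod_cast pos_iff_ne_zero.mpr hv
  have hb : (0:ℝ) < (2 * (v:ℝ))⁻¹ := by positivity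
  rw [gaussianReal_integrable_iff hv]
  simp_rw [gauss_pdf_pow v (2*n)]
  refine Integrable.const_mul ?_ _
  have h := integrable_rpow_mul_exp_neg_mul_sq hb (s := ((2*n : ℕ) : ℝ))
    (lt_of_lt_of_le neg_one_lt_zero (by positivity))
  refine h.congr (Filter.Eventually.of_forall fun x => ?_)
  simp only [Real.rpow_natCast]

lemma integral_sq_gaussianReal (v : ℝ≥0) : ∫ x, x ^ 2 ∂(gaussianReal 0 v) = (v:ℝ) := by
  by_cases hv : v = 0
  · simp [hv, gaussianReal_zero_var, integral_dirac]
  have hw : (0:ℝ) < v := by exact_mod_cast pos_iff_ne_zero.mpr hv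
  have hb : (0:ℝ) < (2 * (v:ℝ))⁻¹ := by positivity
  rw [gaussianReal_integral_eq hv]
  simp_rw [gauss_pdf_pow v 2]
  rw [integral_const_mul]
  have h := integral_even_pow_mul_exp ((2 * (v:ℝ))⁻¹) hb 1
  simp only [Nat.cast_one, Nat.cast_ofNat, show (2*1 : ℕ) = 2 from rfl, show -(2*(1:ℝ)+1)/2 = -(3/2) by norm_num,
    show (2*(1:ℝ)+1)/2 = 3/2 by norm_num] at h
  rw [h, rpow_of_inv _ (by positivity),
    rpow_three_halves _ (by positivity), Gamma_three_halves]
  have hsq : Real.sqrt (2 * π * (v:ℝ)) = Real.sqrt π * Real.sqrt (2 * (v:ℝ)) := by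
    rw [show (2:ℝ) * π * (v:ℝ) = π * (2 * (v:ℝ)) by ring, Real.sqrt_mul pi_pos.le]
  have h2w : Real.sqrt (2 * (v:ℝ)) * Real.sqrt (2 * (v:ℝ)) = 2 * (v:ℝ) :=
    Real.mul_self_sqrt (by positivity)
  have hp1 : (0:ℝ) < Real.sqrt π := Real.sqrt_pos.mpr pi_pos
  have hp2 : (0:ℝ) < Real.sqrt (2 * (v:ℝ)) := Real.sqrt_pos.mpr (by positivity)
  rw [hsq]
  field_simp

lemma integral_pow4_gaussianReal (v : ℝ≥0) : ∫ x, x ^ 4 ∂(gaussianReal 0 v) = 3 * (v:ℝ) ^ 2 := by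
  by_cases hv : v = 0
  · simp [hv, gaussianReal_zero_var, integral_dirac]
  have hw : (0:ℝ) < v := by exact_mod_cast pos_iff_ne_zero.mpr hv
  have hb : (0:ℝ) < (2 * (v:ℝ))⁻¹ := by positivity
  rw [gaussianReal_integral_eq hv]
  simp_rw [gauss_pdf_pow v 4]
  rw [integral_const_mul]
  have h := integral_even_pow_mul_exp ((2 * (v:ℝ))⁻¹) hb 2
  simp only [Nat.cast_one, Nat.cast_ofNat, show (2*2 : ℕ) = 4 from rfl, show -(2*(2:ℝ)+1)/2 = -(5/2) by norm_num,
    show (2*(2:ℝ)+1)/2 = 5/2 by norm_num] at h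
  rw [h, rpow_of_inv _ (by positivity),
    rpow_five_halves _ (by positivity), Gamma_five_halves]
  have hsq : Real.sqrt (2 * π * (v:ℝ)) = Real.sqrt π * Real.sqrt (2 * (v:ℝ)) := by
    rw [show (2:ℝ) * π * (v:ℝ) = π * (2 * (v:ℝ)) by ring, Real.sqrt_mul pi_pos.le]
  have h2w : Real.sqrt (2 * (v:ℝ)) * Real.sqrt (2 * (v:ℝ)) = 2 * (v:ℝ) :=
    Real.mul_self_sqrt (by positivity)
  have hp1 : (0:ℝ) < Real.sqrt π := Real.sqrt_pos.mpr pi_pos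
  have hp2 : (0:ℝ) < Real.sqrt (2 * (v:ℝ)) := Real.sqrt_pos.mpr (by positivity)
  rw [hsq]
  field_simp
  nlinarith [h2w, hp1, hp2]

lemma cs_integral {Ω : Type*} [MeasurableSpace Ω] (μ : Measure Ω) (f g : Ω → ℝ)
    (hf2 : Integrable (fun ω => f ω ^ 2) μ) (hg2 : Integrable (fun ω => g ω ^ 2) μ)
    (hfg : Integrable (fun ω => f ω * g ω) μ) :
    ∫ ω, f ω * g ω ∂μ
      ≤ Real.sqrt (∫ ω, f ω ^ 2 ∂μ) * Real.sqrt (∫ ω, g ω ^ 2 ∂μ) := by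
  set A := ∫ ω, f ω ^ 2 ∂μ with hA'
  set B := ∫ ω, f ω * g ω ∂μ with hB'
  set C := ∫ ω, g ω ^ 2 ∂μ with hC'
  have hA : 0 ≤ A := integral_nonneg fun ω => sq_nonneg _
  have hC : 0 ≤ C := integral_nonneg fun ω => sq_nonneg _
  have key : ∀ t : ℝ, 0 ≤ A * (t * t) + (2 * B) * t + C := by
    intro t
    have h0 : 0 ≤ ∫ ω, (t * f ω + g ω) ^ 2 ∂μ := integral_nonneg fun ω => sq_nonneg _
    have hexp : ∫ ω, (t * f ω + g ω) ^ 2 ∂μ = A * (t * t) + (2 * B) * t + C := by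
      have he : ∀ ω, (t * f ω + g ω) ^ 2
          = t ^ 2 * f ω ^ 2 + (2 * t) * (f ω * g ω) + g ω ^ 2 := fun ω => by ring
      simp_rw [he]
      rw [integral_add (f := fun ω => t ^ 2 * f ω ^ 2 + 2 * t * (f ω * g ω))
          (g := fun ω => g ω ^ 2) ((hf2.const_mul _).add (hfg.const_mul _)) hg2,
        integral_add (f := fun ω => t ^ 2 * f ω ^ 2) (g := fun ω => 2 * t * (f ω * g ω))
          (hf2.const_mul _) (hfg.const_mul _),
        integral_const_mul, integral_const_mul]
      ring
    linarith [hexp ▸ h0]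
  have hd := discrim_le_zero key
  rw [discrim] at hd
  have hB2 : B ^ 2 ≤ A * C := by nlinarith
  have hle : B ≤ Real.sqrt (A * C) := by
    rcases le_or_gt B 0 with h | h
    · exact h.trans (Real.sqrt_nonneg _)
    · nlinarith [Real.sq_sqrt (mul_nonneg hA hC), Real.sqrt_nonneg (A * C),
        sq_nonneg (B - Real.sqrt (A * C))]
  rwa [← Real.sqrt_mul hA]

lemma pow4_add_le (x y : ℝ) (hx : 0 ≤ x) (hy : 0 ≤ y) :
    (x + y) ^ 4 ≤ 8 * (x ^ 4 + y ^ 4) := by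
  nlinarith [sq_nonneg (x - y), sq_nonneg (x + y), sq_nonneg (x ^ 2 - y ^ 2), sq_nonneg (x*y)]

lemma exp_four_mul (a : ℝ) : rexp (4 * a) = rexp a ^ 4 := by
  rw [show (4:ℝ) * a = a * (4:ℕ) by push_cast; ring, Real.exp_mul, Real.rpow_natCast]

theorem gaussian_exp_diff_L2 {Ω : Type*} [MeasurableSpace Ω]
    (P : Measure Ω) [IsProbabilityMeasure P]
    (X Y : Ω → ℝ) (hX : Measurable X) (hY : Measurable Y)
    (hgauss : ∀ c₁ c₂ : ℝ, ∃ v : NNReal,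
      P.map (fun ω => c₁ * X ω + c₂ * Y ω) = gaussianReal 0 v) :
    ∫ ω, |Real.exp (X ω) - Real.exp (Y ω)| ^ 2 ∂P
      ≤ (Real.sqrt 3 / 4) * (∫ ω, |X ω - Y ω| ^ 2 ∂P) *
          Real.sqrt (8 * Real.exp (8 * ∫ ω, (X ω) ^ 2 ∂P) +
                     8 * Real.exp (8 * ∫ ω, (Y ω) ^ 2 ∂P)) := by
  -- set up the three Gaussian laws
  obtain ⟨vX, hvX⟩ := hgauss 1 0
  obtain ⟨vY, hvY⟩ := hgauss 0 1
  obtain ⟨vZ, hvZ⟩ := hgauss 1 (-1)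
  set Z : Ω → ℝ := fun ω => X ω - Y ω with hZdef
  have hZm : Measurable Z := hX.sub hY
  have hmapX : P.map X = gaussianReal 0 vX := by
    rw [show X = (fun ω => 1 * X ω + 0 * Y ω) by funext ω; ring]; exact hvX
  have hmapY : P.map Y = gaussianReal 0 vY := by
    rw [show Y = (fun ω => 0 * X ω + 1 * Y ω) by funext ω; ring]; exact hvY
  have hmapZ : P.map Z = gaussianReal 0 vZ := by
    rw [show Z = (fun ω => 1 * X ω + (-1) * Y ω) by funext ω; simp [hZdef]; ring]; exact hvZ
  -- transfer integrals and integrability through the maps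
  have keyI : ∀ (W : Ω → ℝ), Measurable W → ∀ (v : ℝ≥0), P.map W = gaussianReal 0 v →
      ∀ (f : ℝ → ℝ), Measurable f →
        ∫ ω, f (W ω) ∂P = ∫ x, f x ∂(gaussianReal 0 v) := by
    intro W hW v hmap f hf
    rw [← hmap, integral_map hW.aemeasurable hf.aestronglyMeasurable]
  have keyInt : ∀ (W : Ω → ℝ), Measurable W → ∀ (v : ℝ≥0), P.map W = gaussianReal 0 v →
      ∀ (f : ℝ → ℝ), Measurable f → Integrable f (gaussianReal 0 v) →
        Integrable (fun ω => f (W ω)) P := by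
    intro W hW v hmap f hf hint
    have := (integrable_map_measure hf.aestronglyMeasurable hW.aemeasurable).mp
      (hmap ▸ hint)
    exact this
  have hX2 : ∫ ω, (X ω) ^ 2 ∂P = vX :=
    (keyI X hX vX hmapX (fun x => x ^ 2) (by fun_prop)).trans (integral_sq_gaussianReal vX)
  have hY2 : ∫ ω, (Y ω) ^ 2 ∂P = vY :=
    (keyI Y hY vY hmapY (fun x => x ^ 2) (by fun_prop)).trans (integral_sq_gaussianReal vY)
  have hZ2 : ∫ ω, (Z ω) ^ 2 ∂P = vZ :=
    (keyI Z hZm vZ hmapZ (fun x => x ^ 2) (by fun_prop)).trans (integral_sq_gaussianReal vZ)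
  have hZ4 : ∫ ω, (Z ω) ^ 4 ∂P = 3 * (vZ:ℝ) ^ 2 :=
    (keyI Z hZm vZ hmapZ (fun x => x ^ 4) (by fun_prop)).trans (integral_pow4_gaussianReal vZ)
  have hEX : ∫ ω, rexp (4 * X ω) ∂P = rexp (8 * vX) := by
    rw [keyI X hX vX hmapX (fun x => rexp (4 * x)) (by fun_prop),
      integral_exp_gaussianReal 4 vX]
    norm_num
    ring
  have hEY : ∫ ω, rexp (4 * Y ω) ∂P = rexp (8 * vY) := by
    rw [keyI Y hY vY hmapY (fun x => rexp (4 * x)) (by fun_prop),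
      integral_exp_gaussianReal 4 vY]
    norm_num
    ring
  have intZ2 : Integrable (fun ω => (Z ω) ^ 2) P := by
    have h := integrable_even_pow_gaussianReal vZ 1
    simp only [show 2*1 = 2 from rfl] at h
    exact keyInt Z hZm vZ hmapZ (fun x => x ^ 2) (by fun_prop) h
  have intZ4 : Integrable (fun ω => (Z ω) ^ 4) P := by
    have h := integrable_even_pow_gaussianReal vZ 2
    simp only [show 2*2 = 4 from rfl] at h
    exact keyInt Z hZm vZ hmapZ (fun x => x ^ 4) (by fun_prop) h
  have intE4X : Integrable (fun ω => rexp (4 * X ω)) P :=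
    keyInt X hX vX hmapX (fun x => rexp (4 * x)) (by fun_prop)
      (integrable_exp_gaussianReal 4 vX)
  have intE4Y : Integrable (fun ω => rexp (4 * Y ω)) P :=
    keyInt Y hY vY hmapY (fun x => rexp (4 * x)) (by fun_prop)
      (integrable_exp_gaussianReal 4 vY)
  -- notation for Cauchy-Schwarz
  set f : Ω → ℝ := fun ω => (Z ω) ^ 2 with hfdef
  set g : Ω → ℝ := fun ω => (rexp (X ω) + rexp (Y ω)) ^ 2 with hgdef
  have hg4 : ∀ ω, g ω ^ 2 ≤ 8 * rexp (4 * X ω) + 8 * rexp (4 * Y ω) := by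
    intro ω
    calc g ω ^ 2 = (rexp (X ω) + rexp (Y ω)) ^ 4 := by show (_ ^ 2) ^ 2 = _; ring
      _ ≤ 8 * (rexp (X ω) ^ 4 + rexp (Y ω) ^ 4) :=
          pow4_add_le _ _ (Real.exp_pos _).le (Real.exp_pos _).le
      _ = 8 * rexp (4 * X ω) + 8 * rexp (4 * Y ω) := by
          rw [exp_four_mul, exp_four_mul]; ring
  have hgm : Measurable g := by
    apply Measurable.pow_const (hX.exp.add hY.exp)
  have hfm : Measurable f := by
    apply Measurable.pow_const hZm
  have intg2 : Integrable (fun ω => g ω ^ 2) P := by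
    refine Integrable.mono' (((intE4X.const_mul 8).add (intE4Y.const_mul 8)))
      ((hgm.pow_const 2).aestronglyMeasurable) (Filter.Eventually.of_forall fun ω => ?_)
    rw [Real.norm_eq_abs, abs_of_nonneg (by positivity)]
    exact hg4 ω
  have intf2 : Integrable (fun ω => f ω ^ 2) P := by
    refine intZ4.congr (Filter.Eventually.of_forall fun ω => ?_)
    rw [hfdef]; ring
  have intfg : Integrable (fun ω => f ω * g ω) P := by
    refine Integrable.mono' ((intf2.add intg2).div_const 2)
      ((hfm.mul hgm).aestronglyMeasurable) (Filter.Eventually.of_forall fun ω => ?_)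
    rw [Real.norm_eq_abs, abs_of_nonneg (by positivity)]
    show f ω * g ω ≤ (f ω ^ 2 + g ω ^ 2) / 2
    nlinarith [sq_nonneg (f ω - g ω)]
  -- pointwise bound
  have hpt : ∀ ω, |rexp (X ω) - rexp (Y ω)| ^ 2 ≤ (1/4) * (f ω * g ω) := by
    intro ω
    have h := abs_exp_sub_exp (X ω) (Y ω)
    calc |rexp (X ω) - rexp (Y ω)| ^ 2
        ≤ (|X ω - Y ω| * (rexp (X ω) + rexp (Y ω)) / 2) ^ 2 := by
          apply pow_le_pow_left₀ (abs_nonneg _) h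
      _ = (1/4) * (f ω * g ω) := by
          rw [div_pow, mul_pow, sq_abs, hfdef, hgdef]; ring
  -- assemble
  have step1 : ∫ ω, |rexp (X ω) - rexp (Y ω)| ^ 2 ∂P
      ≤ (1/4) * ∫ ω, f ω * g ω ∂P := by
    rw [← integral_const_mul]
    exact integral_mono_of_nonneg (Filter.Eventually.of_forall fun ω => by positivity)
      (intfg.const_mul _) (Filter.Eventually.of_forall hpt)
  have step2 : ∫ ω, f ω * g ω ∂P
      ≤ Real.sqrt (∫ ω, f ω ^ 2 ∂P) * Real.sqrt (∫ ω, g ω ^ 2 ∂P) :=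
    cs_integral P f g intf2 intg2 intfg
  have hsf : Real.sqrt (∫ ω, f ω ^ 2 ∂P) = Real.sqrt 3 * vZ := by
    have : ∫ ω, f ω ^ 2 ∂P = 3 * (vZ:ℝ) ^ 2 := by
      rw [← hZ4]
      refine integral_congr_ae (Filter.Eventually.of_forall fun ω => ?_)
      show ((Z ω) ^ 2) ^ 2 = Z ω ^ 4
      ring
    rw [this, Real.sqrt_mul (by norm_num), Real.sqrt_sq vZ.coe_nonneg]
  have hsg : Real.sqrt (∫ ω, g ω ^ 2 ∂P)
      ≤ Real.sqrt (8 * rexp (8 * vX) + 8 * rexp (8 * vY)) := by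
    apply Real.sqrt_le_sqrt
    calc ∫ ω, g ω ^ 2 ∂P
        ≤ ∫ ω, (8 * rexp (4 * X ω) + 8 * rexp (4 * Y ω)) ∂P :=
          integral_mono intg2 ((intE4X.const_mul 8).add (intE4Y.const_mul 8)) hg4
      _ = 8 * rexp (8 * vX) + 8 * rexp (8 * vY) := by
          rw [integral_add (intE4X.const_mul 8) (intE4Y.const_mul 8),
            integral_const_mul, integral_const_mul, hEX, hEY]
  have habs : ∀ ω, |rexp (X ω) - rexp (Y ω)| ^ 2 = |Real.exp (X ω) - Real.exp (Y ω)| ^ 2 :=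
    fun ω => rfl
  have hZabs : ∫ ω, |X ω - Y ω| ^ 2 ∂P = (vZ:ℝ) := by
    rw [← hZ2]
    refine integral_congr_ae (Filter.Eventually.of_forall fun ω => ?_)
    show |X ω - Y ω| ^ 2 = (X ω - Y ω) ^ 2
    rw [sq_abs]
  rw [hZabs, hX2, hY2]
  calc ∫ ω, |Real.exp (X ω) - Real.exp (Y ω)| ^ 2 ∂P
      ≤ (1/4) * ∫ ω, f ω * g ω ∂P := step1
    _ ≤ (1/4) * (Real.sqrt (∫ ω, f ω ^ 2 ∂P) * Real.sqrt (∫ ω, g ω ^ 2 ∂P)) := by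
        apply mul_le_mul_of_nonneg_left step2 (by norm_num)
    _ ≤ (1/4) * ((Real.sqrt 3 * vZ) * Real.sqrt (8 * rexp (8 * vX) + 8 * rexp (8 * vY))) := by
        rw [hsf]
        apply mul_le_mul_of_nonneg_left _ (by norm_num)
        exact mul_le_mul_of_nonneg_left hsg (by positivity)
    _ = Real.sqrt 3 / 4 * vZ * Real.sqrt (8 * rexp (8 * vX) + 8 * rexp (8 * vY)) := by
        ring
end

section
/- For every H ∈ (0,1) and T > 0, ∫₀ᵀ ∫₀ᵀ (s^{2H} + t^{2H} − |t − s|^{2H})/2 ds dt = T^{2H+2}/(2H+2). -/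
open intervalIntegral Real

theorem fbm_cov_double_integral (H T : ℝ) (hH : H ∈ Set.Ioo (0:ℝ) 1) (hT : 0 < T) :
    ∫ t in (0:ℝ)..T, ∫ s in (0:ℝ)..T,
        (s ^ (2*H) + t ^ (2*H) - |t - s| ^ (2*H)) / 2
      = T ^ (2*H + 2) / (2*H + 2) := by
  obtain ⟨hH0, hH1⟩ := hH
  obtain ⟨a, ha_def⟩ : ∃ a : ℝ, a = 2 * H := ⟨2 * H, rfl⟩
  simp only [← ha_def]
  have ha : 0 < a := by rw [ha_def]; positivity
  have ha1 : (0:ℝ) < a + 1 := by linarith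
  have ha2 : (0:ℝ) < a + 2 := by linarith
  have hcont : Continuous fun x : ℝ => x ^ a := Real.continuous_rpow_const ha.le
  -- inner integral
  have inner : ∀ t ∈ Set.uIcc (0:ℝ) T,
      (∫ s in (0:ℝ)..T, (s ^ a + t ^ a - |t - s| ^ a) / 2)
        = (T ^ (a+1) / (a+1) + t ^ a * T - t ^ (a+1) / (a+1)
            - (T - t) ^ (a+1) / (a+1)) / 2 := by
    intro t ht
    rw [Set.uIcc_of_le hT.le] at ht
    obtain ⟨ht0, htT⟩ := ht
    have hiabs : IntervalIntegrable (fun s => |t - s| ^ a) MeasureTheory.volume 0 T :=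
      ((hcont.comp (continuous_const.sub continuous_id).abs)).intervalIntegrable 0 T
    have hiabs1 : IntervalIntegrable (fun s => |t - s| ^ a) MeasureTheory.volume 0 t :=
      ((hcont.comp (continuous_const.sub continuous_id).abs)).intervalIntegrable 0 t
    have hiabs2 : IntervalIntegrable (fun s => |t - s| ^ a) MeasureTheory.volume t T :=
      ((hcont.comp (continuous_const.sub continuous_id).abs)).intervalIntegrable t T
    have hirpow : IntervalIntegrable (fun s : ℝ => s ^ a) MeasureTheory.volume 0 T :=
      intervalIntegral.intervalIntegrable_rpow (Or.inl ha.le)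
    have e1 : (∫ s in (0:ℝ)..t, |t - s| ^ a) = t ^ (a+1) / (a+1) := by
      rw [intervalIntegral.integral_congr (g := fun s => (t - s) ^ a)
        (fun s hs => by
          rw [Set.uIcc_of_le ht0] at hs
          rw [abs_of_nonneg (by linarith [hs.2])])]
      rw [intervalIntegral.integral_comp_sub_left (fun x => x ^ a) t]
      simp only [sub_self, sub_zero]
      rw [integral_rpow (Or.inl (by linarith)), Real.zero_rpow (by linarith)]
      ring
    have e2 : (∫ s in t..T, |t - s| ^ a) = (T - t) ^ (a+1) / (a+1) := by
      rw [intervalIntegral.integral_congr (g := fun s => (s - t) ^ a)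
        (fun s hs => by
          rw [Set.uIcc_of_le htT] at hs
          rw [abs_sub_comm, abs_of_nonneg (by linarith [hs.1])])]
      rw [intervalIntegral.integral_comp_sub_right (fun x => x ^ a) t]
      simp only [sub_self]
      rw [integral_rpow (Or.inl (by linarith)), Real.zero_rpow (by linarith)]
      ring
    have eabs : (∫ s in (0:ℝ)..T, |t - s| ^ a)
        = t ^ (a+1) / (a+1) + (T - t) ^ (a+1) / (a+1) := by
      rw [← intervalIntegral.integral_add_adjacent_intervals hiabs1 hiabs2, e1, e2]
    have split : (∫ s in (0:ℝ)..T, (s ^ a + t ^ a - |t - s| ^ a) / 2)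
        = ((∫ s in (0:ℝ)..T, s ^ a) + (∫ s in (0:ℝ)..T, (t:ℝ) ^ a)
          - ∫ s in (0:ℝ)..T, |t - s| ^ a) / 2 := by
      rw [intervalIntegral.integral_div, intervalIntegral.integral_sub
        (hirpow.add (intervalIntegrable_const)) hiabs,
        intervalIntegral.integral_add hirpow intervalIntegrable_const]
    rw [split, eabs, integral_rpow (Or.inl (by linarith)),
      intervalIntegral.integral_const, Real.zero_rpow (by linarith)]
    simp only [smul_eq_mul, sub_zero]
    ring
  rw [intervalIntegral.integral_congr inner]
  -- outer integral
  have i1 : IntervalIntegrable (fun t : ℝ => t ^ a * T) MeasureTheory.volume 0 T :=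
    (intervalIntegral.intervalIntegrable_rpow (Or.inl ha.le)).mul_const T
  have i2 : IntervalIntegrable (fun t : ℝ => t ^ (a+1) / (a+1)) MeasureTheory.volume 0 T :=
    (intervalIntegral.intervalIntegrable_rpow (Or.inl ha1.le)).div_const _
  have i3 : IntervalIntegrable (fun t : ℝ => (T - t) ^ (a+1) / (a+1)) MeasureTheory.volume 0 T :=
    (((Real.continuous_rpow_const ha1.le).comp (continuous_const.sub continuous_id)).div_const
      _).intervalIntegrable 0 T
  have e3 : (∫ t in (0:ℝ)..T, (T - t) ^ (a+1) / (a+1)) = T ^ (a+2) / ((a+1)*(a+2)) := by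
    rw [intervalIntegral.integral_div,
      intervalIntegral.integral_comp_sub_left (fun x => x ^ (a+1)) T]
    simp only [sub_self, sub_zero]
    rw [integral_rpow (Or.inl (by linarith)), Real.zero_rpow (by linarith)]
    rw [show a + 1 + 1 = a + 2 by ring, sub_zero, div_div, mul_comm]
  have e4 : (∫ t in (0:ℝ)..T, t ^ (a+1) / (a+1)) = T ^ (a+2) / ((a+1)*(a+2)) := by
    rw [intervalIntegral.integral_div, integral_rpow (Or.inl (by linarith)),
      Real.zero_rpow (by linarith), show a + 1 + 1 = a + 2 by ring, sub_zero, div_div,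
      mul_comm]
  have e5 : (∫ t in (0:ℝ)..T, t ^ a * T) = T ^ (a+2) / (a+1) := by
    rw [intervalIntegral.integral_mul_const, integral_rpow (Or.inl (by linarith)),
      Real.zero_rpow (by linarith), sub_zero, show a + 2 = (a+1) + 1 by ring,
      Real.rpow_add hT (a+1) 1, Real.rpow_one, div_mul_eq_mul_div]
  have splitout : (∫ t in (0:ℝ)..T,
      (T ^ (a+1) / (a+1) + t ^ a * T - t ^ (a+1) / (a+1) - (T - t) ^ (a+1) / (a+1)) / 2)
      = ((∫ t in (0:ℝ)..T, (T ^ (a+1) / (a+1) : ℝ)) + (∫ t in (0:ℝ)..T, t ^ a * T)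
        - (∫ t in (0:ℝ)..T, t ^ (a+1) / (a+1))
        - ∫ t in (0:ℝ)..T, (T - t) ^ (a+1) / (a+1)) / 2 := by
    rw [intervalIntegral.integral_div,
      intervalIntegral.integral_sub ((intervalIntegrable_const.add i1).sub i2) i3,
      intervalIntegral.integral_sub (intervalIntegrable_const.add i1) i2,
      intervalIntegral.integral_add intervalIntegrable_const i1]
  rw [splitout, e3, e4, e5, intervalIntegral.integral_const]
  simp only [smul_eq_mul, sub_zero]
  have hTa1 : T * (T ^ (a+1) / (a+1)) = T ^ (a+2) / (a+1) := by
    rw [show a + 2 = (a+1) + 1 by ring, Real.rpow_add hT (a+1) 1, Real.rpow_one]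
    ring
  rw [hTa1]
  generalize T ^ (a+2) = X
  field_simp
  ring
end

section
/- Let H ∈ (0,1), T > 0, a ∈ ℝ, σ > 0, and let K : [0,T] × [0,T] → ℝ be a nonnegative measurable function with K(s,r) = 0 whenever r > s, satisfying ∫₀^{min(s,t)} K(s,r) K(t,r) dr = (s^{2H} + t^{2H} − |t − s|^{2H})/2 for all s, t ∈ [0,T]. Then for every continuous function b : [0,T] → ℝ, ∫₀ᵀ (∫_rᵀ σ K(s,r) e^{a s + σ b(s)} ds)² dr ≥ (T^{2H+2}/(2H+2)) · σ² · e^{−2|a|T + 2σ min_{s∈[0,T]} b(s)}. -/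
open Set
open MeasureTheory ENNReal

private lemma inner_ioc (T r : ℝ) (hr : 0 ≤ r) (g : ℝ → ENNReal) :
    ∫⁻ s in Ioc r T, g s = ∫⁻ s, (Ioi r).indicator g s ∂(volume.restrict (Ioc (0:ℝ) T)) := by
  have hset : Ioi r ∩ Ioc 0 T = Ioc r T := by
    ext x; simp only [mem_inter_iff, mem_Ioi, mem_Ioc]
    exact ⟨fun h => ⟨h.1, h.2.2⟩, fun h => ⟨h.1, ⟨hr.trans_lt h.1, h.2⟩⟩⟩
  rw [lintegral_indicator measurableSet_Ioi, Measure.restrict_restrict measurableSet_Ioi, hset]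

private lemma swap2 (T : ℝ) (f : ℝ → ℝ → ENNReal)
    (hf : Measurable (Function.uncurry f)) :
    ∫⁻ r in Ioc 0 T, ∫⁻ s in Ioc r T, f s r
      = ∫⁻ s in Ioc 0 T, ∫⁻ r in Ioo 0 s, f s r := by
  set μ := volume.restrict (Ioc (0:ℝ) T) with hμ
  set G : ℝ → ℝ → ENNReal := fun r s => if r < s then f s r else 0 with hG
  have hGmeas : Measurable (fun q : ℝ × ℝ => G q.1 q.2) := by
    apply Measurable.ite
    · exact measurableSet_lt measurable_fst measurable_snd
    · exact hf.comp (measurable_snd.prodMk measurable_fst)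
    · exact measurable_const
  have step1 : ∀ r ∈ Ioc (0:ℝ) T, ∫⁻ s in Ioc r T, f s r = ∫⁻ s, G r s ∂μ := by
    intro r hr
    rw [inner_ioc T r hr.1.le]
    refine lintegral_congr fun s => ?_
    by_cases h : r < s <;> simp [hG, indicator_apply, h, mem_Ioi]
  rw [setLIntegral_congr_fun measurableSet_Ioc step1]
  rw [show (∫⁻ r in Ioc 0 T, ∫⁻ s, G r s ∂μ) = ∫⁻ r, ∫⁻ s, G r s ∂μ ∂μ from rfl,
    lintegral_lintegral_swap hGmeas.aemeasurable]
  apply setLIntegral_congr_fun measurableSet_Ioc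
  intro s hs
  dsimp only
  have hpt : ∀ r : ℝ, G r s = (Iio s).indicator (fun r => f s r) r := by
    intro r
    by_cases h : r < s <;> simp [hG, indicator_apply, h, mem_Iio]
  have hset : Iio s ∩ Ioc 0 T = Ioo 0 s := by
    ext x
    simp only [mem_inter_iff, mem_Iio, mem_Ioc, mem_Ioo]
    exact ⟨fun h => ⟨h.2.1, h.1⟩, fun h => ⟨h.2, h.1, h.2.le.trans hs.2⟩⟩
  rw [lintegral_congr hpt, hμ, lintegral_indicator measurableSet_Iio,
    Measure.restrict_restrict measurableSet_Iio, hset]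

private lemma swap3 (T : ℝ) (f : ℝ → ℝ → ENNReal)
    (hf : Measurable (Function.uncurry f)) :
    ∫⁻ r in Ioc 0 T, (∫⁻ s in Ioc r T, f s r) * (∫⁻ t in Ioc r T, f t r)
      = ∫⁻ s in Ioc 0 T, ∫⁻ t in Ioc 0 T, ∫⁻ r in Ioc 0 (min s t), f s r * f t r := by
  set μ := volume.restrict (Ioc (0:ℝ) T) with hμ
  have hfm : ∀ (c : ℝ), Measurable (fun x : ℝ => f x c) := by
    intro c
    exact hf.comp (measurable_id.prodMk measurable_const)
  set G : ℝ → ℝ → ℝ → ENNReal := fun r s t =>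
    if r < s ∧ r < t then f s r * f t r else 0 with hG
  have hGmeas : Measurable (fun q : ℝ × ℝ × ℝ => G q.1 q.2.1 q.2.2) := by
    apply Measurable.ite
    · exact MeasurableSet.inter (measurableSet_lt measurable_fst (measurable_fst.comp measurable_snd))
        (measurableSet_lt measurable_fst (measurable_snd.comp measurable_snd))
    · exact ((hf.comp ((measurable_fst.comp measurable_snd).prodMk measurable_fst)).mul
        (hf.comp ((measurable_snd.comp measurable_snd).prodMk measurable_fst)))
    · exact measurable_const
  have step1 : ∀ r ∈ Ioc (0:ℝ) T,
      (∫⁻ s in Ioc r T, f s r) * (∫⁻ t in Ioc r T, f t r)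
        = ∫⁻ s, ∫⁻ t, G r s t ∂μ ∂μ := by
    intro r hr
    rw [inner_ioc T r hr.1.le]
    rw [← lintegral_lintegral_mul ((hfm r).indicator measurableSet_Ioi).aemeasurable
      ((hfm r).indicator measurableSet_Ioi).aemeasurable]
    refine lintegral_congr fun s => lintegral_congr fun t => ?_
    by_cases h1 : r < s <;> by_cases h2 : r < t <;>
      simp [hG, indicator_apply, h1, h2, mem_Ioi]
  rw [setLIntegral_congr_fun measurableSet_Ioc step1]
  have m1 : Measurable (fun p : ℝ × ℝ => ∫⁻ t, G p.1 p.2 t ∂μ) := by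
    exact Measurable.lintegral_prod_right'
      (f := fun q : (ℝ × ℝ) × ℝ => G q.1.1 q.1.2 q.2)
      (hGmeas.comp ((measurable_fst.comp measurable_fst).prodMk
        ((measurable_snd.comp measurable_fst).prodMk measurable_snd)))
  have sw1 : ∫⁻ r, ∫⁻ s, (∫⁻ t, G r s t ∂μ) ∂μ ∂μ
      = ∫⁻ s, ∫⁻ r, (∫⁻ t, G r s t ∂μ) ∂μ ∂μ :=
    lintegral_lintegral_swap m1.aemeasurable
  have sw2 : ∀ s : ℝ, ∫⁻ r, ∫⁻ t, G r s t ∂μ ∂μ = ∫⁻ t, ∫⁻ r, G r s t ∂μ ∂μ := by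
    intro s
    apply lintegral_lintegral_swap
    exact (hGmeas.comp (measurable_fst.prodMk
      (measurable_const.prodMk measurable_snd))).aemeasurable
  calc ∫⁻ r in Ioc 0 T, ∫⁻ s, ∫⁻ t, G r s t ∂μ ∂μ
      = ∫⁻ s, ∫⁻ t, ∫⁻ r, G r s t ∂μ ∂μ ∂μ := by
        rw [show (∫⁻ r in Ioc 0 T, ∫⁻ s, ∫⁻ t, G r s t ∂μ ∂μ)
          = ∫⁻ r, ∫⁻ s, ∫⁻ t, G r s t ∂μ ∂μ ∂μ from rfl, sw1]
        exact lintegral_congr fun s => sw2 s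
    _ = ∫⁻ s in Ioc 0 T, ∫⁻ t in Ioc 0 T, ∫⁻ r in Ioc 0 (min s t), f s r * f t r := by
        apply setLIntegral_congr_fun measurableSet_Ioc
        intro s hs
        apply setLIntegral_congr_fun measurableSet_Ioc
        intro t _
        dsimp only
        have hpt : ∀ r : ℝ, G r s t = (Iio s ∩ Iio t).indicator (fun r => f s r * f t r) r := by
          intro r
          by_cases h1 : r < s <;> by_cases h2 : r < t <;>
            simp [hG, indicator_apply, h1, h2, mem_Iio]
        rw [lintegral_congr hpt, hμ,
          lintegral_indicator (measurableSet_Iio.inter measurableSet_Iio),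
          Measure.restrict_restrict (measurableSet_Iio.inter measurableSet_Iio)]
        rw [show (Iio s ∩ Iio t) ∩ Ioc 0 T = Ioo 0 (min s t) by
          ext x
          simp only [mem_inter_iff, mem_Iio, mem_Ioc, mem_Ioo, lt_min_iff]
          constructor
          · rintro ⟨⟨h1, h2⟩, h3, _⟩; exact ⟨h3, h1, h2⟩
          · rintro ⟨h1, h2, h3⟩; exact ⟨⟨h2, h3⟩, h1, h2.le.trans hs.2⟩]
        exact setLIntegral_congr Ioo_ae_eq_Ioc

private lemma rpow_cont {p : ℝ} (hp : 0 < p) : Continuous fun x : ℝ => x ^ p :=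
  continuous_iff_continuousAt.mpr fun x => Real.continuousAt_rpow_const x p (Or.inr hp.le)

private lemma comp1 (H T : ℝ) (hH : 0 < H) (s : ℝ) (hs : s ∈ Icc (0:ℝ) T) :
    ∫ t in (0:ℝ)..T, (s ^ (2*H) + t ^ (2*H) - |t - s| ^ (2*H)) / 2
      = (T ^ (2*H+1)/(2*H+1) + T * s ^ (2*H) - s ^ (2*H+1)/(2*H+1)
          - (T-s) ^ (2*H+1)/(2*H+1)) / 2 := by
  have h2H : (0:ℝ) < 2*H := by linarith
  have hc1 : Continuous fun t : ℝ => t ^ (2*H) := rpow_cont h2H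
  have hc2 : Continuous fun t : ℝ => |t - s| ^ (2*H) :=
    ((continuous_id.sub continuous_const).abs).rpow_const fun x => Or.inr h2H.le
  have hi1 : IntervalIntegrable (fun t : ℝ => s ^ (2*H)) volume 0 T :=
    intervalIntegrable_const
  have hi2 : IntervalIntegrable (fun t : ℝ => t ^ (2*H)) volume 0 T :=
    hc1.intervalIntegrable 0 T
  have e0 : ∫ t in (0:ℝ)..T, t ^ (2*H) = T ^ (2*H+1)/(2*H+1) := by
    rw [integral_rpow (Or.inl (by linarith))]
    rw [Real.zero_rpow (by linarith : (2*H+1) ≠ 0)]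
    ring
  have e1 : ∫ t in (0:ℝ)..s, |t - s| ^ (2*H) = s ^ (2*H+1)/(2*H+1) := by
    rw [intervalIntegral.integral_congr (g := fun t => (s - t) ^ (2*H))
      (fun t ht => by
        rw [uIcc_of_le hs.1] at ht
        rw [abs_of_nonpos (by linarith [ht.2] : t - s ≤ 0)]; ring_nf)]
    rw [intervalIntegral.integral_comp_sub_left (fun x => x ^ (2*H)) s]
    simp only [sub_self, sub_zero]
    rw [integral_rpow (Or.inl (by linarith))]
    rw [Real.zero_rpow (by linarith : (2*H+1) ≠ 0)]
    ring
  have e2 : ∫ t in s..T, |t - s| ^ (2*H) = (T-s) ^ (2*H+1)/(2*H+1) := by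
    rw [intervalIntegral.integral_congr (g := fun t => (t - s) ^ (2*H))
      (fun t ht => by
        rw [uIcc_of_le hs.2] at ht
        rw [abs_of_nonneg (by linarith [ht.1] : (0:ℝ) ≤ t - s)])]
    rw [intervalIntegral.integral_comp_sub_right (fun x => x ^ (2*H)) s]
    simp only [sub_self]
    rw [integral_rpow (Or.inl (by linarith))]
    rw [Real.zero_rpow (by linarith : (2*H+1) ≠ 0)]
    ring
  have e3 : ∫ t in (0:ℝ)..T, |t - s| ^ (2*H) = s ^ (2*H+1)/(2*H+1) + (T-s) ^ (2*H+1)/(2*H+1) := by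
    rw [← intervalIntegral.integral_add_adjacent_intervals
      (hc2.intervalIntegrable 0 s) (hc2.intervalIntegrable s T), e1, e2]
  rw [intervalIntegral.integral_div, intervalIntegral.integral_sub (hi1.add hi2)
    (hc2.intervalIntegrable 0 T), intervalIntegral.integral_add hi1 hi2,
    intervalIntegral.integral_const, e0, e3]
  simp only [smul_eq_mul, sub_zero]
  ring

private lemma comp2 (H T : ℝ) (hH : 0 < H) (hT : 0 < T) :
    ∫ s in (0:ℝ)..T, (T ^ (2*H+1)/(2*H+1) + T * s ^ (2*H) - s ^ (2*H+1)/(2*H+1)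
        - (T-s) ^ (2*H+1)/(2*H+1)) / 2
      = T ^ (2*H+2)/(2*H+2) := by
  have h2H : (0:ℝ) < 2*H := by linarith
  have hc1 : Continuous fun t : ℝ => t ^ (2*H) := rpow_cont h2H
  have hcα : Continuous fun t : ℝ => t ^ (2*H+1) := rpow_cont (by linarith)
  have hcT : Continuous fun t : ℝ => (T - t) ^ (2*H+1) :=
    ((continuous_const.sub continuous_id).rpow_const fun x => Or.inr (by linarith))
  have eα : ∫ s in (0:ℝ)..T, s ^ (2*H+1) = T ^ (2*H+2)/(2*H+2) := by
    rw [integral_rpow (Or.inl (by linarith))]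
    rw [Real.zero_rpow (by linarith : (2*H+1+1) ≠ 0)]
    rw [show (2*H+1+1) = 2*H+2 by ring]
    ring
  have e2H : ∫ s in (0:ℝ)..T, s ^ (2*H) = T ^ (2*H+1)/(2*H+1) := by
    rw [integral_rpow (Or.inl (by linarith))]
    rw [Real.zero_rpow (by linarith : (2*H+1) ≠ 0)]
    ring
  have eT : ∫ s in (0:ℝ)..T, (T - s) ^ (2*H+1) = T ^ (2*H+2)/(2*H+2) := by
    rw [intervalIntegral.integral_comp_sub_left (fun x => x ^ (2*H+1)) T]
    simp only [sub_self, sub_zero]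
    exact eα
  have hTT : T * (T ^ (2*H+1)) = T ^ (2*H+2) := by
    have h := Real.rpow_add hT (2*H+1) 1
    rw [Real.rpow_one] at h
    rw [show (2*H+2) = 2*H+1+1 by ring, h]; ring
  have hint1 : IntervalIntegrable (fun s : ℝ => T ^ (2*H+1)/(2*H+1) + T * s ^ (2*H)) volume 0 T :=
    intervalIntegrable_const.add ((hc1.intervalIntegrable 0 T).const_mul T)
  rw [intervalIntegral.integral_div,
    intervalIntegral.integral_sub (hint1.sub ((hcα.intervalIntegrable 0 T).div_const _))
      ((hcT.intervalIntegrable 0 T).div_const _),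
    intervalIntegral.integral_sub hint1 ((hcα.intervalIntegrable 0 T).div_const _),
    intervalIntegral.integral_add intervalIntegrable_const
      ((hc1.intervalIntegrable 0 T).const_mul T),
    intervalIntegral.integral_const, intervalIntegral.integral_const_mul,
    intervalIntegral.integral_div, intervalIntegral.integral_div, e2H, eα, eT]
  simp only [smul_eq_mul, sub_zero]
  rw [show T * (T ^ (2*H+1)/(2*H+1)) = T ^ (2*H+2)/(2*H+1) by rw [← hTT]; ring]
  have hα : (2*H+1) ≠ 0 := by linarith
  have hβ : (2*H+2) ≠ 0 := by linarith
  field_simp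
  ring

private theorem aux_main (H T σ c M : ℝ) (hH : H ∈ Set.Ioo (0:ℝ) 1) (hT : 0 < T) (hσ : 0 < σ)
    (hcpos : 0 < c)
    (K : ℝ → ℝ → ℝ)
    (hKmeas : Measurable (Function.uncurry K))
    (hKnonneg : ∀ s ∈ Icc (0:ℝ) T, ∀ r ∈ Icc (0:ℝ) T, 0 ≤ K s r)
    (hKcov : ∀ s ∈ Icc (0:ℝ) T, ∀ t ∈ Icc (0:ℝ) T,
      ∫ r in (0:ℝ)..(min s t), K s r * K t r
        = (s ^ (2*H) + t ^ (2*H) - |t - s| ^ (2*H)) / 2)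
    (g : ℝ → ℝ) (hgcont : Continuous g)
    (hgc : ∀ s ∈ Icc (0:ℝ) T, c ≤ g s) (hgM : ∀ s ∈ Icc (0:ℝ) T, g s ≤ M) :
    ∫ r in (0:ℝ)..T, (∫ s in r..T, σ * K s r * g s) ^ 2
      ≥ (T ^ (2*H + 2) / (2*H + 2)) * σ ^ 2 * c ^ 2 := by
  obtain ⟨hH1, hH2⟩ := hH
  have h2H : (0:ℝ) < 2*H := by linarith
  have hMpos : 0 < M := lt_of_lt_of_le hcpos (le_trans (hgc 0 ⟨le_refl 0, hT.le⟩)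
    (hgM 0 ⟨le_refl 0, hT.le⟩))
  have hKm2 : ∀ r, Measurable fun s => K s r :=
    fun r => hKmeas.comp (measurable_id.prodMk measurable_const)
  have hQunc : Measurable (Function.uncurry fun s r => ENNReal.ofReal (K s r)) :=
    ENNReal.measurable_ofReal.comp hKmeas
  -- covariance function
  set R : ℝ → ℝ → ℝ := fun s t => (s ^ (2*H) + t ^ (2*H) - |t - s| ^ (2*H)) / 2 with hR
  have hRpos : ∀ s ∈ Ioc (0:ℝ) T, ∀ t ∈ Ioc (0:ℝ) T, 0 < R s t := by
    intro s hs t ht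
    rcases eq_or_ne s t with rfl | hne
    · simp only [hR, sub_self, abs_zero, Real.zero_rpow h2H.ne']
      have := Real.rpow_pos_of_pos hs.1 (2*H)
      linarith
    · have habs : |t - s| < max s t := by
        rw [abs_sub_lt_iff]
        constructor
        · have := le_max_right s t; linarith [hs.1]
        · have := le_max_left s t; linarith [ht.1]
      have h1 : |t - s| ^ (2*H) < max s t ^ (2*H) :=
        Real.rpow_lt_rpow (abs_nonneg _) habs h2H
      have h2 : max s t ^ (2*H) ≤ s ^ (2*H) + t ^ (2*H) := by
        rcases max_cases s t with ⟨he, _⟩ | ⟨he, _⟩ <;> rw [he]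
        · nlinarith [Real.rpow_pos_of_pos ht.1 (2*H)]
        · nlinarith [Real.rpow_pos_of_pos hs.1 (2*H)]
      simp only [hR]
      linarith
  have hRnn : ∀ s ∈ Ioc (0:ℝ) T, ∀ t ∈ Icc (0:ℝ) T, 0 ≤ R s t := by
    intro s hs t ht
    rcases eq_or_lt_of_le ht.1 with rfl | htpos
    · simp only [hR, zero_sub, abs_neg, abs_of_nonneg hs.1.le, Real.zero_rpow h2H.ne']
      norm_num
    · exact (hRpos s hs t ⟨htpos, ht.2⟩).le
  have hRcont : ∀ s, Continuous (R s) := by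
    intro s
    apply Continuous.div_const
    apply Continuous.sub
    · exact continuous_const.add (rpow_cont h2H)
    · exact ((continuous_id.sub continuous_const).abs).rpow_const fun x => Or.inr h2H.le
  -- covariance identity as lower integral
  have hcov : ∀ s ∈ Ioc (0:ℝ) T, ∀ t ∈ Ioc (0:ℝ) T,
      ∫⁻ r in Ioc 0 (min s t), ENNReal.ofReal (K s r) * ENNReal.ofReal (K t r)
        = ENNReal.ofReal (R s t) := by
    intro s hs t ht
    have hsI : s ∈ Icc (0:ℝ) T := ⟨hs.1.le, hs.2⟩
    have htI : t ∈ Icc (0:ℝ) T := ⟨ht.1.le, ht.2⟩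
    have hmin0 : (0:ℝ) ≤ min s t := le_min hs.1.le ht.1.le
    have hminT : min s t ≤ T := (min_le_left s t).trans hs.2
    have hKc := hKcov s hsI t htI
    have hint : IntegrableOn (fun r => K s r * K t r) (Ioc 0 (min s t)) volume := by
      by_contra hni
      rw [intervalIntegral.integral_undef (fun h => hni
        ((intervalIntegrable_iff_integrableOn_Ioc_of_le hmin0).mp h))] at hKc
      exact absurd hKc.symm (ne_of_gt (hRpos s hs t ht))
    have hnn : 0 ≤ᵐ[volume.restrict (Ioc 0 (min s t))] fun r => K s r * K t r := by
      filter_upwards [ae_restrict_mem measurableSet_Ioc] with r hr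
      exact mul_nonneg (hKnonneg s hsI r ⟨hr.1.le, hr.2.trans hminT⟩)
        (hKnonneg t htI r ⟨hr.1.le, hr.2.trans hminT⟩)
    have h1 : ∫⁻ r in Ioc 0 (min s t), ENNReal.ofReal (K s r) * ENNReal.ofReal (K t r)
        = ∫⁻ r in Ioc 0 (min s t), ENNReal.ofReal (K s r * K t r) := by
      apply setLIntegral_congr_fun measurableSet_Ioc
      intro r hr
      dsimp only
      rw [ENNReal.ofReal_mul (hKnonneg s hsI r ⟨hr.1.le, hr.2.trans hminT⟩)]
    rw [h1, ← ofReal_integral_eq_lintegral_ofReal hint hnn,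
      ← intervalIntegral.integral_of_le hmin0, hKc]
  have hQsq : ∀ s ∈ Ioc (0:ℝ) T,
      ∫⁻ r in Ioc 0 s, ENNReal.ofReal (K s r) * ENNReal.ofReal (K s r)
        = ENNReal.ofReal (s ^ (2*H)) := by
    intro s hs
    have h := hcov s hs s hs
    rw [min_self] at h
    rw [h]
    congr 1
    simp only [hR, sub_self, abs_zero, Real.zero_rpow h2H.ne']
    ring
  -- a.e. integrability of sections
  set F : ℝ → ENNReal := fun r =>
    ∫⁻ s, (if r < s ∧ s ≤ T then ENNReal.ofReal (K s r) else 0) ∂volume with hFdef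
  have hFmeas : Measurable F := by
    apply Measurable.lintegral_prod_right' (f := fun p : ℝ × ℝ =>
      if p.1 < p.2 ∧ p.2 ≤ T then ENNReal.ofReal (K p.2 p.1) else 0)
    apply Measurable.ite
    · exact (measurableSet_lt measurable_fst measurable_snd).inter
        (measurableSet_le measurable_snd measurable_const)
    · exact ENNReal.measurable_ofReal.comp (hKmeas.comp (measurable_snd.prodMk measurable_fst))
    · exact measurable_const
  have hFeq : ∀ r, F r = ∫⁻ s in Ioc r T, ENNReal.ofReal (K s r) := by
    intro r
    rw [← lintegral_indicator measurableSet_Ioc]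
    refine lintegral_congr fun s => ?_
    by_cases h : r < s ∧ s ≤ T <;> simp [indicator_apply, mem_Ioc, h]
  have hfin : ∫⁻ r in Ioc (0:ℝ) T, F r ≠ ⊤ := by
    have hswap := swap2 T (fun s r => ENNReal.ofReal (K s r)) hQunc
    have e : ∫⁻ r in Ioc (0:ℝ) T, F r
        = ∫⁻ s in Ioc (0:ℝ) T, ∫⁻ r in Ioo 0 s, ENNReal.ofReal (K s r) := by
      rw [← hswap]; exact lintegral_congr hFeq
    rw [e]
    have hxle : ∀ x : ℝ≥0∞, x ≤ x * x + 1 := by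
      intro x
      rcases le_total x 1 with h | h
      · exact h.trans le_add_self
      · calc x = x * 1 := (mul_one x).symm
          _ ≤ x * x := mul_le_mul' le_rfl h
          _ ≤ x * x + 1 := le_self_add
    have hCs : ∀ s ∈ Ioc (0:ℝ) T, ∫⁻ r in Ioo 0 s, ENNReal.ofReal (K s r)
        ≤ ENNReal.ofReal (T ^ (2*H)) + ENNReal.ofReal T := by
      intro s hs
      calc ∫⁻ r in Ioo 0 s, ENNReal.ofReal (K s r)
          ≤ ∫⁻ r in Ioc 0 s, ENNReal.ofReal (K s r) :=
            lintegral_mono_set Ioo_subset_Ioc_self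
        _ ≤ ∫⁻ r in Ioc 0 s, (ENNReal.ofReal (K s r) * ENNReal.ofReal (K s r) + 1) :=
            lintegral_mono fun r => hxle _
        _ = (∫⁻ r in Ioc 0 s, ENNReal.ofReal (K s r) * ENNReal.ofReal (K s r))
              + volume (Ioc (0:ℝ) s) := by
            rw [lintegral_add_right _ measurable_const, setLIntegral_one]
        _ ≤ ENNReal.ofReal (T ^ (2*H)) + ENNReal.ofReal T := by
            apply add_le_add
            · rw [hQsq s hs]
              exact ENNReal.ofReal_le_ofReal (Real.rpow_le_rpow hs.1.le hs.2 h2H.le)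
            · rw [Real.volume_Ioc, sub_zero]
              exact ENNReal.ofReal_le_ofReal hs.2
    have hle : ∫⁻ s in Ioc (0:ℝ) T, ∫⁻ r in Ioo 0 s, ENNReal.ofReal (K s r)
        ≤ (ENNReal.ofReal (T ^ (2*H)) + ENNReal.ofReal T) * volume (Ioc (0:ℝ) T) := by
      rw [← setLIntegral_const]
      exact setLIntegral_mono measurable_const hCs
    refine ne_top_of_le_ne_top ?_ hle
    rw [Real.volume_Ioc, sub_zero]
    exact ENNReal.mul_ne_top
      (ENNReal.add_ne_top.mpr ⟨ENNReal.ofReal_ne_top, ENNReal.ofReal_ne_top⟩)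
      ENNReal.ofReal_ne_top
  have haeint : ∀ᵐ r ∂(volume.restrict (Ioc (0:ℝ) T)),
      r ∈ Ioc (0:ℝ) T ∧ IntegrableOn (fun s => K s r) (Ioc r T) volume := by
    filter_upwards [ae_lt_top hFmeas hfin, ae_restrict_mem measurableSet_Ioc] with r hfr hr
    refine ⟨hr, ?_⟩
    refine ⟨(hKm2 r).aestronglyMeasurable, ?_⟩
    rw [hasFiniteIntegral_iff_ofReal ?_]
    · rw [← hFeq r]; exact hfr
    · filter_upwards [ae_restrict_mem measurableSet_Ioc] with s hs
      exact hKnonneg s ⟨hr.1.le.trans hs.1.le, hs.2⟩ r ⟨hr.1.le, hr.2⟩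
  -- the interval-integral quantities and their measurable versions
  set J : ℝ → ℝ := fun r => ∫ s in r..T, K s r with hJdef
  set I : ℝ → ℝ := fun r => ∫ s in r..T, σ * K s r * g s with hIdef
  set J' : ℝ → ℝ := fun r => ∫ s, (if r < s ∧ s ≤ T then K s r else 0) ∂volume with hJ'def
  set I' : ℝ → ℝ := fun r => ∫ s, (if r < s ∧ s ≤ T then σ * K s r * g s else 0) ∂volume
    with hI'def
  have hJ'meas : Measurable J' := by
    have hsm : StronglyMeasurable (fun p : ℝ × ℝ =>
        if p.1 < p.2 ∧ p.2 ≤ T then K p.2 p.1 else 0) := by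
      apply Measurable.stronglyMeasurable
      apply Measurable.ite
      · exact (measurableSet_lt measurable_fst measurable_snd).inter
          (measurableSet_le measurable_snd measurable_const)
      · exact hKmeas.comp (measurable_snd.prodMk measurable_fst)
      · exact measurable_const
    exact (StronglyMeasurable.integral_prod_right' hsm).measurable
  have hI'meas : Measurable I' := by
    have hsm : StronglyMeasurable (fun p : ℝ × ℝ =>
        if p.1 < p.2 ∧ p.2 ≤ T then σ * K p.2 p.1 * g p.2 else 0) := by
      apply Measurable.stronglyMeasurable
      apply Measurable.ite
      · exact (measurableSet_lt measurable_fst measurable_snd).inter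
          (measurableSet_le measurable_snd measurable_const)
      · exact ((measurable_const.mul (hKmeas.comp
          (measurable_snd.prodMk measurable_fst))).mul
          (hgcont.measurable.comp measurable_snd))
      · exact measurable_const
    exact (StronglyMeasurable.integral_prod_right' hsm).measurable
  have hJ'eq : ∀ r, r ≤ T → J' r = J r := by
    intro r hrT
    have h : J r = ∫ s in Ioc r T, K s r := intervalIntegral.integral_of_le hrT
    rw [h, ← integral_indicator measurableSet_Ioc]
    refine integral_congr_ae (Filter.Eventually.of_forall fun s => ?_)
    by_cases h2 : r < s ∧ s ≤ T <;> simp [indicator_apply, mem_Ioc, h2]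
  have hI'eq : ∀ r, r ≤ T → I' r = I r := by
    intro r hrT
    have h : I r = ∫ s in Ioc r T, σ * K s r * g s := intervalIntegral.integral_of_le hrT
    rw [h, ← integral_indicator measurableSet_Ioc]
    refine integral_congr_ae (Filter.Eventually.of_forall fun s => ?_)
    by_cases h2 : r < s ∧ s ≤ T <;> simp [indicator_apply, mem_Ioc, h2]
  -- pointwise bounds
  have hP1 : ∀ r ∈ Icc (0:ℝ) T, 0 ≤ J r ∧ σ * c * J r ≤ I r ∧ I r ≤ σ * M * J r := by
    intro r hr
    have hrT : r ≤ T := hr.2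
    have hsub : Ioc r T ⊆ Icc 0 T := fun s hs => ⟨hr.1.trans hs.1.le, hs.2⟩
    have hKnn : ∀ s ∈ Ioc r T, 0 ≤ K s r := fun s hs => hKnonneg s (hsub hs) r hr
    have hJr : J r = ∫ s in Ioc r T, K s r := intervalIntegral.integral_of_le hrT
    have hIr : I r = ∫ s in Ioc r T, σ * K s r * g s := intervalIntegral.integral_of_le hrT
    have hgm : Measurable fun s => σ * K s r * g s :=
      (measurable_const.mul (hKm2 r)).mul hgcont.measurable
    by_cases hint : IntegrableOn (fun s => K s r) (Ioc r T) volume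
    · have hintI : IntegrableOn (fun s => σ * K s r * g s) (Ioc r T) volume := by
        apply Integrable.mono (hint.const_mul (σ * M)) hgm.aestronglyMeasurable
        filter_upwards [ae_restrict_mem measurableSet_Ioc] with s hs
        have h0K := hKnn s hs
        have hgs := hgM s (hsub hs)
        have hgs0 : c ≤ g s := hgc s (hsub hs)
        rw [Real.norm_eq_abs, Real.norm_eq_abs,
          abs_of_nonneg (mul_nonneg (mul_nonneg hσ.le h0K) (hcpos.le.trans hgs0)),
          abs_of_nonneg (mul_nonneg (mul_nonneg hσ.le hMpos.le) h0K)]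
        nlinarith [mul_le_mul_of_nonneg_left hgs (mul_nonneg hσ.le h0K)]
      refine ⟨?_, ?_, ?_⟩
      · rw [hJr]; exact setIntegral_nonneg measurableSet_Ioc hKnn
      · rw [hJr, hIr, ← integral_const_mul]
        apply setIntegral_mono_on (hint.const_mul (σ * c)) hintI measurableSet_Ioc
        intro s hs
        have h0K := hKnn s hs
        have hgs0 := hgc s (hsub hs)
        nlinarith [mul_le_mul_of_nonneg_left hgs0 (mul_nonneg hσ.le h0K)]
      · rw [hJr, hIr, ← integral_const_mul]
        apply setIntegral_mono_on hintI (hint.const_mul (σ * M)) measurableSet_Ioc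
        intro s hs
        have h0K := hKnn s hs
        have hgs := hgM s (hsub hs)
        nlinarith [mul_le_mul_of_nonneg_left hgs (mul_nonneg hσ.le h0K)]
    · have hnI : ¬ IntegrableOn (fun s => σ * K s r * g s) (Ioc r T) volume := by
        intro hcon
        apply hint
        apply Integrable.mono (hcon.const_mul ((σ * c)⁻¹)) (hKm2 r).aestronglyMeasurable
        filter_upwards [ae_restrict_mem measurableSet_Ioc] with s hs
        have h0K := hKnn s hs
        have hcg := hgc s (hsub hs)
        have hσc : 0 < σ * c := by positivity
        rw [Real.norm_eq_abs, Real.norm_eq_abs, abs_of_nonneg h0K,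
          abs_of_nonneg (mul_nonneg (inv_nonneg.mpr hσc.le)
            (mul_nonneg (mul_nonneg hσ.le h0K) (hcpos.le.trans hcg)))]
        have hstep : σ * c * K s r ≤ σ * K s r * g s := by
          nlinarith [mul_le_mul_of_nonneg_left hcg (mul_nonneg hσ.le h0K)]
        calc K s r = (σ*c)⁻¹ * (σ * c * K s r) := by field_simp
          _ ≤ (σ*c)⁻¹ * (σ * K s r * g s) :=
              mul_le_mul_of_nonneg_left hstep (by positivity)
      have hJ0 : J r = 0 := intervalIntegral.integral_undef
        (fun h => hint ((intervalIntegrable_iff_integrableOn_Ioc_of_le hrT).mp h))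
      have hI0 : I r = 0 := intervalIntegral.integral_undef
        (fun h => hnI ((intervalIntegrable_iff_integrableOn_Ioc_of_le hrT).mp h))
      rw [hJ0, hI0]
      norm_num
  -- main identity
  have key1 : ∫⁻ r in Ioc (0:ℝ) T, ENNReal.ofReal (J' r ^ 2)
      = ENNReal.ofReal (T ^ (2*H+2) / (2*H+2)) := by
    have hswap := swap3 T (fun s r => ENNReal.ofReal (K s r)) hQunc
    have e1 : ∫⁻ r in Ioc (0:ℝ) T, ENNReal.ofReal (J' r ^ 2)
        = ∫⁻ r in Ioc (0:ℝ) T, (∫⁻ s in Ioc r T, ENNReal.ofReal (K s r))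
            * (∫⁻ t in Ioc r T, ENNReal.ofReal (K t r)) := by
      apply lintegral_congr_ae
      filter_upwards [haeint] with r hrint
      obtain ⟨hr, hint⟩ := hrint
      have hJr : J r = ∫ s in Ioc r T, K s r := intervalIntegral.integral_of_le hr.2
      have hnn : 0 ≤ᵐ[volume.restrict (Ioc r T)] fun s => K s r := by
        filter_upwards [ae_restrict_mem measurableSet_Ioc] with s hs
        exact hKnonneg s ⟨hr.1.le.trans hs.1.le, hs.2⟩ r ⟨hr.1.le, hr.2⟩
      have hof : ENNReal.ofReal (J r) = ∫⁻ s in Ioc r T, ENNReal.ofReal (K s r) := by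
        rw [hJr]; exact ofReal_integral_eq_lintegral_ofReal hint hnn
      have hJnn : 0 ≤ J r := (hP1 r ⟨hr.1.le, hr.2⟩).1
      rw [hJ'eq r hr.2, pow_two, ENNReal.ofReal_mul hJnn, hof]
    rw [e1, hswap]
    have e2 : ∀ s ∈ Ioc (0:ℝ) T,
        (∫⁻ t in Ioc (0:ℝ) T, ∫⁻ r in Ioc 0 (min s t),
            ENNReal.ofReal (K s r) * ENNReal.ofReal (K t r))
          = ENNReal.ofReal (∫ t in (0:ℝ)..T, R s t) := by
      intro s hs
      have h1 : ∀ t ∈ Ioc (0:ℝ) T,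
          (∫⁻ r in Ioc 0 (min s t), ENNReal.ofReal (K s r) * ENNReal.ofReal (K t r))
            = ENNReal.ofReal (R s t) := fun t ht => hcov s hs t ht
      rw [setLIntegral_congr_fun measurableSet_Ioc h1]
      have hint : IntegrableOn (R s) (Ioc (0:ℝ) T) volume := (hRcont s).integrableOn_Ioc
      have hnn : 0 ≤ᵐ[volume.restrict (Ioc (0:ℝ) T)] R s := by
        filter_upwards [ae_restrict_mem measurableSet_Ioc] with t ht
        exact hRnn s hs t ⟨ht.1.le, ht.2⟩
      rw [← ofReal_integral_eq_lintegral_ofReal hint hnn,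
        ← intervalIntegral.integral_of_le hT.le]
    rw [setLIntegral_congr_fun measurableSet_Ioc e2]
    have e3 : ∀ s ∈ Ioc (0:ℝ) T, ENNReal.ofReal (∫ t in (0:ℝ)..T, R s t)
        = ENNReal.ofReal ((T ^ (2*H+1)/(2*H+1) + T * s ^ (2*H) - s ^ (2*H+1)/(2*H+1)
            - (T-s) ^ (2*H+1)/(2*H+1)) / 2) := by
      intro s hs
      congr 1
      simp only [hR]
      exact comp1 H T hH1 s ⟨hs.1.le, hs.2⟩
    rw [setLIntegral_congr_fun measurableSet_Ioc e3]
    have hφcont : Continuous (fun s : ℝ => (T ^ (2*H+1)/(2*H+1) + T * s ^ (2*H)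
        - s ^ (2*H+1)/(2*H+1) - (T-s) ^ (2*H+1)/(2*H+1)) / 2) := by
      apply Continuous.div_const
      apply Continuous.sub
      apply Continuous.sub
      · exact Continuous.add continuous_const (continuous_const.mul (rpow_cont h2H))
      · exact (rpow_cont (by linarith)).div_const _
      · exact (((continuous_const.sub continuous_id).rpow_const
          fun x => Or.inr (by linarith)).div_const _)
    have hφnn : 0 ≤ᵐ[volume.restrict (Ioc (0:ℝ) T)]
        (fun s : ℝ => (T ^ (2*H+1)/(2*H+1) + T * s ^ (2*H)
          - s ^ (2*H+1)/(2*H+1) - (T-s) ^ (2*H+1)/(2*H+1)) / 2) := by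
      filter_upwards [ae_restrict_mem measurableSet_Ioc] with s hs
      rw [← comp1 H T hH1 s ⟨hs.1.le, hs.2⟩]
      apply intervalIntegral.integral_nonneg hT.le
      intro t ht
      have h := hRnn s hs t ht
      simp only [hR] at h
      exact h
    rw [← ofReal_integral_eq_lintegral_ofReal (hφcont.integrableOn_Ioc) hφnn,
      ← intervalIntegral.integral_of_le hT.le]
    congr 1
    exact comp2 H T hH1 hT
  -- upper and lower bounds
  have hmeasJ2 : AEMeasurable (fun r => ENNReal.ofReal (J' r ^ 2))
      (volume.restrict (Ioc (0:ℝ) T)) :=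
    (ENNReal.measurable_ofReal.comp (hJ'meas.pow_const 2)).aemeasurable
  have keyup : ∫⁻ r in Ioc (0:ℝ) T, ENNReal.ofReal (I' r ^ 2)
      ≤ ENNReal.ofReal ((σ*M)^2) * ENNReal.ofReal (T ^ (2*H+2) / (2*H+2)) := by
    calc ∫⁻ r in Ioc (0:ℝ) T, ENNReal.ofReal (I' r ^ 2)
        ≤ ∫⁻ r in Ioc (0:ℝ) T, ENNReal.ofReal ((σ*M)^2) * ENNReal.ofReal (J' r ^ 2) := by
          apply setLIntegral_mono
            ((ENNReal.measurable_ofReal.comp (hJ'meas.pow_const 2)).const_mul _)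
          intro r hr
          show ENNReal.ofReal (I' r ^ 2)
            ≤ ENNReal.ofReal ((σ*M)^2) * ENNReal.ofReal (J' r ^ 2)
          rw [← ENNReal.ofReal_mul (by positivity)]
          apply ENNReal.ofReal_le_ofReal
          rw [hI'eq r hr.2, hJ'eq r hr.2]
          obtain ⟨h0J, hlo, hup⟩ := hP1 r ⟨hr.1.le, hr.2⟩
          have h0I : 0 ≤ I r := le_trans (by positivity) hlo
          calc I r ^ 2 ≤ (σ * M * J r)^2 := pow_le_pow_left₀ h0I hup 2
            _ = (σ*M)^2 * J r ^2 := by ring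
      _ = ENNReal.ofReal ((σ*M)^2) * ∫⁻ r in Ioc (0:ℝ) T, ENNReal.ofReal (J' r ^ 2) :=
          lintegral_const_mul'' _ hmeasJ2
      _ = ENNReal.ofReal ((σ*M)^2) * ENNReal.ofReal (T ^ (2*H+2) / (2*H+2)) := by rw [key1]
  have keylo : ENNReal.ofReal ((σ*c)^2) * ENNReal.ofReal (T ^ (2*H+2) / (2*H+2))
      ≤ ∫⁻ r in Ioc (0:ℝ) T, ENNReal.ofReal (I' r ^ 2) := by
    rw [← key1, ← lintegral_const_mul'' _ hmeasJ2]
    apply setLIntegral_mono (ENNReal.measurable_ofReal.comp (hI'meas.pow_const 2))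
    intro r hr
    show ENNReal.ofReal ((σ*c)^2) * ENNReal.ofReal (J' r ^ 2) ≤ ENNReal.ofReal (I' r ^ 2)
    rw [← ENNReal.ofReal_mul (by positivity)]
    apply ENNReal.ofReal_le_ofReal
    rw [hI'eq r hr.2, hJ'eq r hr.2]
    obtain ⟨h0J, hlo, hup⟩ := hP1 r ⟨hr.1.le, hr.2⟩
    calc (σ*c)^2 * J r ^ 2 = (σ * c * J r)^2 := by ring
      _ ≤ I r ^ 2 := pow_le_pow_left₀ (by positivity) hlo 2
  -- final assembly
  rw [ge_iff_le, intervalIntegral.integral_of_le hT.le]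
  have hnnae : 0 ≤ᵐ[volume.restrict (Ioc (0:ℝ) T)] fun r => (I r)^2 :=
    Filter.Eventually.of_forall fun r => sq_nonneg _
  have haesm : AEStronglyMeasurable (fun r => (I r)^2) (volume.restrict (Ioc (0:ℝ) T)) := by
    apply ((hI'meas.pow_const 2).aestronglyMeasurable).congr
    rw [Filter.EventuallyEq, ae_restrict_iff' measurableSet_Ioc]
    filter_upwards with r hr
    rw [hI'eq r hr.2]
  rw [integral_eq_lintegral_of_nonneg_ae hnnae haesm]
  have hII' : ∫⁻ r in Ioc (0:ℝ) T, ENNReal.ofReal ((I r)^2)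
      = ∫⁻ r in Ioc (0:ℝ) T, ENNReal.ofReal (I' r ^2) :=
    setLIntegral_congr_fun measurableSet_Ioc
      (fun r hr => by rw [hI'eq r hr.2])
  rw [hII']
  have hne : ∫⁻ r in Ioc (0:ℝ) T, ENNReal.ofReal (I' r ^2) ≠ ⊤ :=
    ne_top_of_le_ne_top (ENNReal.mul_ne_top ENNReal.ofReal_ne_top ENNReal.ofReal_ne_top) keyup
  have hTb : 0 ≤ T ^ (2*H+2)/(2*H+2) := div_nonneg (Real.rpow_nonneg hT.le _) (by linarith)
  have h1 : ENNReal.ofReal ((σ*c)^2 * (T ^ (2*H+2)/(2*H+2)))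
      ≤ ∫⁻ r in Ioc (0:ℝ) T, ENNReal.ofReal (I' r ^2) := by
    rw [ENNReal.ofReal_mul (by positivity)]
    exact keylo
  have h2 := ENNReal.toReal_mono hne h1
  rw [ENNReal.toReal_ofReal (by positivity)] at h2
  calc T ^ (2*H+2)/(2*H+2) * σ^2 * c^2 = (σ*c)^2 * (T ^ (2*H+2)/(2*H+2)) := by ring
    _ ≤ _ := h2

private theorem aux2 (H T a σ : ℝ) (hH : H ∈ Set.Ioo (0:ℝ) 1) (hT : 0 < T)
    (hσ : 0 < σ)
    (K : ℝ → ℝ → ℝ)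
    (hKmeas : Measurable (Function.uncurry K))
    (hKnonneg : ∀ s ∈ Icc (0:ℝ) T, ∀ r ∈ Icc (0:ℝ) T, 0 ≤ K s r)
    (hKcov : ∀ s ∈ Icc (0:ℝ) T, ∀ t ∈ Icc (0:ℝ) T,
      ∫ r in (0:ℝ)..(min s t), K s r * K t r
        = (s ^ (2*H) + t ^ (2*H) - |t - s| ^ (2*H)) / 2)
    (b : ℝ → ℝ) (hb : Continuous b) :
    ∫ r in (0:ℝ)..T, (∫ s in r..T, σ * K s r * Real.exp (a * s + σ * b s)) ^ 2
      ≥ (T ^ (2*H + 2) / (2*H + 2)) * σ ^ 2 *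
          Real.exp (-2 * |a| * T + 2 * σ * sInf (b '' Icc 0 T)) := by
  have hbdd : BddBelow (b '' Icc 0 T) := (isCompact_Icc.image hb).bddBelow
  have hmle : ∀ s ∈ Icc (0:ℝ) T, sInf (b '' Icc 0 T) ≤ b s :=
    fun s hs => csInf_le hbdd (mem_image_of_mem b hs)
  have hgcont : Continuous fun s => Real.exp (a * s + σ * b s) :=
    Real.continuous_exp.comp
      ((continuous_const.mul continuous_id).add (continuous_const.mul hb))
  have hgc : ∀ s ∈ Icc (0:ℝ) T, Real.exp (-|a| * T + σ * sInf (b '' Icc 0 T))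
      ≤ Real.exp (a * s + σ * b s) := by
    intro s hs
    apply Real.exp_le_exp.mpr
    have h2 : -|a| ≤ a := neg_abs_le a
    have h3 : -|a| * T ≤ -|a| * s := by nlinarith [abs_nonneg a, hs.2]
    have h4 := hmle s hs
    nlinarith [hσ.le, hs.1, abs_nonneg a]
  obtain ⟨M, hM⟩ : ∃ M, ∀ s ∈ Icc (0:ℝ) T, Real.exp (a * s + σ * b s) ≤ M := by
    obtain ⟨M, hM⟩ := (isCompact_Icc.image hgcont).bddAbove
    exact ⟨M, fun s hs => hM (mem_image_of_mem _ hs)⟩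
  have hmain := aux_main H T σ (Real.exp (-|a| * T + σ * sInf (b '' Icc 0 T))) M hH hT hσ
    (Real.exp_pos _) K hKmeas hKnonneg hKcov _ hgcont hgc hM
  have hexp : Real.exp (-|a| * T + σ * sInf (b '' Icc 0 T)) ^ 2
      = Real.exp (-2 * |a| * T + 2 * σ * sInf (b '' Icc 0 T)) := by
    rw [sq, ← Real.exp_add]
    congr 1
    ring
  rw [← hexp]
  exact hmain

theorem malliavin_norm_lower_bound (H T a σ : ℝ) (hH : H ∈ Set.Ioo (0:ℝ) 1) (hT : 0 < T)
    (hσ : 0 < σ)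
    (K : ℝ → ℝ → ℝ)
    (hKmeas : Measurable (Function.uncurry K))
    (hKnonneg : ∀ s ∈ Icc (0:ℝ) T, ∀ r ∈ Icc (0:ℝ) T, 0 ≤ K s r)
    (hKzero : ∀ s ∈ Icc (0:ℝ) T, ∀ r ∈ Icc (0:ℝ) T, s < r → K s r = 0)
    (hKcov : ∀ s ∈ Icc (0:ℝ) T, ∀ t ∈ Icc (0:ℝ) T,
      ∫ r in (0:ℝ)..(min s t), K s r * K t r
        = (s ^ (2*H) + t ^ (2*H) - |t - s| ^ (2*H)) / 2)
    (b : ℝ → ℝ) (hb : ContinuousOn b (Icc 0 T)) :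
    ∫ r in (0:ℝ)..T, (∫ s in r..T, σ * K s r * Real.exp (a * s + σ * b s)) ^ 2
      ≥ (T ^ (2*H + 2) / (2*H + 2)) * σ ^ 2 *
          Real.exp (-2 * |a| * T + 2 * σ * sInf (b '' Icc 0 T)) := by
  have hbI : Continuous ((Icc (0:ℝ) T).restrict b) := hb.restrict
  have hb'cont : Continuous (IccExtend hT.le ((Icc (0:ℝ) T).restrict b)) :=
    hbI.Icc_extend'
  have hb'eq : ∀ s ∈ Icc (0:ℝ) T, IccExtend hT.le ((Icc (0:ℝ) T).restrict b) s = b s :=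
    fun s hs => IccExtend_of_mem hT.le _ hs
  have h2 := aux2 H T a σ hH hT hσ K hKmeas hKnonneg hKcov _ hb'cont
  have himg : (IccExtend hT.le ((Icc (0:ℝ) T).restrict b)) '' Icc 0 T = b '' Icc 0 T :=
    image_congr hb'eq
  rw [himg] at h2
  have hcongr : ∫ r in (0:ℝ)..T, (∫ s in r..T, σ * K s r * Real.exp (a * s + σ * b s)) ^ 2
      = ∫ r in (0:ℝ)..T, (∫ s in r..T,
          σ * K s r * Real.exp (a * s + σ * IccExtend hT.le ((Icc (0:ℝ) T).restrict b) s)) ^ 2 := by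
    apply intervalIntegral.integral_congr
    intro r hr
    rw [uIcc_of_le hT.le] at hr
    have hin : ∫ s in r..T, σ * K s r * Real.exp (a * s + σ * b s)
        = ∫ s in r..T,
            σ * K s r * Real.exp (a * s + σ * IccExtend hT.le ((Icc (0:ℝ) T).restrict b) s) := by
      apply intervalIntegral.integral_congr
      intro s hs
      rw [uIcc_of_le hr.2] at hs
      show σ * K s r * Real.exp (a * s + σ * b s)
        = σ * K s r * Real.exp (a * s + σ * IccExtend hT.le ((Icc (0:ℝ) T).restrict b) s)
      rw [hb'eq s ⟨hr.1.trans hs.1, hs.2⟩]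
    show (∫ s in r..T, σ * K s r * Real.exp (a * s + σ * b s)) ^ 2
      = (∫ s in r..T,
          σ * K s r * Real.exp (a * s + σ * IccExtend hT.le ((Icc (0:ℝ) T).restrict b) s)) ^ 2
    rw [hin]
  rw [hcongr]
  exact h2
end

section
/- Let H ∈ (0,1), T > 0, a ∈ ℝ, σ > 0, and let K : [0,T] × [0,T] → ℝ be a nonnegative measurable function with K(s,r) = 0 whenever r > s, satisfying ∫₀^{min(s,t)} K(s,r) K(t,r) dr = (s^{2H} + t^{2H} − |t − s|^{2H})/2 for all s, t ∈ [0,T]. Let B be a fractional Brownian motion with Hurst index H on [0,T]. Then for every p ≥ 1, the random variable (∫₀ᵀ (∫_rᵀ σ K(s,r) e^{a s + σ B_s} ds)² dr)^{−1} has finite p-th moment: E[(∫₀ᵀ (∫_rᵀ σ K(s,r) e^{a s + σ B_s} ds)² dr)^{−p}] < ∞. -/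
open MeasureTheory ProbabilityTheory Set

/-- A fractional Brownian motion with Hurst index `H` on `[0, T]`:
a process with continuous sample paths whose finite linear combinations of values
are centered Gaussian, with the fBm covariance function. -/
def IsFractionalBM {Ω : Type*} [MeasurableSpace Ω] (P : Measure Ω)
    (H T : ℝ) (B : ℝ → Ω → ℝ) : Prop :=
  (∀ ω, ContinuousOn (fun s => B s ω) (Icc 0 T)) ∧
  (∀ s ∈ Icc (0:ℝ) T, Measurable (B s)) ∧
  (∀ (n : ℕ) (c : Fin n → ℝ) (s : Fin n → ℝ), (∀ i, s i ∈ Icc (0:ℝ) T) →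
    ∃ v : NNReal, P.map (fun ω => ∑ i, c i * B (s i) ω) = gaussianReal 0 v) ∧
  (∀ s ∈ Icc (0:ℝ) T, ∀ t ∈ Icc (0:ℝ) T,
    ∫ ω, B s ω * B t ω ∂P = (s ^ (2*H) + t ^ (2*H) - |t - s| ^ (2*H)) / 2)

section MallAuxSection
open Real
open scoped ENNReal NNReal

namespace MallAux



/-- Cauchy-Schwarz for lintegrals, unsquared form. -/
lemma lintegral_CS {α : Type*} [MeasurableSpace α] (μ : Measure α) {f g : α → ℝ≥0∞}
    (hf : AEMeasurable f μ) (hg : AEMeasurable g μ) :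
    ∫⁻ a, f a * g a ∂μ ≤ (∫⁻ a, f a ^ 2 ∂μ) ^ (1/2 : ℝ) * (∫⁻ a, g a ^ 2 ∂μ) ^ (1/2 : ℝ) := by
  have hpq : Real.HolderConjugate 2 2 := (Real.holderConjugate_iff_eq_conjExponent one_lt_two).2 (by norm_num)
  have h := ENNReal.lintegral_mul_le_Lp_mul_Lq μ hpq hf hg
  calc ∫⁻ a, f a * g a ∂μ = ∫⁻ a, (f * g) a ∂μ := rfl
    _ ≤ (∫⁻ a, f a ^ (2:ℝ) ∂μ) ^ (1/2 : ℝ) * (∫⁻ a, g a ^ (2:ℝ) ∂μ) ^ (1/2 : ℝ) := h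
    _ = (∫⁻ a, f a ^ 2 ∂μ) ^ (1/2 : ℝ) * (∫⁻ a, g a ^ 2 ∂μ) ^ (1/2 : ℝ) := by
        simp_rw [ENNReal.rpow_two]

/-- Cauchy-Schwarz for lintegrals, squared form. -/
lemma lintegral_CS_sq {α : Type*} [MeasurableSpace α] (μ : Measure α) {f g : α → ℝ≥0∞}
    (hf : AEMeasurable f μ) (hg : AEMeasurable g μ) :
    (∫⁻ a, f a * g a ∂μ) ^ 2 ≤ (∫⁻ a, f a ^ 2 ∂μ) * (∫⁻ a, g a ^ 2 ∂μ) := by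
  have h := lintegral_CS μ hf hg
  calc (∫⁻ a, f a * g a ∂μ) ^ 2
      ≤ ((∫⁻ a, f a ^ 2 ∂μ) ^ (1/2 : ℝ) * (∫⁻ a, g a ^ 2 ∂μ) ^ (1/2 : ℝ)) ^ 2 :=
        pow_le_pow_left' h 2
    _ = (∫⁻ a, f a ^ 2 ∂μ) * (∫⁻ a, g a ^ 2 ∂μ) := by
        rw [mul_pow, ← ENNReal.rpow_natCast (_ ^ (1/2:ℝ)) 2, ← ENNReal.rpow_natCast (_ ^ (1/2:ℝ)) 2,
          ← ENNReal.rpow_mul, ← ENNReal.rpow_mul]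
        norm_num

/-- Hölder against the constant 1: `(∫⁻ h)^q ≤ μ(univ)^(q-1) * ∫⁻ h^q` for `q > 1`. -/
lemma lintegral_rpow_le {α : Type*} [MeasurableSpace α] (μ : Measure α) {h : α → ℝ≥0∞}
    (hm : AEMeasurable h μ) {q : ℝ} (hq : 1 < q) :
    (∫⁻ a, h a ∂μ) ^ q ≤ (μ univ) ^ (q - 1) * ∫⁻ a, h a ^ q ∂μ := by
  have hq0 : (0:ℝ) < q := lt_trans one_pos hq
  have hpq : Real.HolderConjugate q (q/(q-1)) := (Real.holderConjugate_iff_eq_conjExponent hq).2 rfl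
  have h1 := ENNReal.lintegral_mul_le_Lp_mul_Lq μ hpq hm aemeasurable_const (g := fun _ => 1)
  simp only [Pi.mul_apply, mul_one, ENNReal.one_rpow, lintegral_const, one_mul] at h1
  have h2 := ENNReal.rpow_le_rpow h1 hq0.le
  calc (∫⁻ a, h a ∂μ) ^ q
      ≤ (((∫⁻ a, h a ^ q ∂μ) ^ (1/q)) ^ q * ((μ univ ^ (1 / (q/(q-1)))) ^ q) : ℝ≥0∞) := by
        rw [← ENNReal.mul_rpow_of_nonneg _ _ hq0.le]; exact h2
    _ = (μ univ) ^ (q - 1) * ∫⁻ a, h a ^ q ∂μ := by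
        rw [← ENNReal.rpow_mul, ← ENNReal.rpow_mul]
        rw [one_div_mul_cancel hq0.ne', ENNReal.rpow_one]
        rw [mul_comm]
        congr 2
        field_simp

/-- moment generating function of a centered real Gaussian, in `lintegral` form. -/
lemma lintegral_exp_gaussianReal (c : ℝ) (v : ℝ≥0) :
    ∫⁻ x, ENNReal.ofReal (rexp (c * x)) ∂(gaussianReal 0 v)
      = ENNReal.ofReal (rexp (c ^ 2 * v / 2)) := by
  by_cases hv : v = 0
  · subst hv
    rw [gaussianReal_zero_var, lintegral_dirac' _ (by fun_prop)]
    simp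
  rw [gaussianReal_of_var_ne_zero _ hv,
    lintegral_withDensity_eq_lintegral_mul _ (measurable_gaussianPDF _ _) (by fun_prop)]
  have hv' : (0:ℝ) < (v:ℝ) := by positivity
  have key : ∀ x : ℝ, (gaussianPDF 0 v * fun x => ENNReal.ofReal (rexp (c * x))) x
      = ENNReal.ofReal (rexp (c ^ 2 * v / 2)) * gaussianPDF (c * v) v x := by
    intro x
    simp only [Pi.mul_apply, gaussianPDF, ← ENNReal.ofReal_mul (gaussianPDFReal_nonneg _ _ _),
      ← ENNReal.ofReal_mul (Real.exp_nonneg _)]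
    congr 1
    simp only [gaussianPDFReal]
    have hexp : -(x - 0) ^ 2 / (2 * (v:ℝ)) + c * x
        = -(x - c * (v:ℝ)) ^ 2 / (2 * (v:ℝ)) + c ^ 2 * (v:ℝ) / 2 := by
      field_simp
      ring
    rw [mul_assoc, ← Real.exp_add, hexp, Real.exp_add, ← mul_assoc]
    ring
  rw [lintegral_congr key, lintegral_const_mul _ (measurable_gaussianPDF _ _),
    lintegral_gaussianPDF_eq_one _ hv, mul_one]



lemma gaussian_Ioi_pos : 0 < gaussianReal 0 1 (Ioi 1) := by
  rcases eq_or_ne (gaussianReal 0 1 (Ioi 1)) 0 with h0 | h0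
  · have := (gaussianReal_absolutelyContinuous' 0 one_ne_zero) h0
    rw [Real.volume_Ioi] at this
    exact absurd this (by simp)
  · exact h0.bot_lt

/-- variance bound via Chebyshev: if `X` has law `N(0, v)` and second moment `V > 0`,
then `v ≤ V / q` where `q = N(0,1)(Ioi 1)`. -/
lemma variance_le {Ω : Type*} [MeasurableSpace Ω] (P : Measure Ω) [IsProbabilityMeasure P]
    {X : Ω → ℝ} (hX : Measurable X) {v : ℝ≥0} (hmap : P.map X = gaussianReal 0 v)
    {V : ℝ} (hV : 0 < V) (hVeq : ∫ ω, X ω * X ω ∂P = V) :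
    (v : ℝ) ≤ V / (gaussianReal 0 1 (Ioi 1)).toReal := by
  set q := gaussianReal 0 1 (Ioi 1) with hqdef
  have hq0 : 0 < q := gaussian_Ioi_pos
  have hqt : q ≠ ⊤ := measure_ne_top _ _
  have hqr : 0 < q.toReal := ENNReal.toReal_pos hq0.ne' hqt
  rcases eq_or_ne v 0 with hv | hv
  · rw [hv]
    exact div_nonneg hV.le hqr.le |>.trans_eq' (by simp)
  have hvpos : 0 < (v:ℝ) := by positivity
  have hint : Integrable (fun ω => X ω * X ω) P := by
    by_contra hni
    rw [integral_undef hni] at hVeq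
    exact hV.ne hVeq
  have hlin : ∫⁻ ω, ENNReal.ofReal (X ω * X ω) ∂P = ENNReal.ofReal V := by
    rw [← hVeq]
    exact (ofReal_integral_eq_lintegral_ofReal hint (ae_of_all _ fun ω => mul_self_nonneg _)).symm
  set u := Real.sqrt (v:ℝ) with hudef
  have hu0 : 0 < u := Real.sqrt_pos.2 hvpos
  have huv : u * u = (v:ℝ) := Real.mul_self_sqrt hvpos.le
  have hmeas_set : P {ω | u < X ω} = gaussianReal 0 v (Ioi u) := by
    rw [← hmap, Measure.map_apply hX measurableSet_Ioi]
    rfl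
  have hgauss : gaussianReal 0 v (Ioi u) = q := by
    have hmapmul : (gaussianReal 0 1).map (u * ·) = gaussianReal 0 v := by
      rw [gaussianReal_map_const_mul u, mul_zero]
      congr 1
      ext
      simpa [sq] using huv
    rw [← hmapmul, Measure.map_apply (measurable_const_mul u) measurableSet_Ioi]
    have hpre : (u * ·) ⁻¹' (Ioi u) = Ioi 1 := by
      ext x
      simp only [mem_preimage, mem_Ioi]
      constructor
      · intro h
        by_contra hx
        push_neg at hx
        nlinarith
      · intro h
        nlinarith
    rw [hpre]
  have hsub : {ω | u < X ω} ⊆ {ω | ENNReal.ofReal (v:ℝ) ≤ ENNReal.ofReal (X ω * X ω)} := by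
    intro ω hω
    simp only [mem_setOf_eq] at hω ⊢
    apply ENNReal.ofReal_le_ofReal
    nlinarith
  have markov := mul_meas_ge_le_lintegral₀ (μ := P)
    (f := fun ω => ENNReal.ofReal (X ω * X ω)) (hX.mul hX).ennreal_ofReal.aemeasurable
    (ENNReal.ofReal (v:ℝ))
  rw [hlin] at markov
  have hchain : ENNReal.ofReal (v:ℝ) * q ≤ ENNReal.ofReal V := by
    calc ENNReal.ofReal (v:ℝ) * q = ENNReal.ofReal (v:ℝ) * P {ω | u < X ω} := by
          rw [hmeas_set, hgauss]
      _ ≤ ENNReal.ofReal (v:ℝ) * P {ω | ENNReal.ofReal (v:ℝ) ≤ ENNReal.ofReal (X ω * X ω)} :=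
          mul_le_mul_right (measure_mono hsub) _
      _ ≤ ENNReal.ofReal V := markov
  have hfin : ENNReal.ofReal (v:ℝ) * q ≠ ⊤ := ENNReal.mul_ne_top ENNReal.ofReal_ne_top hqt
  have := ENNReal.toReal_mono ENNReal.ofReal_ne_top hchain
  rw [ENNReal.toReal_mul, ENNReal.toReal_ofReal hvpos.le, ENNReal.toReal_ofReal hV.le] at this
  rw [le_div_iff₀ hqr]
  exact this



noncomputable def Wm (T H : ℝ) : ℝ≥0∞ :=
  (ENNReal.ofReal (T ^ (2*H))) ^ (1/2:ℝ) * (ENNReal.ofReal T) ^ (1/2:ℝ)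

noncomputable def c1 (K : ℝ → ℝ → ℝ) (T : ℝ) : ℝ≥0∞ :=
  ∫⁻ s in Ioc (0:ℝ) T, ∫⁻ r in Ioc (0:ℝ) T, ENNReal.ofReal (K s r)

noncomputable def DD (K : ℝ → ℝ → ℝ) (T H σ : ℝ) : ℝ :=
  σ^2 * (c1 K T).toReal^4 / (T * (Wm T H).toReal^2)

section Core

variable {H T σ : ℝ} {K : ℝ → ℝ → ℝ}

theorem core (hH2 : 0 < 2*H) (hT : 0 < T) (hσ : 0 < σ)
    (hKmeas : Measurable (Function.uncurry K))
    (hKnonneg : ∀ s ∈ Icc (0:ℝ) T, ∀ r ∈ Icc (0:ℝ) T, 0 ≤ K s r)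
    (hKzero : ∀ s ∈ Icc (0:ℝ) T, ∀ r ∈ Icc (0:ℝ) T, s < r → K s r = 0)
    (hdiag : ∀ s ∈ Ioc (0:ℝ) T, ∫ r in (0:ℝ)..s, K s r * K s r = s ^ (2*H))
    {p : ℝ} (hp : 1 ≤ p) (φ : ℝ → ℝ) (hφ : Continuous φ) :
    ENNReal.ofReal ((∫ r in (0:ℝ)..T, (∫ s in r..T, σ * K s r * rexp (φ s)) ^ 2) ^ (-p))
      ≤ ENNReal.ofReal ((DD K T H σ) ^ (-p))
        * (∫⁻ s in Ioc (0:ℝ) T, ENNReal.ofReal (rexp (-φ s))) ^ (2*p) := by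
  have hT0 : (0:ℝ) ≤ T := hT.le
  set ν : Measure ℝ := volume.restrict (Ioc (0:ℝ) T) with hν
  have hνuniv : ν univ = ENNReal.ofReal T := by
    rw [hν, Measure.restrict_apply_univ, Real.volume_Ioc, sub_zero]
  set k : ℝ → ℝ → ℝ≥0∞ := fun s r => ENNReal.ofReal (K s r) with hk
  have hk_unc : Measurable (fun q : ℝ × ℝ => k q.1 q.2) := hKmeas.ennreal_ofReal
  set e : ℝ → ℝ → ℝ≥0∞ := fun r s => if r < s then k s r else 0 with he
  have he_unc : Measurable (fun q : ℝ × ℝ => e q.1 q.2) := by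
    apply Measurable.ite (measurableSet_lt measurable_fst measurable_snd) _ measurable_const
    exact hk_unc.comp measurable_swap
  have he_le : ∀ r s, e r s ≤ k s r := by
    intro r s
    by_cases h : r < s <;> simp [he, h]
  -- diagonal identity in lintegral form
  have hdiagL : ∀ s ∈ Ioc (0:ℝ) T, ∫⁻ r, (k s r) ^ 2 ∂ν = ENNReal.ofReal (s ^ (2*H)) := by
    intro s hs
    have hsIcc : s ∈ Icc (0:ℝ) T := ⟨hs.1.le, hs.2⟩
    have hsp : 0 < s ^ (2*H) := Real.rpow_pos_of_pos hs.1 _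
    have hKi := hdiag s hs
    have hii : IntegrableOn (fun r => K s r * K s r) (Ioc 0 s) := by
      by_contra hni
      rw [intervalIntegral.integral_of_le hs.1.le, MeasureTheory.integral_undef hni] at hKi
      exact hsp.ne hKi
    have hnn : 0 ≤ᵐ[volume.restrict (Ioc (0:ℝ) s)] fun r => K s r * K s r := by
      refine (ae_restrict_iff' measurableSet_Ioc).2 (ae_of_all _ fun r hr => ?_)
      have hrIcc : r ∈ Icc (0:ℝ) T := ⟨hr.1.le, hr.2.trans hs.2⟩
      exact mul_nonneg (hKnonneg s hsIcc r hrIcc) (hKnonneg s hsIcc r hrIcc)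
    have hL1 : ∫⁻ r in Ioc (0:ℝ) s, ENNReal.ofReal (K s r * K s r)
        = ENNReal.ofReal (s ^ (2*H)) := by
      rw [← ofReal_integral_eq_lintegral_ofReal hii hnn, ← hKi,
        intervalIntegral.integral_of_le hs.1.le]
    have hL2 : ∫⁻ r in Ioc (0:ℝ) s, (k s r)^2 = ENNReal.ofReal (s ^ (2*H)) := by
      rw [← hL1]
      refine setLIntegral_congr_fun measurableSet_Ioc (fun r hr => ?_)
      have hrIcc : r ∈ Icc (0:ℝ) T := ⟨hr.1.le, hr.2.trans hs.2⟩
      rw [pow_two, ← ENNReal.ofReal_mul (hKnonneg s hsIcc r hrIcc)]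
    have hzero : ∫⁻ r in Ioc s T, (k s r)^2 = 0 := by
      have hz : ∀ r ∈ Ioc s T, (k s r)^2 = (fun _ => (0:ℝ≥0∞)) r := by
        intro r hr
        have : K s r = 0 := hKzero s hsIcc r ⟨(hs.1.trans hr.1).le, hr.2⟩ hr.1
        simp [hk, this]
      rw [setLIntegral_congr_fun measurableSet_Ioc hz, lintegral_zero]
    have hsplit : Ioc (0:ℝ) T = Ioc 0 s ∪ Ioc s T := (Ioc_union_Ioc_eq_Ioc hs.1.le hs.2).symm
    rw [hν, hsplit, lintegral_union measurableSet_Ioc (Set.Ioc_disjoint_Ioc_of_le le_rfl), hL2, hzero,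
      add_zero]
  have hkm1 : ∀ s, Measurable fun r => k s r := by
    intro s
    exact hk_unc.comp (measurable_const.prodMk measurable_id)
  have hem1 : ∀ s, Measurable fun r => e r s := by
    intro s
    exact he_unc.comp (measurable_id.prodMk measurable_const)
  have hem2 : ∀ r, Measurable fun s => e r s := by
    intro r
    exact he_unc.comp (measurable_const.prodMk measurable_id)
  -- w and its bounds
  set w : ℝ → ℝ≥0∞ := fun s => ∫⁻ r, k s r ∂ν with hw
  have hwm : Measurable w := Measurable.lintegral_prod_right' hk_unc
  have hw_le : ∀ s ∈ Ioc (0:ℝ) T, w s ≤ Wm T H := by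
    intro s hs
    have h1 : w s = ∫⁻ r, k s r * 1 ∂ν := by simp [hw]
    have h2 := lintegral_CS ν (f := fun r => k s r) (g := fun _ => 1)
      (hkm1 s).aemeasurable aemeasurable_const
    rw [h1]
    refine h2.trans ?_
    simp only [one_pow, lintegral_one, hνuniv]
    rw [hdiagL s hs]
    unfold Wm
    refine mul_le_mul_left (ENNReal.rpow_le_rpow (ENNReal.ofReal_le_ofReal ?_) (by norm_num)) _
    exact Real.rpow_le_rpow hs.1.le hs.2 hH2.le
  have hw_pos : ∀ s ∈ Ioc (0:ℝ) T, 0 < w s := by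
    intro s hs
    rcases eq_or_ne (w s) 0 with h0 | h0
    · exfalso
      have hae : (fun r => k s r) =ᵐ[ν] 0 := (lintegral_eq_zero_iff (hkm1 s)).1 h0
      have hz : ∫⁻ r, (k s r)^2 ∂ν = ∫⁻ r, 0 ∂ν :=
        lintegral_congr_ae (hae.mono fun r hr => by simp only [Pi.zero_apply] at hr; simp [hr])
      rw [lintegral_zero, hdiagL s hs] at hz
      have : 0 < ENNReal.ofReal (s ^ (2*H)) :=
        ENNReal.ofReal_pos.2 (Real.rpow_pos_of_pos hs.1 _)
      exact this.ne' hz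
    · exact h0.bot_lt
  have hWm_pos : 0 < Wm T H := by
    unfold Wm
    have h1 : (0:ℝ≥0∞) < ENNReal.ofReal (T ^ (2*H)) :=
      ENNReal.ofReal_pos.2 (Real.rpow_pos_of_pos hT _)
    have h2 : (0:ℝ≥0∞) < ENNReal.ofReal T := ENNReal.ofReal_pos.2 hT
    exact ENNReal.mul_pos (ENNReal.rpow_pos h1 ENNReal.ofReal_ne_top).ne'
      (ENNReal.rpow_pos h2 ENNReal.ofReal_ne_top).ne'
  have hWm_fin : Wm T H ≠ ⊤ := by
    unfold Wm
    exact (ENNReal.mul_lt_top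
      (ENNReal.rpow_lt_top_of_nonneg (by norm_num) ENNReal.ofReal_ne_top)
      (ENNReal.rpow_lt_top_of_nonneg (by norm_num) ENNReal.ofReal_ne_top)).ne
  have hc1_def : c1 K T = ∫⁻ s, w s ∂ν := rfl
  have hc1_fin : c1 K T ≠ ⊤ := by
    have hle : c1 K T ≤ Wm T H * ENNReal.ofReal T := by
      rw [hc1_def]
      calc ∫⁻ s, w s ∂ν ≤ ∫⁻ _, Wm T H ∂ν := by
            refine lintegral_mono_ae ?_
            filter_upwards [ae_restrict_mem measurableSet_Ioc] with s hs
            exact hw_le s hs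
        _ = Wm T H * ENNReal.ofReal T := by rw [lintegral_const, hνuniv]
    exact ((lt_of_le_of_lt hle (ENNReal.mul_lt_top hWm_fin.lt_top ENNReal.ofReal_lt_top))).ne
  have hc1_pos : 0 < c1 K T := by
    rcases eq_or_ne (c1 K T) 0 with h0 | h0
    · exfalso
      have hae : w =ᵐ[ν] 0 := (lintegral_eq_zero_iff hwm).1 h0
      have hfalse : ∀ᵐ s ∂ν, False := by
        filter_upwards [hae, ae_restrict_mem measurableSet_Ioc] with s h1 h2
        exact (hw_pos s h2).ne' h1
      have hν0 : ν = 0 := MeasureTheory.ae_eq_bot.mp (Filter.eventually_false_iff_eq_bot.mp hfalse)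
      have h2 := hνuniv
      rw [hν0, Measure.coe_zero, Pi.zero_apply] at h2
      exact (ENNReal.ofReal_pos.2 hT).ne' h2.symm
    · exact h0.bot_lt
  -- finiteness of the kernel-only double square integral
  have hesm : Measurable fun q : ℝ × ℝ => (e q.1 q.2)^2 := he_unc.pow_const 2
  have hC0 : ∫⁻ r, (∫⁻ s, e r s ∂ν) ^ 2 ∂ν
      ≤ ENNReal.ofReal (T ^ (2*H)) * ENNReal.ofReal T * ENNReal.ofReal T := by
    have step1 : ∀ r, (∫⁻ s, e r s ∂ν)^2 ≤ (∫⁻ s, (e r s)^2 ∂ν) * ENNReal.ofReal T := by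
      intro r
      have h2 := lintegral_CS_sq ν (f := fun s => e r s) (g := fun _ => 1)
        (hem2 r).aemeasurable aemeasurable_const
      simpa [hνuniv] using h2
    calc ∫⁻ r, (∫⁻ s, e r s ∂ν)^2 ∂ν
        ≤ ∫⁻ r, (∫⁻ s, (e r s)^2 ∂ν) * ENNReal.ofReal T ∂ν := lintegral_mono step1
      _ = (∫⁻ r, ∫⁻ s, (e r s)^2 ∂ν ∂ν) * ENNReal.ofReal T :=
          lintegral_mul_const'' _ (Measurable.lintegral_prod_right' hesm).aemeasurable
      _ = (∫⁻ s, ∫⁻ r, (e r s)^2 ∂ν ∂ν) * ENNReal.ofReal T := by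
          rw [lintegral_lintegral_swap hesm.aemeasurable]
      _ ≤ (∫⁻ _, ENNReal.ofReal (T^(2*H)) ∂ν) * ENNReal.ofReal T := by
          refine mul_le_mul_left (lintegral_mono_ae ?_) _
          filter_upwards [ae_restrict_mem measurableSet_Ioc] with s hs
          calc ∫⁻ r, (e r s)^2 ∂ν
              ≤ ∫⁻ r, (k s r)^2 ∂ν :=
                lintegral_mono fun r => pow_le_pow_left' (he_le r s) 2
            _ = ENNReal.ofReal (s ^ (2*H)) := hdiagL s hs
            _ ≤ ENNReal.ofReal (T ^ (2*H)) :=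
                ENNReal.ofReal_le_ofReal (Real.rpow_le_rpow hs.1.le hs.2 hH2.le)
      _ = ENNReal.ofReal (T^(2*H)) * ENNReal.ofReal T * ENNReal.ofReal T := by
          rw [lintegral_const, hνuniv]
  have hC0fin : ∫⁻ r, (∫⁻ s, e r s ∂ν) ^ 2 ∂ν < ⊤ := by
    refine lt_of_le_of_lt hC0 ?_
    exact ENNReal.mul_lt_top (ENNReal.mul_lt_top ENNReal.ofReal_lt_top ENNReal.ofReal_lt_top)
      ENNReal.ofReal_lt_top
  have hIm : Measurable fun r => ∫⁻ s, e r s ∂ν :=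
    Measurable.lintegral_prod_right' he_unc
  have hrow : ∀ᵐ r ∂ν, (∫⁻ s, e r s ∂ν) < ⊤ := by
    have hsq := ae_lt_top (hIm.pow_const 2) hC0fin.ne
    filter_upwards [hsq] with r hr
    refine lt_top_iff_ne_top.2 fun h => ?_
    rw [h, pow_two, ENNReal.top_mul_top] at hr
    exact lt_irrefl _ hr
  -- pathwise objects
  set F : ℝ → ℝ≥0∞ := fun s => ENNReal.ofReal (rexp (φ s)) with hF
  set Fi : ℝ → ℝ≥0∞ := fun s => ENNReal.ofReal (rexp (-φ s)) with hFi
  have hFm : Measurable F := (Real.continuous_exp.comp hφ).measurable.ennreal_ofReal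
  have hFim : Measurable Fi := (Real.continuous_exp.comp hφ.neg).measurable.ennreal_ofReal
  obtain ⟨C, hC⟩ : ∃ C, ∀ s ∈ Icc (0:ℝ) T, |φ s| ≤ C := by
    obtain ⟨C, hC⟩ := (isCompact_Icc (a := (0:ℝ)) (b := T)).exists_bound_of_continuousOn
      hφ.continuousOn
    exact ⟨C, fun s hs => by simpa [Real.norm_eq_abs] using hC s hs⟩
  have hFle : ∀ s ∈ Ioc (0:ℝ) T, F s ≤ ENNReal.ofReal (rexp C) := fun s hs =>
    ENNReal.ofReal_le_ofReal (Real.exp_le_exp.2 ((le_abs_self _).trans (hC s ⟨hs.1.le, hs.2⟩)))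
  have hFile : ∀ s ∈ Ioc (0:ℝ) T, Fi s ≤ ENNReal.ofReal (rexp C) := fun s hs =>
    ENNReal.ofReal_le_ofReal (Real.exp_le_exp.2 ((neg_le_abs _).trans (hC s ⟨hs.1.le, hs.2⟩)))
  have hFFi : ∀ s, F s * Fi s = 1 := by
    intro s
    rw [hF, hFi]
    rw [← ENNReal.ofReal_mul (Real.exp_nonneg _), ← Real.exp_add, add_neg_cancel, Real.exp_zero,
      ENNReal.ofReal_one]
  set L : ℝ≥0∞ := ∫⁻ s, Fi s ∂ν with hL
  have hL_fin : L ≠ ⊤ := by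
    have hle : L ≤ ENNReal.ofReal (rexp C) * ENNReal.ofReal T := by
      rw [hL]
      calc ∫⁻ s, Fi s ∂ν ≤ ∫⁻ _, ENNReal.ofReal (rexp C) ∂ν := by
            refine lintegral_mono_ae ?_
            filter_upwards [ae_restrict_mem measurableSet_Ioc] with s hs
            exact hFile s hs
        _ = _ := by rw [lintegral_const, hνuniv]
    exact (lt_of_le_of_lt hle (ENNReal.mul_lt_top ENNReal.ofReal_lt_top
      ENNReal.ofReal_lt_top)).ne
  set Q : ℝ≥0∞ := ∫⁻ s, w s * Fi s ∂ν with hQ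
  have hQ_le : Q ≤ Wm T H * L := by
    rw [hQ, hL]
    calc ∫⁻ s, w s * Fi s ∂ν ≤ ∫⁻ s, Wm T H * Fi s ∂ν := by
          refine lintegral_mono_ae ?_
          filter_upwards [ae_restrict_mem measurableSet_Ioc] with s hs
          exact mul_le_mul_left (hw_le s hs) _
      _ = Wm T H * ∫⁻ s, Fi s ∂ν := lintegral_const_mul _ hFim
  set Pq : ℝ≥0∞ := ∫⁻ s, w s * F s ∂ν with hPq
  -- first Cauchy-Schwarz
  have hCS1 : c1 K T ^ 2 ≤ Pq * Q := by
    have hid : ∀ s, (w s * F s) ^ (1/2:ℝ) * (w s * Fi s) ^ (1/2:ℝ) = w s := by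
      intro s
      rw [← ENNReal.mul_rpow_of_nonneg _ _ (by norm_num : (0:ℝ) ≤ 1/2)]
      have hmm : w s * F s * (w s * Fi s) = (w s)^2 := by
        rw [mul_mul_mul_comm, hFFi s, mul_one, pow_two]
      rw [hmm, ← ENNReal.rpow_natCast (w s) 2, ← ENNReal.rpow_mul]
      norm_num
    have hmf : AEMeasurable (fun s => (w s * F s) ^ (1/2:ℝ)) ν :=
      ((hwm.mul hFm).pow_const _).aemeasurable
    have hmg : AEMeasurable (fun s => (w s * Fi s) ^ (1/2:ℝ)) ν :=
      ((hwm.mul hFim).pow_const _).aemeasurable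
    have h := lintegral_CS_sq ν hmf hmg
    have hsqf : ∀ x : ℝ≥0∞, (x ^ (1/2:ℝ))^2 = x := by
      intro x
      rw [← ENNReal.rpow_natCast (x ^ (1/2:ℝ)) 2, ← ENNReal.rpow_mul]
      norm_num
    simp only [hid, hsqf] at h
    exact h
  -- IE and its properties
  set IE : ℝ → ℝ≥0∞ := fun r => ∫⁻ s, e r s * F s ∂ν with hIE
  have hIEm : Measurable IE :=
    Measurable.lintegral_prod_right' (he_unc.mul (hFm.comp measurable_snd))
  have hIE_le : ∀ r, IE r ≤ (∫⁻ s, e r s ∂ν) * ENNReal.ofReal (rexp C) := by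
    intro r
    calc IE r ≤ ∫⁻ s, e r s * ENNReal.ofReal (rexp C) ∂ν := by
          refine lintegral_mono_ae ?_
          filter_upwards [ae_restrict_mem measurableSet_Ioc] with s hs
          exact mul_le_mul_right (hFle s hs) _
      _ = _ := lintegral_mul_const'' _ (hem2 r).aemeasurable
  have hIEfin_ae : ∀ᵐ r ∂ν, IE r < ⊤ := by
    filter_upwards [hrow] with r h
    exact lt_of_le_of_lt (hIE_le r) (ENNReal.mul_lt_top h ENNReal.ofReal_lt_top)
  set G : ℝ≥0∞ := ∫⁻ r, (IE r)^2 ∂ν with hG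
  have hG_fin : G < ⊤ := by
    have hle : G ≤ (∫⁻ r, (∫⁻ s, e r s ∂ν)^2 ∂ν) * (ENNReal.ofReal (rexp C))^2 := by
      rw [hG]
      calc ∫⁻ r, (IE r)^2 ∂ν
          ≤ ∫⁻ r, ((∫⁻ s, e r s ∂ν) * ENNReal.ofReal (rexp C))^2 ∂ν :=
            lintegral_mono fun r => pow_le_pow_left' (hIE_le r) 2
        _ = ∫⁻ r, (∫⁻ s, e r s ∂ν)^2 * (ENNReal.ofReal (rexp C))^2 ∂ν := by
            simp_rw [mul_pow]
        _ = _ := lintegral_mul_const'' _ ((hIm.pow_const 2).aemeasurable)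
    exact lt_of_le_of_lt hle (ENNReal.mul_lt_top hC0fin
      (ENNReal.pow_lt_top ENNReal.ofReal_lt_top))
  -- Tonelli swap
  have hswap : Pq = ∫⁻ r, IE r ∂ν := by
    have hwe : ∀ᵐ s ∂ν, w s * F s = ∫⁻ r, e r s * F s ∂ν := by
      filter_upwards [ae_restrict_mem measurableSet_Ioc] with s hs
      have h1 : ∫⁻ r, e r s ∂ν = w s := by
        refine lintegral_congr_ae ?_
        have hne : ∀ᵐ r ∂ν, r ≠ s := by
          refine ae_restrict_of_ae ?_
          rw [ae_iff]
          have hss : {r : ℝ | ¬ r ≠ s} = {s} := by ext x; simp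
          rw [hss]
          exact measure_singleton s
        filter_upwards [hne, ae_restrict_mem measurableSet_Ioc] with r hrs hr
        by_cases hlt : r < s
        · simp [he, hlt]
        · have hgt : s < r := lt_of_le_of_ne (not_lt.1 hlt) (Ne.symm hrs)
          have hz : K s r = 0 := hKzero s ⟨hs.1.le, hs.2⟩ r ⟨hr.1.le, hr.2⟩ hgt
          simp [he, hlt, hk, hz]
      rw [← h1, ← lintegral_mul_const'' _ (hem1 s).aemeasurable]
    have hPq1 : Pq = ∫⁻ s, ∫⁻ r, e r s * F s ∂ν ∂ν := lintegral_congr_ae hwe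
    rw [hPq1]
    exact lintegral_lintegral_swap
      (((he_unc.comp measurable_swap).mul (hFm.comp measurable_fst)).aemeasurable)
  -- second Cauchy-Schwarz
  have hPq_sq : Pq^2 ≤ G * ENNReal.ofReal T := by
    rw [hswap, hG]
    have h := lintegral_CS_sq ν (f := IE) (g := fun _ => 1)
      hIEm.aemeasurable aemeasurable_const
    simpa [hνuniv] using h
  -- conversion of the real double integral
  have haer : ∀ᵐ r ∂ν, (∫ s in r..T, σ * K s r * rexp (φ s))^2
      = ((ENNReal.ofReal σ * IE r)^2).toReal := by
    filter_upwards [hIEfin_ae, ae_restrict_mem measurableSet_Ioc] with r hIEfin hr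
    have hset : Ioi r ∩ Ioc (0:ℝ) T = Ioc r T := by
      ext x
      simp only [mem_inter_iff, mem_Ioi, mem_Ioc]
      exact ⟨fun h => ⟨h.1, h.2.2⟩, fun h => ⟨h.1, hr.1.trans h.1, h.2⟩⟩
    have hnn : 0 ≤ᵐ[volume.restrict (Ioc r T)] fun s => σ * K s r * rexp (φ s) := by
      refine (ae_restrict_iff' measurableSet_Ioc).2 (ae_of_all _ fun s hs => ?_)
      have hsIcc : s ∈ Icc (0:ℝ) T := ⟨(hr.1.trans hs.1).le, hs.2⟩
      have hrIcc : r ∈ Icc (0:ℝ) T := ⟨hr.1.le, hr.2⟩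
      exact mul_nonneg (mul_nonneg hσ.le (hKnonneg s hsIcc r hrIcc)) (Real.exp_nonneg _)
    have hli : ∫⁻ s in Ioc r T, ENNReal.ofReal (σ * K s r * rexp (φ s)) ∂volume
        = ENNReal.ofReal σ * IE r := by
      rw [← hset, ← Measure.restrict_restrict measurableSet_Ioi, ← hν,
        ← lintegral_indicator measurableSet_Ioi]
      have hcg : ∀ᵐ s ∂ν, (Ioi r).indicator (fun s => ENNReal.ofReal (σ * K s r * rexp (φ s))) s
          = ENNReal.ofReal σ * (e r s * F s) := by
        filter_upwards [ae_restrict_mem measurableSet_Ioc] with s hs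
        rw [Set.indicator_apply]
        by_cases hrs : r < s
        · rw [if_pos (mem_Ioi.2 hrs)]
          have hsIcc : s ∈ Icc (0:ℝ) T := ⟨hs.1.le, hs.2⟩
          have hrIcc : r ∈ Icc (0:ℝ) T := ⟨hr.1.le, hr.2⟩
          rw [ENNReal.ofReal_mul (mul_nonneg hσ.le (hKnonneg s hsIcc r hrIcc)),
            ENNReal.ofReal_mul hσ.le]
          simp only [he, if_pos hrs, hk, hF]
          ring
        · rw [if_neg (fun hmem => hrs (mem_Ioi.1 hmem))]
          simp [he, hrs]
      rw [lintegral_congr_ae hcg, lintegral_const_mul _ (f := fun s => e r s * F s) ((hem2 r).mul hFm)]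
    rw [intervalIntegral.integral_of_le hr.2,
      integral_eq_lintegral_of_nonneg_ae hnn ?_, hli, ← ENNReal.toReal_pow]
    exact (((measurable_const.mul
      (hKmeas.comp (measurable_id.prodMk measurable_const))).mul
      (Real.continuous_exp.comp hφ).measurable)).aestronglyMeasurable
  have hGreq : (∫ r in (0:ℝ)..T, (∫ s in r..T, σ * K s r * rexp (φ s)) ^ 2)
      = ((ENNReal.ofReal σ)^2 * G).toReal := by
    rw [intervalIntegral.integral_of_le hT0, ← hν, integral_congr_ae haer,
      integral_toReal (f := fun r => (ENNReal.ofReal σ * IE r)^2) (((measurable_const.mul hIEm).pow_const 2).aemeasurable) ?_]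
    · congr 1
      rw [hG]
      simp_rw [mul_pow]
      exact lintegral_const_mul _ (hIEm.pow_const 2)
    · filter_upwards [hIEfin_ae] with r h
      exact ENNReal.pow_lt_top (ENNReal.mul_lt_top ENNReal.ofReal_lt_top h)
  -- ENNReal chain and real conversion
  have hchain : c1 K T ^ 4 ≤ G * ENNReal.ofReal T * (Wm T H)^2 * L^2 := by
    calc c1 K T ^4 = (c1 K T ^2)^2 := by ring
      _ ≤ (Pq * Q)^2 := pow_le_pow_left' hCS1 2
      _ = Pq^2 * Q^2 := mul_pow _ _ 2
      _ ≤ (G * ENNReal.ofReal T) * (Wm T H * L)^2 :=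
          mul_le_mul' hPq_sq (pow_le_pow_left' hQ_le 2)
      _ = G * ENNReal.ofReal T * (Wm T H)^2 * L^2 := by ring
  have hcr_pos : 0 < (c1 K T).toReal := ENNReal.toReal_pos hc1_pos.ne' hc1_fin
  have hWr_pos : 0 < (Wm T H).toReal := ENNReal.toReal_pos hWm_pos.ne' hWm_fin
  have hrhs_fin : G * ENNReal.ofReal T * (Wm T H)^2 * L^2 ≠ ⊤ := by
    refine ENNReal.mul_ne_top (ENNReal.mul_ne_top (ENNReal.mul_ne_top hG_fin.ne
      ENNReal.ofReal_ne_top) ?_) ?_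
    · exact (ENNReal.pow_lt_top hWm_fin.lt_top).ne
    · exact (ENNReal.pow_lt_top hL_fin.lt_top).ne
  have hreal : (c1 K T).toReal^4 ≤ G.toReal * T * (Wm T H).toReal^2 * L.toReal^2 := by
    have h := ENNReal.toReal_mono hrhs_fin hchain
    rw [ENNReal.toReal_pow, ENNReal.toReal_mul, ENNReal.toReal_mul, ENNReal.toReal_mul,
      ENNReal.toReal_pow, ENNReal.toReal_pow, ENNReal.toReal_ofReal hT0] at h
    exact h
  have hLr_pos : 0 < L.toReal := by
    rcases lt_or_ge 0 L.toReal with h | h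
    · exact h
    · exfalso
      have hL0 : L.toReal = 0 := le_antisymm h ENNReal.toReal_nonneg
      rw [hL0] at hreal
      nlinarith [pow_pos hcr_pos 4]
  have hD_pos : 0 < DD K T H σ := by
    unfold DD
    exact div_pos (mul_pos (pow_pos hσ 2) (pow_pos hcr_pos 4))
      (mul_pos hT (pow_pos hWr_pos 2))
  have hIeq : (∫ r in (0:ℝ)..T, (∫ s in r..T, σ * K s r * rexp (φ s)) ^ 2)
      = σ^2 * G.toReal := by
    rw [hGreq, ENNReal.toReal_mul, ENNReal.toReal_pow, ENNReal.toReal_ofReal hσ.le]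
  have hDle : DD K T H σ ≤ (σ^2 * G.toReal) * L.toReal^2 := by
    unfold DD
    rw [div_le_iff₀ (mul_pos hT (pow_pos hWr_pos 2))]
    nlinarith [mul_le_mul_of_nonneg_left hreal (le_of_lt (pow_pos hσ 2))]
  have hIpos : 0 < σ^2 * G.toReal := by
    nlinarith [hD_pos, sq_nonneg L.toReal, pow_pos hLr_pos 2]
  rw [hIeq]
  have h1 : DD K T H σ / L.toReal^2 ≤ σ^2 * G.toReal :=
    (div_le_iff₀ (pow_pos hLr_pos 2)).2 hDle
  have h2 : (DD K T H σ / L.toReal^2) ^ p ≤ (σ^2 * G.toReal) ^ p :=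
    Real.rpow_le_rpow (div_nonneg hD_pos.le (sq_nonneg _)) h1 (by linarith)
  have h3 : (σ^2 * G.toReal) ^ (-p) ≤ (DD K T H σ / L.toReal^2) ^ (-p) := by
    rw [Real.rpow_neg hIpos.le, Real.rpow_neg (div_nonneg hD_pos.le (sq_nonneg _))]
    exact inv_anti₀ (Real.rpow_pos_of_pos
      (div_pos hD_pos (pow_pos hLr_pos 2)) p) h2
  have h4 : (DD K T H σ / L.toReal^2) ^ (-p) = (DD K T H σ)^(-p) * L.toReal^(2*p) := by
    rw [Real.div_rpow hD_pos.le (pow_nonneg hLr_pos.le 2),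
      ← Real.rpow_natCast L.toReal 2, ← Real.rpow_mul hLr_pos.le,
      show ((2:ℕ):ℝ) * -p = -(2*p) by push_cast; ring,
      Real.rpow_neg hLr_pos.le, div_inv_eq_mul]
  calc ENNReal.ofReal ((σ^2 * G.toReal) ^ (-p))
      ≤ ENNReal.ofReal ((DD K T H σ)^(-p) * L.toReal^(2*p)) :=
        ENNReal.ofReal_le_ofReal (h3.trans_eq h4)
    _ = ENNReal.ofReal ((DD K T H σ)^(-p)) * ENNReal.ofReal (L.toReal^(2*p)) :=
        ENNReal.ofReal_mul (Real.rpow_nonneg hD_pos.le _)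
    _ = ENNReal.ofReal ((DD K T H σ)^(-p)) * L^(2*p) := by
        rw [← ENNReal.ofReal_rpow_of_pos hLr_pos, ENNReal.ofReal_toReal hL_fin]


end Core

end MallAux

end MallAuxSection

theorem malliavin_norm_inv_moments {Ω : Type*} [MeasurableSpace Ω] (P : Measure Ω)
    [IsProbabilityMeasure P] (H T a σ : ℝ) (hH : H ∈ Set.Ioo (0:ℝ) 1) (hT : 0 < T)
    (hσ : 0 < σ)
    (K : ℝ → ℝ → ℝ)
    (hKmeas : Measurable (Function.uncurry K))
    (hKnonneg : ∀ s ∈ Icc (0:ℝ) T, ∀ r ∈ Icc (0:ℝ) T, 0 ≤ K s r)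
    (hKzero : ∀ s ∈ Icc (0:ℝ) T, ∀ r ∈ Icc (0:ℝ) T, s < r → K s r = 0)
    (hKcov : ∀ s ∈ Icc (0:ℝ) T, ∀ t ∈ Icc (0:ℝ) T,
      ∫ r in (0:ℝ)..(min s t), K s r * K t r
        = (s ^ (2*H) + t ^ (2*H) - |t - s| ^ (2*H)) / 2)
    (B : ℝ → Ω → ℝ) (hB : IsFractionalBM P H T B) :
    ∀ p : ℝ, 1 ≤ p →
      (∫⁻ ω, ENNReal.ofReal
          ((∫ r in (0:ℝ)..T,
              (∫ s in r..T, σ * K s r * Real.exp (a * s + σ * B s ω)) ^ 2) ^ (-p)) ∂P)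
        < ⊤ := by
  intro p hp
  obtain ⟨hH0, hH1⟩ := hH
  have hH2 : 0 < 2*H := by linarith
  have hT0 : (0:ℝ) ≤ T := hT.le
  obtain ⟨hBcont, hBmeas, hBgauss, hBcov⟩ := hB
  -- clamped process, jointly measurable and continuous in time
  set clamp0 : ℝ → ℝ := fun s => max 0 (min s T) with hclamp
  have hclamp_mem : ∀ s, clamp0 s ∈ Icc (0:ℝ) T :=
    fun s => ⟨le_max_left _ _, max_le hT0 (min_le_right _ _)⟩
  have hclamp_eq : ∀ s ∈ Icc (0:ℝ) T, clamp0 s = s := by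
    intro s hs
    rw [hclamp]
    simp only [min_eq_left hs.2, max_eq_right hs.1]
  set Bc : ℝ → Ω → ℝ := fun s ω => B (clamp0 s) ω with hBc
  have hclamp_cont : Continuous clamp0 := continuous_const.max (continuous_id.min continuous_const)
  have hBc_cont : ∀ ω, Continuous fun s => Bc s ω :=
    fun ω => (hBcont ω).comp_continuous hclamp_cont hclamp_mem
  have hBc_meas : ∀ s, Measurable (Bc s) := fun s => hBmeas (clamp0 s) (hclamp_mem s)
  have hBc_unc : Measurable (Function.uncurry Bc) :=
    measurable_uncurry_of_continuous_of_measurable hBc_cont hBc_meas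
  -- diagonal covariance identity
  have hdiag : ∀ s ∈ Ioc (0:ℝ) T, ∫ r in (0:ℝ)..s, K s r * K s r = s ^ (2*H) := by
    intro s hs
    have h := hKcov s ⟨hs.1.le, hs.2⟩ s ⟨hs.1.le, hs.2⟩
    rw [min_self, sub_self, abs_zero, Real.zero_rpow hH2.ne'] at h
    rw [h]
    ring
  -- pathwise bound from the analytic core lemma
  have key : ∀ ω, ENNReal.ofReal
      ((∫ r in (0:ℝ)..T, (∫ s in r..T, σ * K s r * Real.exp (a*s + σ * B s ω))^2) ^ (-p))
      ≤ ENNReal.ofReal ((MallAux.DD K T H σ)^(-p))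
        * (∫⁻ s in Ioc (0:ℝ) T, ENNReal.ofReal (Real.exp (-(a*s + σ * Bc s ω))))^(2*p) := by
    intro ω
    have hφ : Continuous fun s => a*s + σ * Bc s ω :=
      (continuous_const.mul continuous_id).add (continuous_const.mul (hBc_cont ω))
    have hcore := MallAux.core hH2 hT hσ hKmeas hKnonneg hKzero hdiag hp _ hφ
    have hmatch : (∫ r in (0:ℝ)..T, (∫ s in r..T, σ * K s r * Real.exp (a*s + σ * B s ω))^2)
        = (∫ r in (0:ℝ)..T, (∫ s in r..T, σ * K s r * Real.exp (a*s + σ * Bc s ω))^2) := by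
      rw [intervalIntegral.integral_of_le hT0, intervalIntegral.integral_of_le hT0]
      refine setIntegral_congr_fun measurableSet_Ioc (fun r hr => ?_)
      congr 1
      rw [intervalIntegral.integral_of_le hr.2, intervalIntegral.integral_of_le hr.2]
      refine setIntegral_congr_fun measurableSet_Ioc (fun s hs => ?_)
      have hBceq : Bc s ω = B s ω := by
        rw [hBc]
        simp only
        rw [hclamp_eq s ⟨(hr.1.trans hs.1).le, hs.2⟩]
      rw [hBceq]
    rw [hmatch]
    exact hcore
  refine lt_of_le_of_lt (lintegral_mono key) ?_
  -- measurability of the path functional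
  have hFi2_unc : Measurable (fun q : Ω × ℝ =>
      ENNReal.ofReal (Real.exp (-(a*q.2 + σ * Bc q.2 q.1)))) := by
    apply Measurable.ennreal_ofReal
    apply Measurable.exp
    apply Measurable.neg
    exact (measurable_const.mul measurable_snd).add
      (measurable_const.mul (hBc_unc.comp measurable_swap))
  set L : Ω → ENNReal :=
    fun ω => ∫⁻ s in Ioc (0:ℝ) T, ENNReal.ofReal (Real.exp (-(a*s + σ * Bc s ω))) with hLd
  have hLm : Measurable L := Measurable.lintegral_prod_right' hFi2_unc
  rw [lintegral_const_mul _ (hLm.pow_const (2*p))]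
  have h2p : 1 < 2*p := by linarith
  have h2p0 : (0:ℝ) < 2*p := by linarith
  -- Hölder in time
  have hrestr_univ : (volume.restrict (Ioc (0:ℝ) T)) univ = ENNReal.ofReal T := by
    rw [Measure.restrict_apply_univ, Real.volume_Ioc, sub_zero]
  have hstep1 : ∀ ω : Ω, (L ω)^(2*p) ≤ (ENNReal.ofReal T)^(2*p-1)
      * ∫⁻ s in Ioc (0:ℝ) T, ENNReal.ofReal (Real.exp ((-(2*p)) * (a*s + σ * Bc s ω))) := by
    intro ω
    have hm : AEMeasurable (fun s => ENNReal.ofReal (Real.exp (-(a*s + σ * Bc s ω))))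
        (volume.restrict (Ioc (0:ℝ) T)) := by
      apply Measurable.aemeasurable
      apply Measurable.ennreal_ofReal
      exact ((Real.continuous_exp.comp
        ((continuous_const.mul continuous_id).add
          (continuous_const.mul (hBc_cont ω))).neg)).measurable
    have h := MallAux.lintegral_rpow_le (volume.restrict (Ioc (0:ℝ) T)) hm h2p
    rw [hrestr_univ] at h
    refine h.trans (le_of_eq ?_)
    congr 1
    refine lintegral_congr fun s => ?_
    rw [ENNReal.ofReal_rpow_of_pos (Real.exp_pos _), ← Real.exp_mul]
    congr 1
    ring
  have hinner_meas : Measurable (fun q : Ω × ℝ =>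
      ENNReal.ofReal (Real.exp ((-(2*p)) * (a*q.2 + σ * Bc q.2 q.1)))) := by
    apply Measurable.ennreal_ofReal
    apply Measurable.exp
    exact measurable_const.mul ((measurable_const.mul measurable_snd).add
      (measurable_const.mul (hBc_unc.comp measurable_swap)))
  have hstep2 : ∫⁻ ω, (L ω)^(2*p) ∂P ≤ (ENNReal.ofReal T)^(2*p-1)
      * ∫⁻ ω, (∫⁻ s in Ioc (0:ℝ) T,
          ENNReal.ofReal (Real.exp ((-(2*p)) * (a*s + σ * Bc s ω)))) ∂P := by
    calc ∫⁻ ω, (L ω)^(2*p) ∂P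
        ≤ ∫⁻ ω, (ENNReal.ofReal T)^(2*p-1)
            * (∫⁻ s in Ioc (0:ℝ) T,
              ENNReal.ofReal (Real.exp ((-(2*p)) * (a*s + σ * Bc s ω)))) ∂P :=
          lintegral_mono hstep1
      _ = _ := lintegral_const_mul _ (Measurable.lintegral_prod_right' hinner_meas)
  -- Tonelli swap
  have hswap : ∫⁻ ω, (∫⁻ s in Ioc (0:ℝ) T,
        ENNReal.ofReal (Real.exp ((-(2*p)) * (a*s + σ * Bc s ω)))) ∂P
      = ∫⁻ s in Ioc (0:ℝ) T,
          (∫⁻ ω, ENNReal.ofReal (Real.exp ((-(2*p)) * (a*s + σ * Bc s ω))) ∂P) := by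
    exact lintegral_lintegral_swap hinner_meas.aemeasurable
  -- per-time Gaussian bound
  set qr : ℝ := (gaussianReal 0 1 (Ioi 1)).toReal with hqrd
  have hqr : 0 < qr := ENNReal.toReal_pos MallAux.gaussian_Ioi_pos.ne' (measure_ne_top _ _)
  set Vb : ℝ := T^(2*H) / qr with hVbd
  set Cb : ENNReal := ENNReal.ofReal (Real.exp (2 * p * |a| * T + (2*p*σ)^2 * Vb / 2)) with hCbd
  have hper : ∀ s ∈ Ioc (0:ℝ) T,
      ∫⁻ ω, ENNReal.ofReal (Real.exp ((-(2*p)) * (a*s + σ * Bc s ω))) ∂P ≤ Cb := by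
    intro s hs
    have hsIcc : s ∈ Icc (0:ℝ) T := ⟨hs.1.le, hs.2⟩
    have hBceq : ∀ ω, Bc s ω = B s ω := by
      intro ω
      rw [hBc]
      simp only
      rw [hclamp_eq s hsIcc]
    obtain ⟨v, hv⟩ := hBgauss 1 (fun _ => 1) (fun _ => s) (fun _ => hsIcc)
    have hmap : P.map (B s) = gaussianReal 0 v := by
      rw [← hv]
      congr 1
      funext ω
      simp
    have hVeq : ∫ ω, B s ω * B s ω ∂P = s ^ (2*H) := by
      have h := hBcov s hsIcc s hsIcc
      rw [sub_self, abs_zero, Real.zero_rpow hH2.ne'] at h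
      rw [h]
      ring
    have hvle : (v:ℝ) ≤ Vb := by
      have h1 := MallAux.variance_le P (hBmeas s hsIcc) hmap
        (Real.rpow_pos_of_pos hs.1 (2*H)) hVeq
      refine h1.trans ?_
      rw [hVbd, hqrd]
      exact (div_le_div_iff_of_pos_right hqr).2 (Real.rpow_le_rpow hs.1.le hs.2 hH2.le)
    have hsplit : ∀ ω, ENNReal.ofReal (Real.exp ((-(2*p)) * (a*s + σ * Bc s ω)))
        = ENNReal.ofReal (Real.exp ((-(2*p)) * (a*s)))
          * ENNReal.ofReal (Real.exp ((-(2*p)*σ) * B s ω)) := by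
      intro ω
      rw [hBceq ω, ← ENNReal.ofReal_mul (Real.exp_nonneg _), ← Real.exp_add]
      congr 2
      ring
    have hmB : Measurable (fun ω => ENNReal.ofReal (Real.exp ((-(2*p)*σ) * B s ω))) :=
      (((hBmeas s hsIcc).const_mul _).exp).ennreal_ofReal
    calc ∫⁻ ω, ENNReal.ofReal (Real.exp ((-(2*p)) * (a*s + σ * Bc s ω))) ∂P
        = ENNReal.ofReal (Real.exp ((-(2*p)) * (a*s)))
            * ∫⁻ ω, ENNReal.ofReal (Real.exp ((-(2*p)*σ) * B s ω)) ∂P := by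
          simp_rw [hsplit]
          exact lintegral_const_mul _ hmB
      _ = ENNReal.ofReal (Real.exp ((-(2*p)) * (a*s)))
            * ENNReal.ofReal (Real.exp ((-(2*p)*σ)^2 * v / 2)) := by
          congr 1
          have hlm : ∫⁻ ω, ENNReal.ofReal (Real.exp ((-(2*p)*σ) * B s ω)) ∂P
              = ∫⁻ x, ENNReal.ofReal (Real.exp ((-(2*p)*σ) * x)) ∂(P.map (B s)) := by
            rw [lintegral_map (by fun_prop) (hBmeas s hsIcc)]
          rw [hlm, hmap, MallAux.lintegral_exp_gaussianReal]
      _ ≤ Cb := by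
          rw [← ENNReal.ofReal_mul (Real.exp_nonneg _), ← Real.exp_add, hCbd]
          apply ENNReal.ofReal_le_ofReal
          apply Real.exp_le_exp.2
          have habs : |a*s| ≤ |a| * T := by
            rw [abs_mul]
            refine mul_le_mul_of_nonneg_left ?_ (abs_nonneg a)
            rw [abs_of_pos hs.1]
            exact hs.2
          have e1 : (-(2*p)) * (a*s) ≤ 2 * p * |a| * T := by
            have h2 : -(a*s) ≤ |a| * T := (neg_le_abs _).trans habs
            nlinarith
          have e2 : (-(2*p)*σ)^2 * v / 2 ≤ (2*p*σ)^2 * Vb / 2 := by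
            have hsq : (-(2*p)*σ)^2 = (2*p*σ)^2 := by ring
            rw [hsq]
            have : (0:ℝ) ≤ (2*p*σ)^2 := sq_nonneg _
            nlinarith
          linarith
  -- assemble
  have hfinal : ∫⁻ s in Ioc (0:ℝ) T,
      (∫⁻ ω, ENNReal.ofReal (Real.exp ((-(2*p)) * (a*s + σ * Bc s ω))) ∂P)
      ≤ Cb * ENNReal.ofReal T := by
    calc ∫⁻ s in Ioc (0:ℝ) T,
        (∫⁻ ω, ENNReal.ofReal (Real.exp ((-(2*p)) * (a*s + σ * Bc s ω))) ∂P)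
        ≤ ∫⁻ _ in Ioc (0:ℝ) T, Cb := by
          refine lintegral_mono_ae ?_
          filter_upwards [ae_restrict_mem measurableSet_Ioc] with s hs
          exact hper s hs
      _ = Cb * ENNReal.ofReal T := by rw [lintegral_const, hrestr_univ]
  refine ENNReal.mul_lt_top ENNReal.ofReal_lt_top ?_
  refine lt_of_le_of_lt hstep2 ?_
  refine ENNReal.mul_lt_top (ENNReal.rpow_lt_top_of_nonneg (by linarith) ENNReal.ofReal_ne_top) ?_
  rw [hswap]
  exact lt_of_le_of_lt hfinal (ENNReal.mul_lt_top ENNReal.ofReal_lt_top ENNReal.ofReal_lt_top)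
end

section
/- Let H ∈ (0,1), T > 0, a, σ ∈ ℝ, and let K : [0,T] × [0,T] → ℝ be a measurable function with K(s,r) = 0 whenever r > s and ∫₀ˢ K(s,r)² dr = s^{2H} for all s ∈ [0,T]. Then for every continuous function b : [0,T] → ℝ, ∫₀ᵀ ∫₀ᵀ (∫_{max(r,θ)}ᵀ σ² K(s,r) K(s,θ) e^{a s + σ b(s)} ds)² dθ dr ≤ T σ⁴ ∫₀ᵀ s^{4H} e^{2 a s + 2 σ b(s)} ds. -/
open Set MeasureTheory Real ENNReal

lemma cs_integral_s10 {α : Type*} [MeasurableSpace α] (μ : Measure α)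
    (u v : α → ℝ)
    (hu : AEStronglyMeasurable u μ) (hv : AEStronglyMeasurable v μ)
    (hu2 : Integrable (fun x => u x ^ 2) μ) (hv2 : Integrable (fun x => v x ^ 2) μ) :
    (∫ x, u x * v x ∂μ) ^ 2 ≤ (∫ x, u x ^ 2 ∂μ) * ∫ x, v x ^ 2 ∂μ := by
  have hP : 0 ≤ ∫ x, u x ^ 2 ∂μ := integral_nonneg fun x => sq_nonneg _
  have hQ : 0 ≤ ∫ x, v x ^ 2 ∂μ := integral_nonneg fun x => sq_nonneg _
  have hu' : MemLp u 2 μ := (memLp_two_iff_integrable_sq hu).2 hu2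
  have hv' : MemLp v 2 μ := (memLp_two_iff_integrable_sq hv).2 hv2
  have hpq : Real.HolderConjugate 2 2 := (Real.holderConjugate_iff_eq_conjExponent one_lt_two).2 (by norm_num)
  have h2 : (2 : ℝ≥0∞) = ENNReal.ofReal (2:ℝ) := by norm_num
  rw [h2] at hu' hv'
  have h := integral_mul_norm_le_Lp_mul_Lq hpq hu' hv'
  simp only [Real.rpow_two, Real.norm_eq_abs, sq_abs] at h
  have h' : |∫ x, u x * v x ∂μ| ≤ ∫ x, |u x| * |v x| ∂μ := by
    calc |∫ x, u x * v x ∂μ| = ‖∫ x, u x * v x ∂μ‖ := (Real.norm_eq_abs _).symm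
    _ ≤ ∫ x, ‖u x * v x‖ ∂μ := norm_integral_le_integral_norm _
    _ = ∫ x, |u x| * |v x| ∂μ := by
        simp only [Real.norm_eq_abs, abs_mul]
  have hnn : 0 ≤ ∫ x, |u x| * |v x| ∂μ :=
    integral_nonneg fun x => mul_nonneg (abs_nonneg _) (abs_nonneg _)
  calc (∫ x, u x * v x ∂μ) ^ 2 = |∫ x, u x * v x ∂μ| ^ 2 := (sq_abs _).symm
    _ ≤ (∫ x, |u x| * |v x| ∂μ) ^ 2 := pow_le_pow_left₀ (abs_nonneg _) h' 2
    _ ≤ ((∫ x, u x ^ 2 ∂μ) ^ (1/2:ℝ) * (∫ x, v x ^ 2 ∂μ) ^ (1/2:ℝ)) ^ 2 :=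
        pow_le_pow_left₀ hnn h 2
    _ = (∫ x, u x ^ 2 ∂μ) * ∫ x, v x ^ 2 ∂μ := by
        rw [← Real.sqrt_eq_rpow, ← Real.sqrt_eq_rpow, mul_pow,
          Real.sq_sqrt hP, Real.sq_sqrt hQ]

theorem second_derivative_bound (H T a σ : ℝ) (hH : H ∈ Set.Ioo (0:ℝ) 1) (hT : 0 < T)
    (K : ℝ → ℝ → ℝ)
    (hKmeas : Measurable (Function.uncurry K))
    (hKzero : ∀ s ∈ Icc (0:ℝ) T, ∀ r ∈ Icc (0:ℝ) T, s < r → K s r = 0)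
    (hKvar : ∀ s ∈ Icc (0:ℝ) T, ∫ r in (0:ℝ)..s, (K s r) ^ 2 = s ^ (2*H))
    (b : ℝ → ℝ) (hb : ContinuousOn b (Icc 0 T)) :
    ∫ r in (0:ℝ)..T, ∫ θ in (0:ℝ)..T,
        (∫ s in (max r θ)..T, σ^2 * K s r * K s θ * Real.exp (a * s + σ * b s)) ^ 2
      ≤ T * σ^4 * ∫ s in (0:ℝ)..T, s ^ (4*H) * Real.exp (2*a*s + 2*σ * b s) := by
  obtain ⟨hH0, _⟩ := hH
  -- rewrite the interval integrals over [0,T] as set integrals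
  simp only [intervalIntegral.integral_of_le hT.le]
  set μ : Measure ℝ := volume.restrict (Ioc 0 T) with hμ
  haveI : IsFiniteMeasure μ := by
    constructor
    rw [hμ, Measure.restrict_apply_univ]
    exact measure_Ioc_lt_top
  set E : ℝ → ℝ := fun s => Real.exp (a * s + σ * b s) with hE
  have hEpos : ∀ s, 0 < E s := fun s => Real.exp_pos _
  set f : ℝ → ℝ → ℝ := fun s r => K s r ^ 2 * E s with hf
  have hfnn : ∀ s r, 0 ≤ f s r := fun s r => mul_nonneg (sq_nonneg _) (hEpos s).le
  -- continuity and bound of E on [0,T]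
  have hEcont : ContinuousOn E (Icc 0 T) :=
    Real.continuous_exp.comp_continuousOn
      (((continuous_const.mul continuous_id).continuousOn).add (continuousOn_const.mul hb))
  obtain ⟨x₀, hx₀, hx₀max⟩ :=
    isCompact_Icc.exists_isMaxOn (nonempty_Icc.2 hT.le) hEcont
  set M : ℝ := E x₀ with hM
  have hMpos : 0 < M := hEpos x₀
  have hEbd : ∀ s ∈ Icc (0:ℝ) T, E s ≤ M := fun s hs => hx₀max hs
  -- measurability of E on restricted measures
  have hEmeas' : ∀ t : Set ℝ, t ⊆ Icc 0 T → AEMeasurable E (volume.restrict t) := by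
    intro t ht
    have hbm : AEMeasurable b (volume.restrict (Icc 0 T)) :=
      hb.aemeasurable measurableSet_Icc
    have hbm' : AEMeasurable b (volume.restrict t) :=
      hbm.mono_measure (Measure.restrict_mono ht le_rfl)
    exact Real.continuous_exp.measurable.comp_aemeasurable
      ((aemeasurable_id.const_mul a).add (hbm'.const_mul σ))
  have hEmeas : AEMeasurable E μ := hEmeas' _ Ioc_subset_Icc_self
  -- slice integrability in r and the value of the r-integral
  have h1 : ∀ s ∈ Ioc (0:ℝ) T,
      IntegrableOn (fun r => K s r ^ 2) (Ioc 0 T) volume ∧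
      ∫ r in Ioc (0:ℝ) T, K s r ^ 2 = s ^ (2*H) := by
    intro s hs
    obtain ⟨hs0, hsT⟩ := hs
    have hsI : s ∈ Icc (0:ℝ) T := ⟨hs0.le, hsT⟩
    have hval := hKvar s hsI
    have hpos : (0:ℝ) < s ^ (2*H) := Real.rpow_pos_of_pos hs0 _
    have hii : IntervalIntegrable (fun r => K s r ^ 2) volume 0 s := by
      by_contra hcon
      rw [intervalIntegral.integral_undef hcon] at hval
      exact hpos.ne hval
    have hio1 : IntegrableOn (fun r => K s r ^ 2) (Ioc 0 s) volume := hii.1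
    have hzero : ∀ r ∈ Ioc s T, K s r ^ 2 = 0 := by
      intro r hr
      rw [hKzero s hsI r ⟨hs0.le.trans hr.1.le, hr.2⟩ hr.1]
      ring
    have hio2 : IntegrableOn (fun r => K s r ^ 2) (Ioc s T) volume := by
      rw [integrableOn_congr_fun hzero measurableSet_Ioc]
      exact integrableOn_zero
    have hunion := hio1.union hio2
    rw [Ioc_union_Ioc_eq_Ioc hs0.le hsT] at hunion
    refine ⟨hunion, ?_⟩
    rw [← Ioc_union_Ioc_eq_Ioc hs0.le hsT,
      setIntegral_union (Ioc_disjoint_Ioc_of_le le_rfl) measurableSet_Ioc hio1 hio2,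
      setIntegral_eq_zero_of_forall_eq_zero hzero, add_zero,
      ← intervalIntegral.integral_of_le hs0.le]
    exact hval
  have hsliceAll : ∀ s ∈ Ioc (0:ℝ) T, Integrable (fun r => f s r) μ := fun s hs =>
    ((h1 s hs).1.mul_const (E s))
  have hval2 : ∀ s ∈ Ioc (0:ℝ) T, ∫ r, f s r ∂μ = s ^ (2*H) * E s := by
    intro s hs
    rw [hf]
    simp only
    rw [integral_mul_const, (h1 s hs).2]
  -- joint measurability and integrability on the product
  have hFm : AEStronglyMeasurable (fun p : ℝ × ℝ => f p.1 p.2) (μ.prod μ) := by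
    have h1m : Measurable fun p : ℝ × ℝ => K p.1 p.2 ^ 2 := hKmeas.pow_const 2
    have h2m : AEMeasurable (fun p : ℝ × ℝ => E p.1) (μ.prod μ) :=
      hEmeas.comp_quasiMeasurePreserving Measure.quasiMeasurePreserving_fst
    exact (h1m.aemeasurable.mul h2m).aestronglyMeasurable
  have hFint : Integrable (fun p : ℝ × ℝ => f p.1 p.2) (μ.prod μ) := by
    rw [integrable_prod_iff hFm]
    constructor
    · filter_upwards [ae_restrict_mem measurableSet_Ioc] with s hs
      exact hsliceAll s hs
    · have hgi : Integrable (fun s => s ^ (2*H) * E s) μ := by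
        refine Integrable.mono' (integrable_const (T ^ (2*H) * M)) ?_ ?_
        · exact (((Real.continuous_rpow_const (by positivity)).measurable).aemeasurable.mul
            hEmeas).aestronglyMeasurable
        · filter_upwards [ae_restrict_mem measurableSet_Ioc] with s hs
          have hnn : 0 ≤ s ^ (2*H) * E s :=
            mul_nonneg (Real.rpow_nonneg hs.1.le _) (hEpos s).le
          rw [Real.norm_eq_abs, abs_of_nonneg hnn]
          exact mul_le_mul (Real.rpow_le_rpow hs.1.le hs.2 (by positivity))
            (hEbd s ⟨hs.1.le, hs.2⟩) (hEpos s).le (Real.rpow_nonneg hT.le _)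
      refine hgi.congr ?_
      filter_upwards [ae_restrict_mem measurableSet_Ioc] with s hs
      have hnrm : ∫ r, ‖f s r‖ ∂μ = ∫ r, f s r ∂μ :=
        integral_congr_ae (Filter.Eventually.of_forall fun r => Real.norm_of_nonneg (hfnn s r))
      rw [hnrm, hval2 s hs]
  -- A and C
  set A : ℝ → ℝ := fun r => ∫ s, f s r ∂μ with hA
  have hAint : Integrable A μ := hFint.integral_prod_right
  have hAnn : ∀ r, 0 ≤ A r := fun r => integral_nonneg fun s => hfnn s r
  set C : ℝ := ∫ s, s ^ (2*H) * E s ∂μ with hC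
  have hCnn : 0 ≤ C := by
    rw [hC, hμ]
    exact setIntegral_nonneg measurableSet_Ioc fun s hs =>
      mul_nonneg (Real.rpow_nonneg hs.1.le _) (hEpos s).le
  have hswap := integral_integral_swap (f := f) hFint
  have hCA : ∫ r, A r ∂μ = C := by
    rw [hA]
    simp only
    rw [← hswap, hC]
    exact integral_congr_ae ((ae_restrict_mem measurableSet_Ioc).mono fun s hs => hval2 s hs)
  have hslice_r : ∀ᵐ r ∂μ, Integrable (fun s => f s r) μ := hFint.prod_left_ae
  -- key Cauchy-Schwarz bound
  have key : ∀ r ∈ Ioc (0:ℝ) T, Integrable (fun s => f s r) μ →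
      ∀ θ ∈ Ioc (0:ℝ) T, Integrable (fun s => f s θ) μ →
      (∫ s in (max r θ)..T, σ^2 * K s r * K s θ * Real.exp (a * s + σ * b s)) ^ 2
        ≤ σ^4 * (A r * A θ) := by
    intro r hr hir θ hθ hiθ
    set m := max r θ with hm
    have hm0 : (0:ℝ) < m := lt_max_of_lt_left hr.1
    have hmT : m ≤ T := max_le hr.2 hθ.2
    set ν : Measure ℝ := volume.restrict (Ioc m T) with hν
    have hsub : Ioc m T ⊆ Ioc (0:ℝ) T := Ioc_subset_Ioc hm0.le le_rfl
    have hνle : ν ≤ μ := Measure.restrict_mono hsub le_rfl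
    set u : ℝ → ℝ := fun s => K s r * Real.sqrt (E s) with hu
    set v : ℝ → ℝ := fun s => K s θ * Real.sqrt (E s) with hv
    have hEν : AEMeasurable E ν := hEmeas' _ (hsub.trans Ioc_subset_Icc_self)
    have hKrm : Measurable fun s => K s r := hKmeas.comp (measurable_id.prodMk measurable_const)
    have hKθm : Measurable fun s => K s θ := hKmeas.comp (measurable_id.prodMk measurable_const)
    have hum : AEStronglyMeasurable u ν :=
      (hKrm.aemeasurable.mul
        (Real.continuous_sqrt.measurable.comp_aemeasurable hEν)).aestronglyMeasurable
    have hvm : AEStronglyMeasurable v ν :=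
      (hKθm.aemeasurable.mul
        (Real.continuous_sqrt.measurable.comp_aemeasurable hEν)).aestronglyMeasurable
    have husq : ∀ s, u s ^ 2 = f s r := by
      intro s
      rw [hu, hf]
      simp only
      rw [mul_pow, Real.sq_sqrt (hEpos s).le]
    have hvsq : ∀ s, v s ^ 2 = f s θ := by
      intro s
      rw [hv, hf]
      simp only
      rw [mul_pow, Real.sq_sqrt (hEpos s).le]
    have hu2 : Integrable (fun s => u s ^ 2) ν :=
      (hir.mono_measure hνle).congr (Filter.Eventually.of_forall fun s => (husq s).symm)
    have hv2 : Integrable (fun s => v s ^ 2) ν :=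
      (hiθ.mono_measure hνle).congr (Filter.Eventually.of_forall fun s => (hvsq s).symm)
    have hAu : ∫ s, u s ^ 2 ∂ν ≤ A r := by
      refine le_trans (le_of_eq (integral_congr_ae (Filter.Eventually.of_forall husq))) ?_
      exact setIntegral_mono_set hir (Filter.Eventually.of_forall fun s => hfnn s r)
        (HasSubset.Subset.eventuallyLE hsub)
    have hAv : ∫ s, v s ^ 2 ∂ν ≤ A θ := by
      refine le_trans (le_of_eq (integral_congr_ae (Filter.Eventually.of_forall hvsq))) ?_
      exact setIntegral_mono_set hiθ (Filter.Eventually.of_forall fun s => hfnn s θ)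
        (HasSubset.Subset.eventuallyLE hsub)
    have hJ : (∫ s in m..T, σ^2 * K s r * K s θ * Real.exp (a * s + σ * b s))
        = σ^2 * ∫ s, u s * v s ∂ν := by
      rw [intervalIntegral.integral_of_le hmT, ← integral_const_mul]
      refine integral_congr_ae (Filter.Eventually.of_forall fun s => ?_)
      rw [hu, hv]
      simp only
      have hsq : Real.sqrt (E s) * Real.sqrt (E s) = E s := Real.mul_self_sqrt (hEpos s).le
      rw [show Real.exp (a * s + σ * b s) = Real.sqrt (E s) * Real.sqrt (E s) from hsq.symm]
      ring
    rw [hJ, mul_pow]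
    have hσ4 : (σ^2)^2 = σ^4 := by ring
    rw [hσ4]
    refine mul_le_mul_of_nonneg_left ?_ (by positivity)
    exact le_trans (cs_integral_s10 ν u v hum hvm hu2 hv2)
      (mul_le_mul hAu hAv (integral_nonneg fun s => sq_nonneg _) (hAnn r))
  -- iterated integral bound
  have hBC : ∫ r, (∫ θ, (∫ s in (max r θ)..T,
        σ^2 * K s r * K s θ * Real.exp (a * s + σ * b s)) ^ 2 ∂μ) ∂μ ≤ σ^4 * C * C := by
    have houter : ∫ r, (∫ θ, (∫ s in (max r θ)..T,
          σ^2 * K s r * K s θ * Real.exp (a * s + σ * b s)) ^ 2 ∂μ) ∂μ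
        ≤ ∫ r, σ^4 * A r * C ∂μ := by
      refine integral_mono_of_nonneg
        (Filter.Eventually.of_forall fun r => integral_nonneg fun θ => sq_nonneg _)
        ((hAint.const_mul _).mul_const _) ?_
      filter_upwards [ae_restrict_mem measurableSet_Ioc, hslice_r] with r hr hir
      have hinner : ∫ θ, (∫ s in (max r θ)..T,
            σ^2 * K s r * K s θ * Real.exp (a * s + σ * b s)) ^ 2 ∂μ
          ≤ ∫ θ, (σ^4 * A r) * A θ ∂μ := by
        refine integral_mono_of_nonneg
          (Filter.Eventually.of_forall fun θ => sq_nonneg _)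
          (hAint.const_mul _) ?_
        filter_upwards [ae_restrict_mem measurableSet_Ioc, hslice_r] with θ hθ hiθ
        rw [mul_assoc]
        exact key r hr hir θ hθ hiθ
      refine le_trans hinner (le_of_eq ?_)
      rw [integral_const_mul, hCA]
    refine le_trans houter (le_of_eq ?_)
    rw [integral_mul_const, integral_const_mul, hCA]
  -- final Cauchy-Schwarz in s
  have hv2' : Integrable (fun s => (s ^ (2*H) * E s) ^ 2) μ := by
    refine Integrable.mono' (integrable_const ((T ^ (2*H) * M) ^ 2)) ?_ ?_
    · exact ((((Real.continuous_rpow_const (by positivity)).measurable).aemeasurable.mul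
        hEmeas).pow_const 2).aestronglyMeasurable
    · filter_upwards [ae_restrict_mem measurableSet_Ioc] with s hs
      have hnn : 0 ≤ s ^ (2*H) * E s :=
        mul_nonneg (Real.rpow_nonneg hs.1.le _) (hEpos s).le
      rw [Real.norm_eq_abs, abs_of_nonneg (pow_nonneg hnn 2)]
      refine pow_le_pow_left₀ hnn ?_ 2
      exact mul_le_mul (Real.rpow_le_rpow hs.1.le hs.2 (by positivity))
        (hEbd s ⟨hs.1.le, hs.2⟩) (hEpos s).le (Real.rpow_nonneg hT.le _)
  have hvmeas : AEStronglyMeasurable (fun s => s ^ (2*H) * E s) μ :=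
    (((Real.continuous_rpow_const (by positivity)).measurable).aemeasurable.mul
      hEmeas).aestronglyMeasurable
  have hD : C ^ 2 ≤ T * ∫ s in Ioc (0:ℝ) T, s ^ (4*H) * Real.exp (2*a*s + 2*σ * b s) := by
    have hcs := cs_integral_s10 μ (fun _ => (1:ℝ)) (fun s => s ^ (2*H) * E s)
      aestronglyMeasurable_const hvmeas
      (by simpa using (integrable_const (1:ℝ))) hv2'
    simp only [one_mul, one_pow] at hcs
    have hμT : ∫ (_ : ℝ), (1:ℝ) ∂μ = T := by
      rw [hμ]
      simp [Real.volume_Ioc, hT.le, ENNReal.toReal_ofReal hT.le]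
    have hveq : ∫ s, (s ^ (2*H) * E s) ^ 2 ∂μ
        = ∫ s in Ioc (0:ℝ) T, s ^ (4*H) * Real.exp (2*a*s + 2*σ * b s) := by
      rw [hμ]
      refine setIntegral_congr_fun measurableSet_Ioc fun s hs => ?_
      have hs0 : (0:ℝ) < s := hs.1
      have e1 : (s ^ (2*H)) ^ 2 = s ^ (4*H) := by
        rw [sq, ← Real.rpow_add hs0]
        congr 1
        ring
      have e2 : E s ^ 2 = Real.exp (2*a*s + 2*σ * b s) := by
        rw [hE]
        simp only
        rw [sq, ← Real.exp_add]
        congr 1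
        ring
      rw [mul_pow, e1, e2]
    rw [hC]
    calc (∫ s, s ^ (2*H) * E s ∂μ) ^ 2
        ≤ (∫ (_ : ℝ), (1:ℝ) ∂μ) * ∫ s, (s ^ (2*H) * E s) ^ 2 ∂μ := hcs
      _ = T * ∫ s in Ioc (0:ℝ) T, s ^ (4*H) * Real.exp (2*a*s + 2*σ * b s) := by
          rw [hμT, hveq]
  -- conclude
  have hI2nn : 0 ≤ ∫ s in Ioc (0:ℝ) T, s ^ (4*H) * Real.exp (2*a*s + 2*σ * b s) :=
    setIntegral_nonneg measurableSet_Ioc fun s hs =>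
      mul_nonneg (Real.rpow_nonneg hs.1.le _) (Real.exp_pos _).le
  calc ∫ r, (∫ θ, (∫ s in (max r θ)..T,
        σ^2 * K s r * K s θ * Real.exp (a * s + σ * b s)) ^ 2 ∂μ) ∂μ
      ≤ σ^4 * C * C := hBC
    _ = σ^4 * C ^ 2 := by ring
    _ ≤ σ^4 * (T * ∫ s in Ioc (0:ℝ) T, s ^ (4*H) * Real.exp (2*a*s + 2*σ * b s)) :=
        mul_le_mul_of_nonneg_left hD (by positivity)
    _ = T * σ^4 * ∫ s in Ioc (0:ℝ) T, s ^ (4*H) * Real.exp (2*a*s + 2*σ * b s) := by ring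
end
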